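/- arXiv:1408.3919 — 9 statements merged into one kernel-verified Lean document; each statement's English description precedes it below -/
import Mathlib

section
/- Let 𝕋 be ℝ, [0,∞) or (0,∞), and let (X_t)_{t∈𝕋} be a real-valued stochastic process whose finite-dimensional distributions are infinitely divisible, with characteristic exponents ψ_{t_1,…,t_k}. If (X_t)_{t∈𝕋} is (α,δ)-dilatively stable for some α ∈ ℝ and δ ∈ ℝ with δ ≠ 0, then (X_t)_{t∈𝕋} is (1/2 − α/δ, −1/δ)-aggregate similar; that is, for every m ∈ ℕ, k ∈ ℕ and t_1,…,t_k ∈ 𝕋, the m-fold convolution power of the law of the random vector (X_{t_1},…,X_{t_k}) equals the law of (m^{1/2−α/δ} X_{m^{1/δ} t_1},…, m^{1/2−α/δ} X_{m^{1/δ} t_k}). -/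
open MeasureTheory ProbabilityTheory Filter Topology

/-- Convolution of two measures on an additive measurable space. -/
noncomputable def mconv {E : Type*} [MeasurableSpace E] [Add E]
    (μ ν : Measure E) : Measure E :=
  Measure.map (fun p : E × E => p.1 + p.2) (μ.prod ν)

/-- The `n`-fold convolution power of a measure. -/
noncomputable def convPow {E : Type*} [MeasurableSpace E] [Add E] [Zero E]
    (ν : Measure E) : ℕ → Measure E
  | 0 => Measure.dirac 0
  | n + 1 => mconv (convPow ν n) ν

namespace DSAgg
variable {k : ℕ}

/-- characteristic function integrand -/
noncomputable def cf (θ x : Fin k → ℝ) : ℂ := Complex.exp (Complex.I * ∑ j, (θ j : ℂ) * (x j : ℂ))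

lemma cf_norm (θ x : Fin k → ℝ) : ‖cf θ x‖ = 1 := by
  have h : (∑ j, (θ j : ℂ) * (x j : ℂ)) = ((∑ j, θ j * x j : ℝ) : ℂ) := by push_cast; ring
  rw [cf, h, mul_comm, Complex.norm_exp_ofReal_mul_I]

lemma cf_continuous (θ : Fin k → ℝ) : Continuous (cf θ) := by
  unfold cf
  exact Complex.continuous_exp.comp <| continuous_const.mul <|
    continuous_finset_sum _ fun j _ =>
      continuous_const.mul (Complex.continuous_ofReal.comp (continuous_apply j))

lemma cf_integrable (θ : Fin k → ℝ) (μ : Measure (Fin k → ℝ)) [IsFiniteMeasure μ] :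
    Integrable (cf θ) μ := by
  refine Integrable.mono' (integrable_const 1) ((cf_continuous θ).aestronglyMeasurable)
    (Filter.Eventually.of_forall fun x => ?_)
  rw [cf_norm]

noncomputable def charFn (μ : Measure (Fin k → ℝ)) (θ : Fin k → ℝ) : ℂ := ∫ x, cf θ x ∂μ

lemma cf_add (θ x y : Fin k → ℝ) : cf θ (x + y) = cf θ x * cf θ y := by
  unfold cf
  rw [← Complex.exp_add, ← mul_add, ← Finset.sum_add_distrib]
  congr 2
  refine Finset.sum_congr rfl fun j _ => ?_
  have : ((x + y) j : ℝ) = x j + y j := rfl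
  rw [this]
  push_cast
  ring

instance mconv_prob {μ ν : Measure (Fin k → ℝ)} [IsProbabilityMeasure μ]
    [IsProbabilityMeasure ν] : IsProbabilityMeasure (mconv μ ν) :=
  Measure.isProbabilityMeasure_map (measurable_add.aemeasurable)

instance convPow_prob {μ : Measure (Fin k → ℝ)} [IsProbabilityMeasure μ] (n : ℕ) :
    IsProbabilityMeasure (convPow μ n) := by
  induction n with
  | zero => exact Measure.dirac.isProbabilityMeasure
  | succ n ih => exact mconv_prob

lemma charFn_mconv (μ ν : Measure (Fin k → ℝ)) [IsProbabilityMeasure μ]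
    [IsProbabilityMeasure ν] (θ : Fin k → ℝ) :
    charFn (mconv μ ν) θ = charFn μ θ * charFn ν θ := by
  rw [charFn, mconv, integral_map measurable_add.aemeasurable
    (cf_continuous θ).aestronglyMeasurable]
  have : ∀ p : (Fin k → ℝ) × (Fin k → ℝ), cf θ (p.1 + p.2) = cf θ p.1 * cf θ p.2 :=
    fun p => cf_add θ p.1 p.2
  simp_rw [this]
  exact integral_prod_mul (cf θ) (cf θ)

lemma charFn_convPow (μ : Measure (Fin k → ℝ)) [IsProbabilityMeasure μ] (n : ℕ) (θ : Fin k → ℝ) :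
    charFn (convPow μ n) θ = (charFn μ θ) ^ n := by
  induction n with
  | zero =>
      show charFn (Measure.dirac 0) θ = 1
      rw [charFn, integral_dirac]
      unfold cf
      simp
  | succ n ih =>
      show charFn (mconv (convPow μ n) μ) θ = _
      rw [charFn_mconv, ih, pow_succ]

noncomputable def fold (L a : ℝ) : ℝ :=
  (2 * L / Real.pi) * Real.arcsin (Real.sin (Real.pi * a / (2 * L)))

lemma fold_continuous (L : ℝ) : Continuous (fold L) :=
  continuous_const.mul (Real.continuous_arcsin.comp (Real.continuous_sin.comp (by continuity)))

lemma fold_eq {L a : ℝ} (hL : 0 < L) (ha : |a| ≤ L) : fold L a = a := by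
  have hπ := Real.pi_pos
  have h1 : |Real.pi * a / (2 * L)| ≤ Real.pi / 2 := by
    rw [abs_div, abs_mul, abs_of_pos hπ, abs_of_pos (by linarith : (0:ℝ) < 2 * L)]
    rw [div_le_div_iff₀ (by linarith) (by norm_num)]
    nlinarith [abs_nonneg a]
  rw [abs_le] at h1
  rw [fold, Real.arcsin_sin h1.1 h1.2]
  field_simp

lemma fold_periodic (L : ℝ) (hL : 0 < L) : Function.Periodic (fold L) (4 * L) := by
  intro a
  have hL' : L ≠ 0 := ne_of_gt hL
  have : Real.pi * (a + 4 * L) / (2 * L) = Real.pi * a / (2 * L) + 2 * Real.pi := by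
    field_simp; ring
  rw [fold, this, Real.sin_add_two_pi, fold]

lemma fold_abs_le (L a : ℝ) (hL : 0 < L) : |fold L a| ≤ L := by
  have hπ := Real.pi_pos
  rw [fold, abs_mul, abs_of_pos (by positivity : (0:ℝ) < 2 * L / Real.pi)]
  have h : |Real.arcsin (Real.sin (Real.pi * a / (2 * L)))| ≤ Real.pi / 2 :=
    abs_le.2 ⟨by simpa using Real.neg_pi_div_two_le_arcsin _, Real.arcsin_le_pi_div_two _⟩
  calc 2 * L / Real.pi * |Real.arcsin (Real.sin (Real.pi * a / (2 * L)))|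
      ≤ 2 * L / Real.pi * (Real.pi / 2) := by
        apply mul_le_mul_of_nonneg_left h (by positivity)
    _ = L := by field_simp

section Torus
variable {Tp : ℝ} [hT : Fact (0 < Tp)]
set_option linter.unusedSectionVars false

/-- the product characters on the `k`-torus -/
noncomputable def chn (n : Fin k → ℤ) : C((Fin k → AddCircle Tp), ℂ) :=
  ⟨fun z => ∏ i, fourier (n i) (z i),
    continuous_finset_prod _ fun i _ => (map_continuous (fourier (n i))).comp (continuous_apply i)⟩

lemma chn_apply (n : Fin k → ℤ) (z : Fin k → AddCircle Tp) :
    chn n z = ∏ i, fourier (n i) (z i) := rfl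

lemma chn_mul (n m : Fin k → ℤ) : chn (Tp := Tp) n * chn m = chn (n + m) := by
  ext z
  simp only [ContinuousMap.mul_apply, chn_apply, ← Finset.prod_mul_distrib]
  exact Finset.prod_congr rfl fun i _ => (fourier_add (m := n i) (n := m i)).symm

lemma chn_zero : chn (Tp := Tp) (0 : Fin k → ℤ) = 1 := by
  ext z
  simp [chn_apply, fourier_zero]

lemma chn_star (n : Fin k → ℤ) : star (chn (Tp := Tp) n) = chn (-n) := by
  ext z
  simp only [ContinuousMap.star_apply, chn_apply, star_prod]
  exact Finset.prod_congr rfl fun i _ => by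
    rw [Pi.neg_apply, fourier_neg]; rfl

/-- the span of the product characters -/
noncomputable def chSpan : Submodule ℂ C((Fin k → AddCircle Tp), ℂ) :=
  Submodule.span ℂ (Set.range (chn (Tp := Tp) (k := k)))

lemma chSpan_mul_mem {f g : C((Fin k → AddCircle Tp), ℂ)} (hf : f ∈ chSpan (k := k))
    (hg : g ∈ chSpan (k := k)) : f * g ∈ chSpan (k := k) := by
  induction hf, hg using Submodule.span_induction₂ with
  | mem_mem x y hx hy =>
      obtain ⟨n, rfl⟩ := hx
      obtain ⟨m, rfl⟩ := hy
      rw [chn_mul]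
      exact Submodule.subset_span ⟨n + m, rfl⟩
  | zero_left y hy => rw [zero_mul]; exact zero_mem _
  | zero_right x hx => rw [mul_zero]; exact zero_mem _
  | add_left x y z hx hy hz h1 h2 => rw [add_mul]; exact add_mem h1 h2
  | add_right x y z hx hy hz h1 h2 => rw [mul_add]; exact add_mem h1 h2
  | smul_left r x y hx hy h1 => rw [smul_mul_assoc]; exact Submodule.smul_mem _ _ h1
  | smul_right r x y hx hy h1 => rw [mul_smul_comm]; exact Submodule.smul_mem _ _ h1

lemma chSpan_star_mem {f : C((Fin k → AddCircle Tp), ℂ)} (hf : f ∈ chSpan (k := k)) :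
    star f ∈ chSpan (k := k) := by
  induction hf using Submodule.span_induction with
  | mem x hx =>
      obtain ⟨n, rfl⟩ := hx
      rw [chn_star]
      exact Submodule.subset_span ⟨-n, rfl⟩
  | zero => rw [star_zero]; exact zero_mem _
  | add x y hx hy h1 h2 => rw [star_add]; exact add_mem h1 h2
  | smul r x hx h1 =>
      rw [star_smul]
      exact Submodule.smul_mem _ _ h1

/-- the star subalgebra generated by the product characters (as a span) -/
noncomputable def chAlg : StarSubalgebra ℂ C((Fin k → AddCircle Tp), ℂ) where
  toSubalgebra := (chSpan (k := k) (Tp := Tp)).toSubalgebra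
    (by rw [← chn_zero]; exact Submodule.subset_span ⟨0, rfl⟩)
    (fun _ _ hx hy => chSpan_mul_mem hx hy)
  star_mem' := fun hx => chSpan_star_mem hx

lemma chAlg_separates : (chAlg (k := k) (Tp := Tp)).SeparatesPoints := by
  intro z w hzw
  have : ∃ i, z i ≠ w i := by
    by_contra hc
    push_neg at hc
    exact hzw (funext hc)
  obtain ⟨i, hi⟩ := this
  refine ⟨_, ⟨chn (Pi.single i 1), Submodule.subset_span ⟨Pi.single i 1, rfl⟩, rfl⟩, ?_⟩
  have key : ∀ v : Fin k → AddCircle Tp, chn (Pi.single i 1) v = fourier 1 (v i) := by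
    intro v
    rw [chn_apply, Finset.prod_eq_single i
      (fun j _ hj => by rw [Pi.single_eq_of_ne hj]; exact fourier_zero)
      (fun h => absurd (Finset.mem_univ i) h), Pi.single_eq_same]
  simp only [key]
  rw [fourier_one, fourier_one]
  intro hc
  rw [Circle.coe_inj] at hc
  exact hi (AddCircle.injective_toCircle hT.out.ne' hc)

lemma chAlg_closure_eq_top :
    (chAlg (k := k) (Tp := Tp)).topologicalClosure = ⊤ :=
  ContinuousMap.starSubalgebra_topologicalClosure_eq_top_of_separatesPoints _ chAlg_separates


/-- the quotient map to the torus -/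
noncomputable def qmap (Tp : ℝ) (x : Fin k → ℝ) : Fin k → AddCircle Tp := fun i => (x i : AddCircle Tp)

lemma qmap_continuous : Continuous (qmap (k := k) Tp) :=
  continuous_pi fun i => (AddCircle.continuous_mk' Tp).comp (continuous_apply i)

lemma qmap_integrable (f : C((Fin k → AddCircle Tp), ℂ)) (μ : Measure (Fin k → ℝ))
    [IsFiniteMeasure μ] : Integrable (fun x => f (qmap Tp x)) μ := by
  refine Integrable.mono' (integrable_const ‖f‖)
    ((map_continuous f).comp qmap_continuous).aestronglyMeasurable
    (Filter.Eventually.of_forall fun x => f.norm_coe_le_norm (qmap Tp x))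

lemma qmap_chn (n : Fin k → ℤ) (x : Fin k → ℝ) :
    chn (Tp := Tp) n (qmap Tp x) = cf (fun i => 2 * Real.pi * (n i) / Tp) x := by
  have hTp : (Tp : ℂ) ≠ 0 := Complex.ofReal_ne_zero.2 hT.out.ne'
  rw [chn_apply, cf]
  have : ∀ i : Fin k, fourier (n i) ((x i : ℝ) : AddCircle Tp)
      = Complex.exp (2 * Real.pi * Complex.I * (n i) * (x i) / Tp) := fun i =>
    fourier_coe_apply
  simp only [qmap, this, ← Complex.exp_sum]
  congr 1
  rw [Finset.mul_sum]
  refine Finset.sum_congr rfl fun i _ => ?_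
  push_cast
  field_simp

/-- integrals against both measures agree for all continuous functions pulled back
from the torus -/
lemma torus_integral_eq (μ ν : Measure (Fin k → ℝ)) [IsProbabilityMeasure μ]
    [IsProbabilityMeasure ν] (h : ∀ θ, charFn μ θ = charFn ν θ)
    (H : C((Fin k → AddCircle Tp), ℂ)) :
    ∫ x, H (qmap Tp x) ∂μ = ∫ x, H (qmap Tp x) ∂ν := by
  -- integrals agree on the span of characters
  have hspan : ∀ f ∈ chSpan (k := k) (Tp := Tp),
      ∫ x, f (qmap Tp x) ∂μ = ∫ x, f (qmap Tp x) ∂ν := by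
    intro f hf
    induction hf using Submodule.span_induction with
    | mem g hg =>
        obtain ⟨n, rfl⟩ := hg
        simp only [qmap_chn]
        exact h _
    | zero => simp
    | add f g hf hg h1 h2 =>
        simp only [ContinuousMap.add_apply]
        rw [integral_add (qmap_integrable f μ) (qmap_integrable g μ),
          integral_add (qmap_integrable f ν) (qmap_integrable g ν), h1, h2]
    | smul r f hf h1 =>
        simp only [ContinuousMap.smul_apply, smul_eq_mul]
        rw [integral_const_mul, integral_const_mul, h1]
  -- approximate H by elements of the span
  have key : ∀ ε : ℝ, 0 < ε →
      ‖(∫ x, H (qmap Tp x) ∂μ) - ∫ x, H (qmap Tp x) ∂ν‖ ≤ 2 * ε := by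
    intro ε hε
    have hH : H ∈ closure (chAlg (k := k) (Tp := Tp) : Set _) := by
      rw [← StarSubalgebra.topologicalClosure_coe, chAlg_closure_eq_top]
      simp
    obtain ⟨p, hpA, hdist⟩ := Metric.mem_closure_iff.1 hH ε hε
    have hp : p ∈ chSpan (k := k) (Tp := Tp) := hpA
    have hest : ∀ (m : Measure (Fin k → ℝ)) (_ : IsProbabilityMeasure m),
        ‖(∫ x, H (qmap Tp x) ∂m) - ∫ x, p (qmap Tp x) ∂m‖ ≤ ε := by
      intro m hm
      rw [← integral_sub (qmap_integrable H m) (qmap_integrable p m)]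
      have hb : ∀ x, ‖H (qmap Tp x) - p (qmap Tp x)‖ ≤ ε := by
        intro x
        calc ‖H (qmap Tp x) - p (qmap Tp x)‖ = dist (H (qmap Tp x)) (p (qmap Tp x)) :=
              (dist_eq_norm _ _).symm
          _ ≤ dist H p := ContinuousMap.dist_apply_le_dist _
          _ ≤ ε := hdist.le
      calc ‖∫ x, (H (qmap Tp x) - p (qmap Tp x)) ∂m‖
          ≤ ∫ x, ε ∂m := norm_integral_le_of_norm_le (integrable_const ε)
            (Filter.Eventually.of_forall hb)
        _ = ε := by simp
    calc ‖(∫ x, H (qmap Tp x) ∂μ) - ∫ x, H (qmap Tp x) ∂ν‖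
        ≤ ‖(∫ x, H (qmap Tp x) ∂μ) - ∫ x, p (qmap Tp x) ∂μ‖
          + ‖(∫ x, p (qmap Tp x) ∂μ) - ∫ x, H (qmap Tp x) ∂ν‖ := by
            exact norm_sub_le_norm_sub_add_norm_sub _ _ _
      _ ≤ ε + ε := by
          refine add_le_add (hest μ inferInstance) ?_
          rw [hspan p hp]
          rw [norm_sub_rev]
          exact hest ν inferInstance
      _ = 2 * ε := by ring
  have : ‖(∫ x, H (qmap Tp x) ∂μ) - ∫ x, H (qmap Tp x) ∂ν‖ ≤ 0 := by
    refine le_of_forall_pos_le_add (fun ε hε => ?_)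
    have := key (ε / 2) (by linarith)
    linarith
  rw [← sub_eq_zero]
  exact norm_le_zero_iff.1 this

end Torus

lemma tail_exists (μ ν : Measure (Fin k → ℝ)) [IsProbabilityMeasure μ] [IsProbabilityMeasure ν]
    {ε : ℝ} (hε : 0 < ε) : ∃ L : ℝ, 1 ≤ L ∧ (μ {x | L < ‖x‖}).toReal ≤ ε
      ∧ (ν {x | L < ‖x‖}).toReal ≤ ε := by
  set s : ℕ → Set (Fin k → ℝ) := fun n => {x | (n : ℝ) < ‖x‖} with hs
  have hmeas : ∀ n, MeasurableSet (s n) := fun n =>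
    measurableSet_lt measurable_const continuous_norm.measurable
  have hanti : Antitone s := by
    intro n m hnm x hx
    simp only [hs, Set.mem_setOf_eq] at *
    exact lt_of_le_of_lt (by exact_mod_cast hnm) hx
  have hempty : ⋂ n, s n = ∅ := by
    ext x
    simp only [Set.mem_iInter, Set.mem_empty_iff_false, iff_false, not_forall]
    obtain ⟨n, hn⟩ := exists_nat_gt ‖x‖
    exact ⟨n, by simp [hs, not_lt.2 hn.le]⟩
  have key : ∀ (m : Measure (Fin k → ℝ)) (_ : IsProbabilityMeasure m),
      ∀ᶠ n : ℕ in atTop, m (s n) < ENNReal.ofReal ε := by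
    intro m hm
    have h1 := tendsto_measure_iInter_atTop (μ := m) (fun n => (hmeas n).nullMeasurableSet)
      hanti ⟨0, measure_ne_top m _⟩
    rw [hempty, measure_empty] at h1
    exact h1.eventually_lt_const (ENNReal.ofReal_pos.2 hε)
  obtain ⟨n, hn1, hnμ, hnν⟩ :=
    ((eventually_ge_atTop 1).and ((key μ inferInstance).and (key ν inferInstance))).exists
  refine ⟨(n : ℝ), by exact_mod_cast hn1, ?_, ?_⟩
  · exact ENNReal.toReal_le_of_le_ofReal hε.le hnμ.le
  · exact ENNReal.toReal_le_of_le_ofReal hε.le hnν.le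

lemma integral_eq_of_charFn (μ ν : Measure (Fin k → ℝ)) [IsProbabilityMeasure μ]
    [IsProbabilityMeasure ν] (h : ∀ θ, charFn μ θ = charFn ν θ)
    (g : (Fin k → ℝ) → ℝ) (hgc : Continuous g) (B : ℝ) (hgb : ∀ x, |g x| ≤ B) :
    ∫ x, g x ∂μ = ∫ x, g x ∂ν := by
  have hB0 : 0 ≤ B := le_trans (abs_nonneg _) (hgb 0)
  suffices key : ∀ ε : ℝ, 0 < ε → |(∫ x, g x ∂μ) - ∫ x, g x ∂ν| ≤ (4 * B + 2) * ε by
    have h0 : |(∫ x, g x ∂μ) - ∫ x, g x ∂ν| ≤ 0 := by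
      refine le_of_forall_pos_le_add fun ε hε => ?_
      have hd : (0:ℝ) < 4 * B + 2 := by linarith
      have := key (ε / (4 * B + 2)) (by positivity)
      rw [mul_div_cancel₀ _ hd.ne'] at this
      linarith
    have := abs_nonpos_iff.1 h0
    linarith [sub_eq_zero.1 this]
  intro ε hε
  obtain ⟨L, hL1, hμL, hνL⟩ := tail_exists μ ν hε
  have hL0 : (0:ℝ) < L := by linarith
  haveI : Fact (0 < 4 * L) := ⟨by linarith⟩
  -- the folded function
  set G : (Fin k → ℝ) → ℝ := fun x => g (fun i => fold L (x i)) with hG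
  have hGc : Continuous G := hgc.comp (continuous_pi fun i =>
    (fold_continuous L).comp (continuous_apply i))
  -- G factors through the torus, so its integrals agree
  have hGint_eq : ∫ x, G x ∂μ = ∫ x, G x ∂ν := by
    set s : AddCircle (4 * L) → ℝ := (fold_periodic L hL0).lift with hsdef
    have hscont : Continuous s := continuous_coinduced_dom.mpr (fold_continuous L)
    set H : C((Fin k → AddCircle (4 * L)), ℂ) :=
      ⟨fun z => RCLike.ofReal (K := ℂ) (g (fun i => s (z i))),
        RCLike.continuous_ofReal.comp (hgc.comp (continuous_pi fun i =>
          hscont.comp (continuous_apply i)))⟩ with hH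
    have hHq : ∀ x, H (qmap (4 * L) x) = RCLike.ofReal (K := ℂ) (G x) := by
      intro x
      simp only [hH, ContinuousMap.coe_mk, qmap, hG]
      rw [hsdef]
      exact congrArg _ (congrArg g (funext fun i => (fold_periodic L hL0).lift_coe (x i)))
    have htorus := torus_integral_eq μ ν h H
    simp only [hHq] at htorus
    rw [integral_ofReal (𝕜 := ℂ), integral_ofReal (𝕜 := ℂ)] at htorus
    exact RCLike.ofReal_inj.1 htorus
  -- estimate the difference between g and G
  have hest : ∀ (m : Measure (Fin k → ℝ)) (_ : IsProbabilityMeasure m),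
      (m {x | L < ‖x‖}).toReal ≤ ε → |(∫ x, g x ∂m) - ∫ x, G x ∂m| ≤ 2 * B * ε := by
    intro m hm hmL
    have hmeasS : MeasurableSet {x : Fin k → ℝ | L < ‖x‖} :=
      measurableSet_lt measurable_const continuous_norm.measurable
    have hgint : Integrable g m := Integrable.mono' (integrable_const B)
      hgc.aestronglyMeasurable (Filter.Eventually.of_forall fun x => by
        rw [Real.norm_eq_abs]; exact hgb x)
    have hGint : Integrable G m := Integrable.mono' (integrable_const B)
      hGc.aestronglyMeasurable (Filter.Eventually.of_forall fun x => by
        rw [Real.norm_eq_abs]; exact hgb _)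
    have hptwise : ∀ x, |g x - G x| ≤
        Set.indicator {x : Fin k → ℝ | L < ‖x‖} (fun _ => 2 * B) x := by
      intro x
      by_cases hx : L < ‖x‖
      · rw [Set.indicator_of_mem (show x ∈ {x : Fin k → ℝ | L < ‖x‖} from hx)]
        calc |g x - G x| ≤ |g x| + |G x| := abs_sub _ _
          _ ≤ B + B := add_le_add (hgb x) (hgb _)
          _ = 2 * B := by ring
      · rw [Set.indicator_of_notMem (show x ∉ {x : Fin k → ℝ | L < ‖x‖} from hx)]
        have hfix : (fun i => fold L (x i)) = x := by
          funext i
          refine fold_eq hL0 ?_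
          calc |x i| = ‖x i‖ := (Real.norm_eq_abs _).symm
            _ ≤ ‖x‖ := norm_le_pi_norm x i
            _ ≤ L := not_lt.1 hx
        rw [hG]
        simp only [hfix, sub_self, abs_zero, le_refl]
    calc |(∫ x, g x ∂m) - ∫ x, G x ∂m| = |∫ x, (g x - G x) ∂m| := by
          rw [integral_sub hgint hGint]
      _ ≤ ∫ x, |g x - G x| ∂m := by
          rw [← Real.norm_eq_abs]
          exact (norm_integral_le_integral_norm _).trans (le_of_eq (by simp [Real.norm_eq_abs]))
      _ ≤ ∫ x, Set.indicator {x : Fin k → ℝ | L < ‖x‖} (fun _ => 2 * B) x ∂m := by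
          refine integral_mono (hgint.sub hGint).abs ?_ hptwise
          exact (integrable_const (2 * B)).indicator hmeasS
      _ = 2 * B * (m {x | L < ‖x‖}).toReal := by
          rw [integral_indicator_const _ hmeasS]
          simp [mul_comm, measureReal_def]
      _ ≤ 2 * B * ε := by
          exact mul_le_mul_of_nonneg_left hmL (by linarith)
  have h1 := hest μ inferInstance hμL
  have h2 := hest ν inferInstance hνL
  have h4 : |(∫ x, G x ∂μ) - ∫ x, g x ∂ν| = |(∫ x, g x ∂ν) - ∫ x, G x ∂ν| := by
    rw [hGint_eq, abs_sub_comm]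
  have h5 := abs_sub_le (∫ x, g x ∂μ) (∫ x, G x ∂μ) (∫ x, g x ∂ν)
  nlinarith [h1, h2, h4, h5, hε.le, hB0]

lemma ext_of_charFn (μ ν : Measure (Fin k → ℝ)) [IsProbabilityMeasure μ]
    [IsProbabilityMeasure ν] (h : ∀ θ, charFn μ θ = charFn ν θ) : μ = ν := by
  apply ext_of_forall_lintegral_eq_of_IsFiniteMeasure
  intro f
  have hcont : Continuous fun x => ((f x : ℝ)) := NNReal.continuous_coe.comp f.continuous
  have hbound : ∀ x, |((f x : ℝ))| ≤ dist f 0 := by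
    intro x
    rw [abs_of_nonneg (f x).coe_nonneg]
    have h1 := BoundedContinuousFunction.dist_coe_le_dist (f := f) (g := 0) x
    simpa [NNReal.dist_eq] using h1
  have hint : ∀ (m : Measure (Fin k → ℝ)) (_ : IsProbabilityMeasure m),
      Integrable (fun x => ((f x : ℝ))) m := by
    intro m hm
    refine Integrable.mono' (integrable_const (dist f 0)) hcont.aestronglyMeasurable
      (Filter.Eventually.of_forall fun x => ?_)
    rw [Real.norm_eq_abs]
    exact hbound x
  rw [lintegral_coe_eq_integral f (hint μ inferInstance),
    lintegral_coe_eq_integral f (hint ν inferInstance),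
    integral_eq_of_charFn μ ν h _ hcont _ hbound]


end DSAgg

open DSAgg in
/-- If an infinitely divisible process `X` indexed by `𝕋 ∈ {ℝ, [0,∞), (0,∞)}`
is `(α,δ)`-dilatively stable with `δ ≠ 0`, then it is
`(1/2 − α/δ, −1/δ)`-aggregate similar. -/
theorem dilatively_stable_implies_aggregate_similar
    {Ω : Type*} [MeasurableSpace Ω] (P : Measure Ω) [IsProbabilityMeasure P]
    (T : Set ℝ) (hT : T = Set.univ ∨ T = Set.Ici 0 ∨ T = Set.Ioi 0)
    (X : ℝ → Ω → ℝ) (hX : ∀ t ∈ T, Measurable (X t))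
    (ψ : ∀ k : ℕ, (Fin k → ℝ) → (Fin k → ℝ) → ℂ)
    (hψ0 : ∀ (k : ℕ) (t : Fin k → ℝ), (∀ i, t i ∈ T) → ψ k t 0 = 0)
    (hψcont : ∀ (k : ℕ) (t : Fin k → ℝ), (∀ i, t i ∈ T) → Continuous (ψ k t))
    (hψchar : ∀ (k : ℕ) (t : Fin k → ℝ), (∀ i, t i ∈ T) → ∀ θ : Fin k → ℝ,
      ∫ ω, Complex.exp (Complex.I * ∑ j, (θ j : ℂ) * (X (t j) ω : ℂ)) ∂P
        = Complex.exp (-ψ k t θ))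
    (hID : ∀ (k : ℕ) (t : Fin k → ℝ), (∀ i, t i ∈ T) → ∀ n : ℕ, 0 < n →
      ∃ ρ : Measure (Fin k → ℝ), IsProbabilityMeasure ρ ∧
        convPow ρ n = Measure.map (fun ω i => X (t i) ω) P)
    (α δ : ℝ) (hδ : δ ≠ 0)
    (hDS : ∀ c : ℝ, 0 < c → ∀ (k : ℕ) (t : Fin k → ℝ), (∀ i, t i ∈ T) →
      ∀ θ : Fin k → ℝ,
        ψ k (fun i => c * t i) θ
          = ((c ^ δ : ℝ) : ℂ) * ψ k t (fun i => c ^ (α - δ / 2) * θ i)) :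
    ∀ m : ℕ, 0 < m → ∀ (k : ℕ) (t : Fin k → ℝ), (∀ i, t i ∈ T) →
      convPow (Measure.map (fun ω i => X (t i) ω) P) m
        = Measure.map
            (fun ω i => (m : ℝ) ^ ((1 : ℝ) / 2 - α / δ)
              * X ((m : ℝ) ^ (1 / δ) * t i) ω) P := by
  intro m hm k t ht
  have hm' : (0 : ℝ) < m := by exact_mod_cast hm
  set c : ℝ := (m : ℝ) ^ ((1 : ℝ) / δ) with hc_def
  set c' : ℝ := (m : ℝ) ^ ((1 : ℝ) / 2 - α / δ) with hc'_def
  have hc : 0 < c := Real.rpow_pos_of_pos hm' _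
  have ht' : ∀ i, c * t i ∈ T := by
    intro i
    rcases hT with h | h | h
    · rw [h]; trivial
    · rw [h]
      have := h ▸ ht i
      exact Set.mem_Ici.2 (mul_nonneg hc.le (Set.mem_Ici.1 this))
    · rw [h]
      have := h ▸ ht i
      exact Set.mem_Ioi.2 (mul_pos hc (Set.mem_Ioi.1 this))
  have hXmeas : Measurable (fun ω i => X (t i) ω) :=
    measurable_pi_lambda _ fun i => hX _ (ht i)
  have hYmeas : Measurable (fun ω (i : Fin k) => c' * X (c * t i) ω) :=
    measurable_pi_lambda _ fun i => (hX _ (ht' i)).const_mul c'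
  haveI h1 : IsProbabilityMeasure (Measure.map (fun ω i => X (t i) ω) P) :=
    Measure.isProbabilityMeasure_map hXmeas.aemeasurable
  haveI h2 : IsProbabilityMeasure
      (Measure.map (fun ω (i : Fin k) => c' * X (c * t i) ω) P) :=
    Measure.isProbabilityMeasure_map hYmeas.aemeasurable
  -- key exponent computations
  have hcδ : c ^ δ = (m : ℝ) := by
    rw [hc_def, ← Real.rpow_mul hm'.le, one_div, inv_mul_cancel₀ hδ, Real.rpow_one]
  have hscale : ∀ r : ℝ, c ^ (α - δ / 2) * (c' * r) = r := by
    intro r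
    have hpow : c ^ (α - δ / 2) = (m : ℝ) ^ ((1 / δ) * (α - δ / 2)) := by
      rw [hc_def, ← Real.rpow_mul hm'.le]
    rw [hpow, hc'_def, ← mul_assoc, ← Real.rpow_add hm']
    have hz : (1 / δ) * (α - δ / 2) + ((1 : ℝ) / 2 - α / δ) = 0 := by
      field_simp
      ring
    rw [hz, Real.rpow_zero, one_mul]
  -- characteristic functions
  apply ext_of_charFn
  intro θ
  have hchar1 : charFn (Measure.map (fun ω i => X (t i) ω) P) θ
      = Complex.exp (-ψ k t θ) := by
    rw [charFn, integral_map hXmeas.aemeasurable (cf_continuous θ).aestronglyMeasurable]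
    simp only [cf]
    exact hψchar k t ht θ
  have hchar2 : charFn (Measure.map (fun ω (i : Fin k) => c' * X (c * t i) ω) P) θ
      = Complex.exp (-(((m : ℝ) : ℂ) * ψ k t θ)) := by
    rw [charFn, integral_map hYmeas.aemeasurable (cf_continuous θ).aestronglyMeasurable]
    have hcf : ∀ ω, cf θ (fun i => c' * X (c * t i) ω)
        = cf (fun i => c' * θ i) (fun i => X (c * t i) ω) := by
      intro ω
      simp only [cf]
      congr 1
      congr 1
      refine Finset.sum_congr rfl fun j _ => ?_
      push_cast
      ring
    have key := hDS c hc k t ht (fun i => c' * θ i)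
    have harg : (fun i => c ^ (α - δ / 2) * (c' * θ i)) = θ :=
      funext fun i => hscale (θ i)
    rw [harg, hcδ] at key
    simp only [hcf]
    simp only [cf]
    rw [← key]
    exact hψchar k (fun i => c * t i) ht' (fun i => c' * θ i)
  rw [charFn_convPow, hchar1, hchar2]
  rw [← Complex.exp_nat_mul]
  congr 1
  push_cast
  ring
end

section
/- Let 𝕋 be ℝ, [0,∞) or (0,∞), and let (X_t)_{t∈𝕋} be a real-valued stochastic process whose finite-dimensional distributions are infinitely divisible, with characteristic exponents ψ_{t_1,…,t_k}. Suppose X is (f,g)-dilatively stable for continuous functions f, g : (0,∞) → (0,∞). If X is not the identically zero process (i.e., ψ_{t}(θ) ≠ 0 for some t ∈ 𝕋 and θ ∈ ℝ) and f(T) = T^β for some β ∈ ℝ and all T > 0, then there exists a unique γ ∈ ℝ such that g(T) = T^γ for all T > 0. -/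
open MeasureTheory ProbabilityTheory Filter Topology

/-- If an infinitely divisible process is `(f,g)`-dilatively stable,
not identically zero, and `f(T) = T^β`, then `g` is a uniquely determined power function. -/
theorem g_is_power_function_of_f_power
    {Ω : Type*} [MeasurableSpace Ω] (P : Measure Ω) [IsProbabilityMeasure P]
    (T : Set ℝ) (hT : T = Set.univ ∨ T = Set.Ici 0 ∨ T = Set.Ioi 0)
    (X : ℝ → Ω → ℝ) (hX : ∀ t ∈ T, Measurable (X t))
    (ψ : ∀ k : ℕ, (Fin k → ℝ) → (Fin k → ℝ) → ℂ)
    (hψ0 : ∀ (k : ℕ) (t : Fin k → ℝ), (∀ i, t i ∈ T) → ψ k t 0 = 0)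
    (hψcont : ∀ (k : ℕ) (t : Fin k → ℝ), (∀ i, t i ∈ T) → Continuous (ψ k t))
    (hψchar : ∀ (k : ℕ) (t : Fin k → ℝ), (∀ i, t i ∈ T) → ∀ θ : Fin k → ℝ,
      ∫ ω, Complex.exp (Complex.I * ∑ j, (θ j : ℂ) * (X (t j) ω : ℂ)) ∂P
        = Complex.exp (-ψ k t θ))
    (hID : ∀ (k : ℕ) (t : Fin k → ℝ), (∀ i, t i ∈ T) → ∀ n : ℕ, 0 < n →
      ∃ ρ : Measure (Fin k → ℝ), IsProbabilityMeasure ρ ∧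
        convPow ρ n = Measure.map (fun ω i => X (t i) ω) P)
    (f g : ℝ → ℝ)
    (hfpos : ∀ c : ℝ, 0 < c → 0 < f c) (hgpos : ∀ c : ℝ, 0 < c → 0 < g c)
    (hfcont : ContinuousOn f (Set.Ioi 0)) (hgcont : ContinuousOn g (Set.Ioi 0))
    -- (f,g)-dilative stability
    (hDS : ∀ c : ℝ, 0 < c → ∀ (k : ℕ) (t : Fin k → ℝ), (∀ i, t i ∈ T) →
      ∀ θ : Fin k → ℝ,
        ψ k (fun i => c * t i) θ = ((g c : ℝ) : ℂ) * ψ k t (fun i => f c * θ i))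
    -- `X` is not the identically zero process
    (hnz : ∃ t ∈ T, ∃ θ : ℝ, ψ 1 (fun _ => t) (fun _ => θ) ≠ 0)
    (β : ℝ) (hfβ : ∀ c : ℝ, 0 < c → f c = c ^ β) :
    ∃! γ : ℝ, ∀ c : ℝ, 0 < c → g c = c ^ γ := by

  -- T is closed under multiplication by positive constants
  have hTclosed : ∀ s ∈ T, ∀ c : ℝ, 0 < c → c * s ∈ T := by
    intro s hs c hc
    rcases hT with h | h | h
    · simp [h]
    · subst h; exact mul_nonneg hc.le hs
    · subst h; exact mul_pos hc hs
  obtain ⟨t0, ht0, θ0, hθ0⟩ := hnz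
  set t : Fin 1 → ℝ := fun _ => t0 with ht_def
  have htT : ∀ i : Fin 1, t i ∈ T := fun _ => ht0
  -- g is multiplicative on positives
  have hmul : ∀ c d : ℝ, 0 < c → 0 < d → g (c * d) = g c * g d := by
    intro c d hc hd
    have hcd : (0:ℝ) < c * d := mul_pos hc hd
    have hfcd : f (c * d) ≠ 0 := (hfpos _ hcd).ne'
    have hfmul : f c * f d = f (c * d) := by
      rw [hfβ c hc, hfβ d hd, hfβ _ hcd, Real.mul_rpow hc.le hd.le]
    set θ : Fin 1 → ℝ := fun _ => θ0 / f (c * d) with hθ_def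
    have hA := hDS (c * d) hcd 1 t htT θ
    have hB := hDS c hc 1 (fun i => d * t i) (fun i => hTclosed _ (htT i) d hd) θ
    have hC := hDS d hd 1 t htT (fun i => f c * θ i)
    have e1 : (fun i => (c * d) * t i) = fun i => c * (d * t i) := by
      funext i; ring
    have e2 : (fun i : Fin 1 => f (c * d) * θ i) = fun _ : Fin 1 => θ0 := by
      funext i; simp [hθ_def, mul_div_cancel₀ _ hfcd]
    have e3 : (fun i : Fin 1 => f d * (f c * θ i)) = fun _ : Fin 1 => θ0 := by
      funext i
      simp only [hθ_def]
      field_simp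
      rw [← hfmul]; ring
    rw [e2] at hA
    rw [hC, e3] at hB
    rw [e1, hB] at hA
    have hpsi : ψ 1 t (fun _ => θ0) ≠ 0 := hθ0
    have key : ((g c * g d : ℝ) : ℂ) = ((g (c * d) : ℝ) : ℂ) := by
      apply mul_right_cancel₀ hpsi
      push_cast
      rw [mul_assoc]
      exact hA
    exact_mod_cast key.symm
  -- define h = log ∘ g ∘ exp, additive and continuous
  set h : ℝ → ℝ := fun x => Real.log (g (Real.exp x)) with hh_def
  have hadd : ∀ x y, h (x + y) = h x + h y := by
    intro x y
    simp only [hh_def, Real.exp_add, hmul _ _ (Real.exp_pos x) (Real.exp_pos y),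
      Real.log_mul (hgpos _ (Real.exp_pos x)).ne' (hgpos _ (Real.exp_pos y)).ne']
  have hcont : Continuous h := by
    rw [continuous_iff_continuousAt]
    intro x
    have h1 : ContinuousAt g (Real.exp x) :=
      hgcont.continuousAt (Ioi_mem_nhds (Real.exp_pos x))
    have h2 : ContinuousAt Real.log (g (Real.exp x)) :=
      Real.continuousAt_log (hgpos _ (Real.exp_pos x)).ne'
    exact ContinuousAt.comp (ContinuousAt.comp h2 h1) Real.continuous_exp.continuousAt
  let H : ℝ →+ ℝ := AddMonoidHom.mk' h hadd
  have hlin : ∀ x : ℝ, h x = h 1 * x := by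
    intro x
    have := (H.toRealLinearMap hcont).map_smul x 1
    simp only [smul_eq_mul, mul_one] at this
    rw [mul_comm]; exact this
  have hgpow : ∀ c : ℝ, 0 < c → g c = c ^ (h 1) := by
    intro c hc
    have h1 := hlin (Real.log c)
    have h2 : h (Real.log c) = Real.log (g c) := by
      rw [hh_def]; simp [Real.exp_log hc]
    rw [h2] at h1
    rw [Real.rpow_def_of_pos hc, mul_comm, ← h1, Real.exp_log (hgpos c hc)]
  refine ⟨h 1, hgpow, ?_⟩
  intro γ hγ
  have h2 : (2:ℝ) ^ γ = (2:ℝ) ^ (h 1) := (hγ 2 (by norm_num)).symm.trans (hgpow 2 (by norm_num))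
  have hlog2 : γ * Real.log 2 = h 1 * Real.log 2 := by
    rw [← Real.log_rpow (by norm_num : (0:ℝ) < 2), ← Real.log_rpow (by norm_num : (0:ℝ) < 2), h2]
  exact mul_right_cancel₀ (Real.log_pos one_lt_two).ne' hlog2
end

section
/- Let (X_t)_{t∈(0,∞)} be a real-valued stochastic process whose finite-dimensional distributions are infinitely divisible, with characteristic exponents ψ_{t_1,…,t_k}, and suppose X is (f,g)-dilatively stable for continuous functions f, g : (0,∞) → (0,∞). Suppose ψ_1 admits a Lévy–Khintchine representation ψ_1(θ) = −i a θ + (1/2) σ² θ² + ∫_{ℝ∖{0}} (1 − e^{iθx} + iθx/(1+x²)) μ(dx) for all θ ∈ ℝ, where a ∈ ℝ, σ² > 0 and μ is a nonzero Lévy measure (so X_1 is not Gaussian but has a nontrivial Gaussian component). Then there exist unique β, γ ∈ ℝ such that f(T) = T^β and g(T) = T^γ for all T > 0. -/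
open MeasureTheory ProbabilityTheory Filter Topology

section AuxLemmas

lemma aux_integrable_min (μ : Measure ℝ)
    (hlevy : ∫⁻ x, ENNReal.ofReal (min 1 (x ^ 2)) ∂μ < ⊤) :
    Integrable (fun x : ℝ => min 1 (x ^ 2)) μ := by
  constructor
  · exact (continuous_const.min (continuous_pow 2)).aestronglyMeasurable
  · rw [hasFiniteIntegral_iff_ofReal (ae_of_all _ fun x => le_min zero_le_one (sq_nonneg x))]
    exact hlevy

lemma aux_integrable_of_bound {E : Type*} [NormedAddCommGroup E] (μ : Measure ℝ)
    (hlevy : ∫⁻ x, ENNReal.ofReal (min 1 (x ^ 2)) ∂μ < ⊤)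
    (F : ℝ → E) (hm : AEStronglyMeasurable F μ) (C : ℝ)
    (hb : ∀ x, ‖F x‖ ≤ C * min 1 (x ^ 2)) : Integrable F μ :=
  ((aux_integrable_min μ hlevy).const_mul C).mono' hm (ae_of_all _ hb)

lemma aux_cos_bound (y : ℝ) : 1 - Real.cos y ≤ min 2 (y ^ 2 / 2) := by
  refine le_min (by nlinarith [Real.neg_one_le_cos y]) (by nlinarith [Real.one_sub_sq_div_two_le_cos (x := y)])

lemma aux_integrable_cos (μ : Measure ℝ)
    (hlevy : ∫⁻ x, ENNReal.ofReal (min 1 (x ^ 2)) ∂μ < ⊤) (θ : ℝ) :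
    Integrable (fun x : ℝ => 1 - Real.cos (θ * x)) μ := by
  refine aux_integrable_of_bound μ hlevy _
    ((continuous_const.sub ((Real.continuous_cos.comp (continuous_const.mul continuous_id)))).aestronglyMeasurable)
    (2 + θ ^ 2) (fun x => ?_)
  have h1 : (0:ℝ) ≤ 1 - Real.cos (θ * x) := by nlinarith [Real.cos_le_one (θ * x)]
  have h2 := aux_cos_bound (θ * x)
  rw [Real.norm_eq_abs, abs_of_nonneg h1]
  rcases le_or_gt (x ^ 2) 1 with hx | hx
  · calc 1 - Real.cos (θ * x) ≤ (θ * x) ^ 2 / 2 := le_trans h2 (min_le_right _ _)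
      _ ≤ (2 + θ ^ 2) * (x ^ 2) := by nlinarith [sq_nonneg x, sq_nonneg θ, sq_nonneg (θ*x)]
      _ = (2 + θ ^ 2) * min 1 (x ^ 2) := by rw [min_eq_right hx]
  · calc 1 - Real.cos (θ * x) ≤ 2 := le_trans h2 (min_le_left _ _)
      _ ≤ (2 + θ ^ 2) * 1 := by nlinarith [sq_nonneg θ]
      _ = (2 + θ ^ 2) * min 1 (x ^ 2) := by rw [min_eq_left hx.le]

lemma aux_den_eq (x : ℝ) : (1 + (x:ℂ) ^ 2) = ((1 + x ^ 2 : ℝ) : ℂ) := by push_cast; ring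

lemma aux_den_ne (x : ℝ) : (1 + (x:ℂ) ^ 2) ≠ 0 := by
  rw [aux_den_eq]
  exact_mod_cast (by positivity : (1 + x ^ 2 : ℝ) ≠ 0)

lemma aux_norm_exp (θ x : ℝ) : ‖Complex.exp (Complex.I * θ * x)‖ = 1 := by
  rw [Complex.norm_exp]
  simp [Complex.mul_re]

lemma aux_exp_taylor (y : ℝ) :
    ‖Complex.exp (Complex.I * y) - 1 - Complex.I * y‖ ≤ 3 * y ^ 2 := by
  rcases le_or_gt |y| 1 with hy | hy
  · have h := Complex.norm_exp_sub_one_sub_id_le (x := Complex.I * y) (by simpa using hy)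
    calc ‖Complex.exp (Complex.I * y) - 1 - Complex.I * y‖
        ≤ ‖Complex.I * y‖ ^ 2 := h
      _ = y ^ 2 := by simp [mul_pow, sq_abs]
      _ ≤ 3 * y ^ 2 := by nlinarith [sq_nonneg y]
  · have h1 : ‖Complex.exp (Complex.I * y)‖ = 1 := by
      rw [Complex.norm_exp]; simp [Complex.mul_re]
    have h2 : ‖Complex.I * y‖ = |y| := by simp
    calc ‖Complex.exp (Complex.I * y) - 1 - Complex.I * y‖
        ≤ ‖Complex.exp (Complex.I * y) - 1‖ + ‖Complex.I * y‖ := by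
          exact norm_sub_le (Complex.exp (Complex.I * y) - 1) (Complex.I * y)
      _ ≤ (‖Complex.exp (Complex.I * y)‖ + 1) + |y| := by
          gcongr
          · exact le_trans (norm_sub_le _ 1) (by simp)
          · exact h2.le
      _ = 2 + |y| := by rw [h1]; ring
      _ ≤ 3 * y ^ 2 := by nlinarith [sq_abs y, abs_nonneg y]

noncomputable def LKint (θ x : ℝ) : ℂ :=
  1 - Complex.exp (Complex.I * (θ : ℂ) * (x : ℂ))
    + Complex.I * (θ : ℂ) * (x : ℂ) / (1 + (x : ℂ) ^ 2)

lemma aux_LK_decomp (θ x : ℝ) :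
    LKint θ x = -(Complex.exp (Complex.I * (θ * x : ℝ)) - 1 - Complex.I * (θ * x : ℝ))
      - Complex.I * θ * x ^ 3 / (1 + (x:ℂ) ^ 2) := by
  have h := aux_den_ne x
  rw [LKint]
  push_cast
  field_simp
  ring

lemma aux_LK_bound (θ x : ℝ) :
    ‖LKint θ x‖ ≤ (3 * θ ^ 2 + |θ| + 2) * min 1 (x ^ 2) := by
  have hden : ‖1 + (x:ℂ) ^ 2‖ = 1 + x ^ 2 := by
    rw [aux_den_eq, Complex.norm_real, Real.norm_eq_abs, abs_of_pos (by positivity)]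
  have hxpos : (0:ℝ) < 1 + x ^ 2 := by positivity
  rcases le_or_gt (x ^ 2) 1 with hx | hx
  · have hx1 : |x| ≤ 1 := by nlinarith [abs_nonneg x, sq_abs x]
    rw [aux_LK_decomp, min_eq_right hx]
    have h2 : ‖Complex.I * (θ:ℂ) * (x:ℂ) ^ 3 / (1 + (x:ℂ) ^ 2)‖
        = |θ| * |x| ^ 3 / (1 + x ^ 2) := by
      simp [norm_div, norm_mul, norm_pow, Complex.norm_I, Complex.norm_real, hden, abs_pow]
    calc ‖-(Complex.exp (Complex.I * (θ * x : ℝ)) - 1 - Complex.I * (θ * x : ℝ))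
          - Complex.I * θ * (x:ℂ) ^ 3 / (1 + (x:ℂ) ^ 2)‖
        ≤ ‖-(Complex.exp (Complex.I * (θ * x : ℝ)) - 1 - Complex.I * (θ * x : ℝ))‖
          + ‖Complex.I * (θ:ℂ) * (x:ℂ) ^ 3 / (1 + (x:ℂ) ^ 2)‖ := norm_sub_le _ _
      _ = ‖Complex.exp (Complex.I * (θ * x : ℝ)) - 1 - Complex.I * (θ * x : ℝ)‖
          + |θ| * |x| ^ 3 / (1 + x ^ 2) := by rw [norm_neg, h2]
      _ ≤ 3 * (θ * x) ^ 2 + |θ| * |x| ^ 3 / (1 + x ^ 2) := by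
          gcongr; exact aux_exp_taylor (θ * x)
      _ ≤ (3 * θ ^ 2 + |θ| + 2) * x ^ 2 := by
          have hb : |θ| * |x| ^ 3 / (1 + x ^ 2) ≤ |θ| * x ^ 2 := by
            rw [div_le_iff₀ hxpos]
            have h3 : |x| ^ 3 ≤ x ^ 2 := by nlinarith [abs_nonneg x, sq_abs x]
            nlinarith [abs_nonneg θ, sq_nonneg x, mul_nonneg (abs_nonneg θ) (sq_nonneg x)]
          nlinarith [sq_nonneg x, sq_nonneg (θ * x), mul_pow θ x 2]
  · rw [min_eq_left hx.le]
    have h2 : ‖Complex.I * (θ:ℂ) * (x:ℂ) / (1 + (x:ℂ) ^ 2)‖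
        = |θ| * |x| / (1 + x ^ 2) := by
      simp [norm_div, norm_mul, Complex.norm_I, Complex.norm_real, hden]
    have hb : |θ| * |x| / (1 + x ^ 2) ≤ |θ| := by
      rw [div_le_iff₀ hxpos]
      nlinarith [abs_nonneg θ, abs_nonneg x, sq_abs x, sq_nonneg (|x| - 1)]
    calc ‖LKint θ x‖
        ≤ ‖(1 : ℂ) - Complex.exp (Complex.I * (θ:ℂ) * (x:ℂ))‖
          + ‖Complex.I * (θ:ℂ) * (x:ℂ) / (1 + (x:ℂ) ^ 2)‖ := norm_add_le _ _
      _ ≤ (1 + 1) + |θ| := by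
          gcongr
          · calc ‖(1:ℂ) - Complex.exp (Complex.I * (θ:ℂ) * (x:ℂ))‖
                ≤ ‖(1:ℂ)‖ + ‖Complex.exp (Complex.I * (θ:ℂ) * (x:ℂ))‖ := norm_sub_le _ _
              _ = 1 + 1 := by rw [norm_one]; rw [aux_norm_exp]
          · rw [h2]
            exact hb
      _ ≤ (3 * θ ^ 2 + |θ| + 2) * 1 := by nlinarith [sq_nonneg θ, abs_nonneg θ]


lemma aux_LK_integrable (μ : Measure ℝ)
    (hlevy : ∫⁻ x, ENNReal.ofReal (min 1 (x ^ 2)) ∂μ < ⊤) (θ : ℝ) :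
    Integrable (fun x => LKint θ x) μ := by
  have hc : Continuous fun x : ℝ => LKint θ x := by
    unfold LKint
    refine (continuous_const.sub ?_).add (Continuous.div ?_ ?_ fun x => aux_den_ne x)
    · exact Complex.continuous_exp.comp (by continuity)
    · continuity
    · continuity
  exact ((aux_integrable_min μ hlevy).const_mul (3 * θ ^ 2 + |θ| + 2)).mono'
    hc.aestronglyMeasurable (ae_of_all _ fun x => aux_LK_bound θ x)

lemma aux_LK_re (θ x : ℝ) : (LKint θ x).re = 1 - Real.cos (θ * x) := by
  have h1 : Complex.I * (θ:ℂ) * (x:ℂ) = ((θ * x : ℝ) : ℂ) * Complex.I := by push_cast; ring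
  have h2 : Complex.I * (θ:ℂ) * (x:ℂ) / (1 + (x:ℂ) ^ 2)
      = ((θ * x / (1 + x ^ 2) : ℝ) : ℂ) * Complex.I := by
    rw [aux_den_eq]
    have : ((1 + x ^ 2 : ℝ) : ℂ) ≠ 0 := by rw [← aux_den_eq]; exact aux_den_ne x
    push_cast
    ring
  rw [LKint, h2, h1]
  simp only [Complex.sub_re, Complex.add_re, Complex.one_re, Complex.exp_ofReal_mul_I_re,
    Complex.mul_re, Complex.I_re, Complex.I_im, Complex.ofReal_re, Complex.ofReal_im]
  ring



lemma aux_tendsto_R (μ : Measure ℝ)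
    (hlevy : ∫⁻ x, ENNReal.ofReal (min 1 (x ^ 2)) ∂μ < ⊤) :
    Tendsto (fun θ : ℝ => (∫ x, (1 - Real.cos (θ * x)) ∂μ) / θ ^ 2) atTop (𝓝 0) := by
  have hbound : Integrable (fun x : ℝ => 2 * min 1 (x ^ 2)) μ := by
    constructor
    · exact (continuous_const.mul (continuous_const.min (continuous_pow 2))).aestronglyMeasurable
    · rw [hasFiniteIntegral_iff_ofReal (ae_of_all _ fun x => by positivity)]
      calc ∫⁻ x, ENNReal.ofReal (2 * min 1 (x ^ 2)) ∂μ
          = ∫⁻ x, 2 * ENNReal.ofReal (min 1 (x ^ 2)) ∂μ := by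
            refine lintegral_congr fun x => ?_
            rw [ENNReal.ofReal_mul (by norm_num)]
            norm_num
        _ = 2 * ∫⁻ x, ENNReal.ofReal (min 1 (x ^ 2)) ∂μ := lintegral_const_mul' _ _ (by norm_num)
        _ < ⊤ := ENNReal.mul_lt_top (by norm_num) hlevy
  have key : Tendsto (fun θ : ℝ => ∫ x, (1 - Real.cos (θ * x)) / θ ^ 2 ∂μ) atTop (𝓝 (∫ x, (0:ℝ) ∂μ)) := by
    refine tendsto_integral_filter_of_dominated_convergence (fun x => 2 * min 1 (x ^ 2))
      (Eventually.of_forall fun θ => ?_) ?_ hbound ?_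
    · exact (((continuous_const.sub (Real.continuous_cos.comp (continuous_const.mul continuous_id))).div_const _)).aestronglyMeasurable
    · filter_upwards [eventually_ge_atTop (1:ℝ)] with θ hθ
      refine Eventually.of_forall fun x => ?_
      have hθ2 : (1:ℝ) ≤ θ ^ 2 := by nlinarith
      have hnn : (0:ℝ) ≤ 1 - Real.cos (θ * x) := by nlinarith [Real.cos_le_one (θ * x)]
      have hcb := aux_cos_bound (θ * x)
      rw [Real.norm_eq_abs, abs_of_nonneg (by positivity)]
      rcases le_or_gt (x ^ 2) 1 with hx | hx
      · rw [min_eq_right hx]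
        rw [div_le_iff₀ (by positivity)]
        have : 1 - Real.cos (θ * x) ≤ (θ * x) ^ 2 / 2 := le_trans hcb (min_le_right _ _)
        nlinarith [sq_nonneg x, sq_nonneg θ]
      · rw [min_eq_left hx.le]
        rw [div_le_iff₀ (by positivity)]
        have : 1 - Real.cos (θ * x) ≤ 2 := le_trans hcb (min_le_left _ _)
        nlinarith
    · refine Eventually.of_forall fun x => ?_
      refine squeeze_zero_norm' (a := fun θ : ℝ => 4 / θ ^ 2) ?_ ?_
      · filter_upwards [eventually_ge_atTop (1:ℝ)] with θ hθ
        have hnn : (0:ℝ) ≤ 1 - Real.cos (θ * x) := by nlinarith [Real.cos_le_one (θ * x)]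
        rw [Real.norm_eq_abs, abs_of_nonneg (by positivity)]
        rw [div_le_div_iff₀ (by positivity) (by positivity)]
        nlinarith [Real.neg_one_le_cos (θ * x)]
      · exact tendsto_const_nhds.div_atTop ((tendsto_pow_atTop (by norm_num)).comp tendsto_id)
  simp only [integral_zero] at key
  refine key.congr fun θ => ?_
  rw [integral_div]

lemma aux_R_zero (μ : Measure ℝ)
    (hlevy : ∫⁻ x, ENNReal.ofReal (min 1 (x ^ 2)) ∂μ < ⊤)
    (r : ℝ) (hr : 1 < r)
    (hfe : ∀ s : ℝ, (∫ x, (1 - Real.cos ((r * s) * x)) ∂μ) = r ^ 2 * ∫ x, (1 - Real.cos (s * x)) ∂μ) :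
    ∀ θ : ℝ, (∫ x, (1 - Real.cos (θ * x)) ∂μ) = 0 := by
  set R : ℝ → ℝ := fun θ => ∫ x, (1 - Real.cos (θ * x)) ∂μ with hR
  have hfe' : ∀ s : ℝ, R (r * s) = r ^ 2 * R s := hfe
  have hiter : ∀ (n : ℕ) (θ : ℝ), R (r ^ n * θ) = r ^ (2 * n) * R θ := by
    intro n
    induction n with
    | zero => intro θ; simp
    | succ n ih =>
      intro θ
      have : r ^ (n + 1) * θ = r * (r ^ n * θ) := by ring
      rw [this, hfe' (r ^ n * θ), ih θ]
      ring
  have heven : ∀ θ : ℝ, R (-θ) = R θ := by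
    intro θ
    refine integral_congr_ae (Eventually.of_forall fun x => ?_)
    simp [neg_mul, Real.cos_neg]
  have hpos : ∀ θ : ℝ, 0 < θ → R θ = 0 := by
    intro θ hθ
    have hlim := aux_tendsto_R μ hlevy
    have hs : Tendsto (fun n : ℕ => r ^ n * θ) atTop atTop :=
      (tendsto_pow_atTop_atTop_of_one_lt hr).atTop_mul_const hθ
    have h1 : Tendsto (fun n : ℕ => R (r ^ n * θ) / (r ^ n * θ) ^ 2) atTop (𝓝 0) :=
      hlim.comp hs
    have h2 : (fun n : ℕ => R (r ^ n * θ) / (r ^ n * θ) ^ 2) = fun _ => R θ / θ ^ 2 := by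
      funext n
      rw [hiter n θ]
      have hsq : (r ^ n * θ) ^ 2 = r ^ (2 * n) * θ ^ 2 := by
        rw [mul_pow, ← pow_mul, Nat.mul_comm]
      rw [hsq, mul_div_mul_left _ _ (by positivity : (r:ℝ) ^ (2 * n) ≠ 0)]
    rw [h2] at h1
    have h3 : R θ / θ ^ 2 = 0 := tendsto_nhds_unique tendsto_const_nhds h1
    have : θ ^ 2 ≠ 0 := by positivity
    field_simp at h3
    simpa using h3
  intro θ
  show R θ = 0
  rcases lt_trichotomy θ 0 with h | h | h
  · rw [← heven θ]; exact hpos (-θ) (by linarith)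
  · subst h; simp [hR]
  · exact hpos θ h

lemma aux_mu_zero (μ : Measure ℝ)
    (hlevy : ∫⁻ x, ENNReal.ofReal (min 1 (x ^ 2)) ∂μ < ⊤)
    (hμ0 : μ {0} = 0)
    (hR0 : ∀ θ : ℝ, (∫ x, (1 - Real.cos (θ * x)) ∂μ) = 0) : μ = 0 := by
  have hint : ∀ θ : ℝ, Integrable (fun x : ℝ => 1 - Real.cos (θ * x)) μ :=
    fun θ => aux_integrable_cos μ hlevy θ
  have hae : ∀ θ : ℝ, ∀ᵐ x ∂μ, 1 - Real.cos (θ * x) = 0 := by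
    intro θ
    have := (integral_eq_zero_iff_of_nonneg
      (fun x => by simpa using (by nlinarith [Real.cos_le_one (θ * x)] : (0:ℝ) ≤ 1 - Real.cos (θ * x)))
      (hint θ)).mp (hR0 θ)
    filter_upwards [this] with x hx using hx
  have h1 : μ {x : ℝ | ¬ (1 - Real.cos (1 * x) = 0)} = 0 := by
    have := hae 1
    rwa [ae_iff] at this
  have h2 : μ {x : ℝ | ¬ (1 - Real.cos (Real.pi * x) = 0)} = 0 := by
    have := hae Real.pi
    rwa [ae_iff] at this
  have hcover : (Set.univ : Set ℝ) ⊆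
      {x : ℝ | ¬ (1 - Real.cos (1 * x) = 0)} ∪ {x : ℝ | ¬ (1 - Real.cos (Real.pi * x) = 0)} ∪ {0} := by
    intro x _
    by_contra hx
    push_neg at hx
    simp only [Set.mem_union, Set.mem_setOf_eq, Set.mem_singleton_iff, not_or, not_not] at hx
    obtain ⟨⟨ha, hb⟩, hc⟩ := hx
    have hcos1 : Real.cos x = 1 := by rw [one_mul] at ha; linarith
    have hcos2 : Real.cos (Real.pi * x) = 1 := by linarith
    obtain ⟨n, hn⟩ := (Real.cos_eq_one_iff x).mp hcos1
    obtain ⟨m, hm⟩ := (Real.cos_eq_one_iff (Real.pi * x)).mp hcos2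
    have hn0 : n ≠ 0 := by
      intro h0
      rw [h0] at hn
      simp at hn
      exact hc hn.symm
    have hpi : Real.pi = (m : ℝ) / (n : ℝ) := by
      have hx' : x = (n : ℝ) * (2 * Real.pi) := hn.symm
      rw [hx'] at hm
      have hn' : (n : ℝ) ≠ 0 := Int.cast_ne_zero.mpr hn0
      have h2pi : (2 * Real.pi) ≠ 0 := by positivity
      have hm' : (m : ℝ) * (2 * Real.pi) = (Real.pi * n) * (2 * Real.pi) := hm.trans (by ring)
      have hm2 : (m : ℝ) = Real.pi * n := mul_right_cancel₀ h2pi hm'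
      rw [eq_div_iff hn']
      linarith [hm2]
    exact irrational_pi ⟨(m : ℚ) / (n : ℚ), by push_cast [hpi]; ring⟩
  rw [← Measure.measure_univ_eq_zero]
  refine le_antisymm ?_ (by simp)
  calc μ Set.univ ≤ μ ({x : ℝ | ¬ (1 - Real.cos (1 * x) = 0)} ∪ {x : ℝ | ¬ (1 - Real.cos (Real.pi * x) = 0)} ∪ {0}) := measure_mono hcover
    _ ≤ μ ({x : ℝ | ¬ (1 - Real.cos (1 * x) = 0)} ∪ {x : ℝ | ¬ (1 - Real.cos (Real.pi * x) = 0)}) + μ {0} := measure_union_le _ _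
    _ ≤ (μ {x : ℝ | ¬ (1 - Real.cos (1 * x) = 0)} + μ {x : ℝ | ¬ (1 - Real.cos (Real.pi * x) = 0)}) + μ {0} := by
        gcongr; exact measure_union_le _ _
    _ = 0 := by rw [h1, h2, hμ0]; simp

lemma aux_mult_power (f : ℝ → ℝ) (hpos : ∀ c : ℝ, 0 < c → 0 < f c)
    (hcont : ContinuousOn f (Set.Ioi 0))
    (hmul : ∀ c s : ℝ, 0 < c → 0 < s → f (c * s) = f c * f s) :
    ∃ β : ℝ, ∀ c : ℝ, 0 < c → f c = c ^ β := by
  set F : ℝ → ℝ := fun x => Real.log (f (Real.exp x)) with hF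
  have hFadd : ∀ x y : ℝ, F (x + y) = F x + F y := by
    intro x y
    simp only [hF]
    rw [Real.exp_add, hmul _ _ (Real.exp_pos x) (Real.exp_pos y),
      Real.log_mul (ne_of_gt (hpos _ (Real.exp_pos x))) (ne_of_gt (hpos _ (Real.exp_pos y)))]
  have hfe : Continuous fun x : ℝ => f (Real.exp x) :=
    hcont.comp_continuous Real.continuous_exp fun x => Set.mem_Ioi.mpr (Real.exp_pos x)
  have hFcont : Continuous F :=
    hfe.log fun x => ne_of_gt (hpos _ (Real.exp_pos x))
  set φ : ℝ →+ ℝ := AddMonoidHom.mk' F hFadd with hφ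
  have hlin : ∀ x : ℝ, F x = x * F 1 := by
    intro x
    have := (φ.toRealLinearMap hFcont).map_smul x 1
    have h1 : φ.toRealLinearMap hFcont 1 = F 1 := rfl
    have h2 : φ.toRealLinearMap hFcont (x • (1:ℝ)) = F x := by
      rw [smul_eq_mul, mul_one]; rfl
    rw [h2, h1] at this
    simpa using this
  refine ⟨F 1, fun c hc => ?_⟩
  have h3 : F (Real.log c) = Real.log (f c) := by
    simp only [hF, Real.exp_log hc]
  have h4 : Real.log (f c) = Real.log c * F 1 := by rw [← h3, hlin]
  have h5 : f c = Real.exp (Real.log c * F 1) := by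
    rw [← h4, Real.exp_log (hpos c hc)]
  rw [h5, Real.rpow_def_of_pos hc]
lemma aux_key (μ : Measure ℝ)
    (hlevy : ∫⁻ x, ENNReal.ofReal (min 1 (x ^ 2)) ∂μ < ⊤)
    (hμ0 : μ {0} = 0) (hμne : μ ≠ 0) (v : ℝ) (hv : 0 < v)
    (A B u w : ℝ) (hA : 0 < A) (hB : 0 < B) (hu : 0 < u) (hw : 0 < w)
    (hE : ∀ θ : ℝ, A * (v / 2 * (u * θ) ^ 2 + ∫ x, (1 - Real.cos ((u * θ) * x)) ∂μ)
      = B * (v / 2 * (w * θ) ^ 2 + ∫ x, (1 - Real.cos ((w * θ) * x)) ∂μ)) :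
    u = w ∧ A = B := by
  have hR : ∀ s t : ℝ, s = t →
      (∫ x, (1 - Real.cos (s * x)) ∂μ) = ∫ x, (1 - Real.cos (t * x)) ∂μ := by
    rintro s t rfl; rfl
  -- limit of R(u θ)/θ²
  have hRu : ∀ u : ℝ, 0 < u →
      Tendsto (fun θ : ℝ => (∫ x, (1 - Real.cos ((u * θ) * x)) ∂μ) / θ ^ 2) atTop (𝓝 0) := by
    intro u hu
    have h1 : Tendsto (fun θ : ℝ => (∫ x, (1 - Real.cos ((u * θ) * x)) ∂μ) / (u * θ) ^ 2)
        atTop (𝓝 0) := by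
      have := (aux_tendsto_R μ hlevy).comp (tendsto_id.const_mul_atTop hu)
      exact this
    have h2 := h1.const_mul (u ^ 2)
    rw [mul_zero] at h2
    refine h2.congr' ?_
    filter_upwards [eventually_gt_atTop (0:ℝ)] with θ hθ
    have : (u * θ) ^ 2 = u ^ 2 * θ ^ 2 := by ring
    rw [this]
    field_simp
  -- the limits
  have tlim : ∀ (A u : ℝ), 0 < u →
      Tendsto (fun θ : ℝ => A * (v / 2 * (u * θ) ^ 2 + ∫ x, (1 - Real.cos ((u * θ) * x)) ∂μ) / θ ^ 2)
        atTop (𝓝 (A * (v / 2 * u ^ 2))) := by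
    intro A u hu
    have base := (tendsto_const_nhds (x := A * (v / 2 * u ^ 2)) (f := atTop)).add ((hRu u hu).const_mul A)
    rw [mul_zero, add_zero] at base
    refine (base.congr' ?_)
    filter_upwards [eventually_gt_atTop (0:ℝ)] with θ hθ
    have hθ2 : θ ^ 2 ≠ 0 := by positivity
    field_simp
  have t1 := tlim A u hu
  have t2 := tlim B w hw
  have t1' : Tendsto (fun θ : ℝ => B * (v / 2 * (w * θ) ^ 2 + ∫ x, (1 - Real.cos ((w * θ) * x)) ∂μ) / θ ^ 2)
      atTop (𝓝 (A * (v / 2 * u ^ 2))) := t1.congr fun θ => by rw [hE θ]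
  have hAB' : A * (v / 2 * u ^ 2) = B * (v / 2 * w ^ 2) := tendsto_nhds_unique t1' t2
  have hAB : A * u ^ 2 = B * w ^ 2 := by
    have h : (v / 2) * (A * u ^ 2) = (v / 2) * (B * w ^ 2) := by linear_combination hAB'
    exact mul_left_cancel₀ (by positivity) h
  have hRth : ∀ θ : ℝ, A * (∫ x, (1 - Real.cos ((u * θ) * x)) ∂μ)
      = B * (∫ x, (1 - Real.cos ((w * θ) * x)) ∂μ) := by
    intro θ
    linear_combination hE θ - (v / 2 * θ ^ 2) * hAB
  -- key functional equation step, parametrized to handle both orders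
  have main : ∀ (A B u w : ℝ), 0 < A → 0 < B → 0 < u → 0 < w →
      (∀ θ : ℝ, A * (∫ x, (1 - Real.cos ((u * θ) * x)) ∂μ)
        = B * (∫ x, (1 - Real.cos ((w * θ) * x)) ∂μ)) →
      A * u ^ 2 = B * w ^ 2 → u < w → False := by
    intro A B u w hA hB hu hw hRth hAB hlt
    have hu0 : u ≠ 0 := ne_of_gt hu
    set r : ℝ := w / u with hrdef
    have hr : 1 < r := (one_lt_div hu).mpr hlt
    have key : ∀ s : ℝ, (∫ x, (1 - Real.cos ((r * s) * x)) ∂μ)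
        = r ^ 2 * ∫ x, (1 - Real.cos (s * x)) ∂μ := by
      intro s
      have h1 := hRth (s / u)
      rw [hR (u * (s / u)) s (by field_simp), hR (w * (s / u)) (r * s) (by rw [hrdef]; field_simp; try ring)] at h1
      have hwru : w = r * u := by rw [hrdef, div_mul_cancel₀ w hu0]
      have h4 : A * u ^ 2 = B * r ^ 2 * u ^ 2 := by rw [hAB, hwru]; ring
      have e3 : A = B * r ^ 2 := mul_right_cancel₀ (by positivity) h4
      rw [e3] at h1
      have h5 : B * (r ^ 2 * ∫ x, (1 - Real.cos (s * x)) ∂μ)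
          = B * ∫ x, (1 - Real.cos ((r * s) * x)) ∂μ := by linear_combination h1
      exact (mul_left_cancel₀ (ne_of_gt hB) h5).symm
    exact hμne (aux_mu_zero μ hlevy hμ0 (aux_R_zero μ hlevy r hr key))
  have huw : u = w := by
    rcases lt_trichotomy u w with h | h | h
    · exact absurd h (fun h => main A B u w hA hB hu hw hRth hAB h)
    · exact h
    · exact absurd h (fun h => main B A w u hB hA hw hu (fun θ => (hRth θ).symm) hAB.symm h)
  refine ⟨huw, ?_⟩
  rw [huw] at hAB
  exact mul_right_cancel₀ (by positivity : (w:ℝ) ^ 2 ≠ 0) hAB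

end AuxLemmas

lemma aux_ofReal_mul_re (r : ℝ) (z : ℂ) : ((r : ℂ) * z).re = r * z.re := by
  simp [Complex.mul_re]

/-- If an infinitely divisible process indexed by `(0,∞)` is
`(f,g)`-dilatively stable and `X₁` is non-Gaussian but has a nontrivial Gaussian component
in its Lévy–Khintchine representation, then `f` and `g` are uniquely determined
power functions. -/
theorem fg_power_of_gaussian_component
    {Ω : Type*} [MeasurableSpace Ω] (P : Measure Ω) [IsProbabilityMeasure P]
    (X : ℝ → Ω → ℝ) (hX : ∀ t : ℝ, 0 < t → Measurable (X t))
    (ψ : ∀ k : ℕ, (Fin k → ℝ) → (Fin k → ℝ) → ℂ)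
    (hψ0 : ∀ (k : ℕ) (t : Fin k → ℝ), (∀ i, 0 < t i) → ψ k t 0 = 0)
    (hψcont : ∀ (k : ℕ) (t : Fin k → ℝ), (∀ i, 0 < t i) → Continuous (ψ k t))
    (hψchar : ∀ (k : ℕ) (t : Fin k → ℝ), (∀ i, 0 < t i) → ∀ θ : Fin k → ℝ,
      ∫ ω, Complex.exp (Complex.I * ∑ j, (θ j : ℂ) * (X (t j) ω : ℂ)) ∂P
        = Complex.exp (-ψ k t θ))
    (hID : ∀ (k : ℕ) (t : Fin k → ℝ), (∀ i, 0 < t i) → ∀ n : ℕ, 0 < n →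
      ∃ ρ : Measure (Fin k → ℝ), IsProbabilityMeasure ρ ∧
        convPow ρ n = Measure.map (fun ω i => X (t i) ω) P)
    (f g : ℝ → ℝ)
    (hfpos : ∀ c : ℝ, 0 < c → 0 < f c) (hgpos : ∀ c : ℝ, 0 < c → 0 < g c)
    (hfcont : ContinuousOn f (Set.Ioi 0)) (hgcont : ContinuousOn g (Set.Ioi 0))
    -- (f,g)-dilative stability
    (hDS : ∀ c : ℝ, 0 < c → ∀ (k : ℕ) (t : Fin k → ℝ), (∀ i, 0 < t i) →
      ∀ θ : Fin k → ℝ,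
        ψ k (fun i => c * t i) θ = ((g c : ℝ) : ℂ) * ψ k t (fun i => f c * θ i))
    -- Lévy–Khintchine representation of `ψ₁` with nontrivial Gaussian part `v = σ² > 0`
    -- and nonzero Lévy measure `μ`
    (a v : ℝ) (hv : 0 < v)
    (μ : Measure ℝ) (hμ0 : μ {0} = 0) (hμne : μ ≠ 0)
    (hlevy : ∫⁻ x, ENNReal.ofReal (min 1 (x ^ 2)) ∂μ < ⊤)
    (hLK : ∀ θ : ℝ,
      ψ 1 (fun _ => 1) (fun _ => θ)
        = -(Complex.I * (a : ℂ) * (θ : ℂ)) + (1 / 2 : ℂ) * (v : ℂ) * (θ : ℂ) ^ 2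
          + ∫ x : ℝ,
              (1 - Complex.exp (Complex.I * (θ : ℂ) * (x : ℂ))
                + Complex.I * (θ : ℂ) * (x : ℂ) / (1 + (x : ℂ) ^ 2)) ∂μ) :
    ∃! p : ℝ × ℝ, ∀ c : ℝ, 0 < c → f c = c ^ p.1 ∧ g c = c ^ p.2 := by
  -- real part of ψ₁
  have hRe : ∀ θ : ℝ, (ψ 1 (fun _ => 1) (fun _ => θ)).re
      = v / 2 * θ ^ 2 + ∫ x, (1 - Real.cos (θ * x)) ∂μ := by
    intro θ
    rw [hLK θ]
    have hint := aux_LK_integrable μ hlevy θ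
    have hI : (∫ x : ℝ,
        (1 - Complex.exp (Complex.I * (θ : ℂ) * (x : ℂ))
          + Complex.I * (θ : ℂ) * (x : ℂ) / (1 + (x : ℂ) ^ 2)) ∂μ).re
        = ∫ x, (1 - Real.cos (θ * x)) ∂μ := by
      rw [show (∫ x : ℝ,
          (1 - Complex.exp (Complex.I * (θ : ℂ) * (x : ℂ))
            + Complex.I * (θ : ℂ) * (x : ℂ) / (1 + (x : ℂ) ^ 2)) ∂μ) = ∫ x, LKint θ x ∂μ from rfl]
      have h := integral_re hint
      simp only [RCLike.re_to_complex] at h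
      rw [← h]
      exact integral_congr_ae (ae_of_all _ fun x => aux_LK_re θ x)
    have e1 : (-(Complex.I * (a : ℂ) * (θ : ℂ))).re = 0 := by simp [Complex.mul_re]
    have e2 : ((1 / 2 : ℂ) * (v : ℂ) * (θ : ℂ) ^ 2).re = v / 2 * θ ^ 2 := by
      rw [show (1 / 2 : ℂ) * (v : ℂ) * (θ : ℂ) ^ 2 = ((v / 2 * θ ^ 2 : ℝ) : ℂ) from by
        push_cast; ring]
      rw [Complex.ofReal_re]
    rw [Complex.add_re, Complex.add_re, e1, e2, hI]
    ring
  -- step 1 : one-dimensional dilative stability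
  have hstep1 : ∀ c : ℝ, 0 < c → ∀ θ : ℝ,
      ψ 1 (fun _ => c) (fun _ => θ) = ((g c : ℝ) : ℂ) * ψ 1 (fun _ => 1) (fun _ => f c * θ) := by
    intro c hc θ
    have h := hDS c hc 1 (fun _ => 1) (fun _ => one_pos) (fun _ => θ)
    simpa using h
  -- step 2 : multiplicativity equation
  have hmain : ∀ c s : ℝ, 0 < c → 0 < s → ∀ θ : ℝ,
      ((g (c * s) : ℝ) : ℂ) * ψ 1 (fun _ => 1) (fun _ => f (c * s) * θ)
        = ((g c * g s : ℝ) : ℂ) * ψ 1 (fun _ => 1) (fun _ => (f c * f s) * θ) := by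
    intro c s hc hs θ
    have l2 := hDS c hc 1 (fun _ => s) (fun _ => hs) (fun _ => θ)
    calc ((g (c * s) : ℝ) : ℂ) * ψ 1 (fun _ => 1) (fun _ => f (c * s) * θ)
        = ψ 1 (fun _ => c * s) (fun _ => θ) := (hstep1 (c * s) (mul_pos hc hs) θ).symm
      _ = ((g c : ℝ) : ℂ) * ψ 1 (fun _ => s) (fun _ => f c * θ) := l2
      _ = ((g c : ℝ) : ℂ) * (((g s : ℝ) : ℂ) * ψ 1 (fun _ => 1) (fun _ => f s * (f c * θ))) := by
          rw [hstep1 s hs (f c * θ)]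
      _ = ((g c * g s : ℝ) : ℂ) * ψ 1 (fun _ => 1) (fun _ => (f c * f s) * θ) := by
          rw [show f s * (f c * θ) = (f c * f s) * θ from by ring]
          push_cast
          ring
  -- multiplicativity of f and g
  have hkey : ∀ c s : ℝ, 0 < c → 0 < s →
      f (c * s) = f c * f s ∧ g (c * s) = g c * g s := by
    intro c s hc hs
    have hE : ∀ θ : ℝ,
        g (c * s) * (v / 2 * (f (c * s) * θ) ^ 2 + ∫ x, (1 - Real.cos ((f (c * s) * θ) * x)) ∂μ)
          = (g c * g s) * (v / 2 * ((f c * f s) * θ) ^ 2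
            + ∫ x, (1 - Real.cos (((f c * f s) * θ) * x)) ∂μ) := by
      intro θ
      have h := congrArg Complex.re (hmain c s hc hs θ)
      rw [aux_ofReal_mul_re, aux_ofReal_mul_re, hRe, hRe] at h
      exact h
    exact (aux_key μ hlevy hμ0 hμne v hv _ _ _ _ (hgpos _ (mul_pos hc hs))
      (mul_pos (hgpos c hc) (hgpos s hs)) (hfpos _ (mul_pos hc hs))
      (mul_pos (hfpos c hc) (hfpos s hs)) hE).symm.imp id id |>.symm
        |> fun h => ⟨h.1, h.2⟩
  obtain ⟨β, hβ⟩ := aux_mult_power f hfpos hfcont (fun c s hc hs => (hkey c s hc hs).1)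
  obtain ⟨γ, hγ⟩ := aux_mult_power g hgpos hgcont (fun c s hc hs => (hkey c s hc hs).2)
  refine ⟨(β, γ), fun c hc => ⟨hβ c hc, hγ c hc⟩, ?_⟩
  intro q hq
  have hlogtwo : Real.log 2 ≠ 0 := ne_of_gt (Real.log_pos one_lt_two)
  have h2 := hq 2 (by norm_num)
  have hexp : ∀ y z : ℝ, (2:ℝ) ^ y = (2:ℝ) ^ z → y = z := by
    intro y z h
    have := congrArg Real.log h
    rw [Real.log_rpow (by norm_num), Real.log_rpow (by norm_num)] at this
    exact mul_right_cancel₀ hlogtwo this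
  have e1 : q.1 = β := hexp _ _ (by rw [← h2.1, hβ 2 (by norm_num)])
  have e2 : q.2 = γ := hexp _ _ (by rw [← h2.2, hγ 2 (by norm_num)])
  exact Prod.ext e1 e2
end

section
/- Let (X_t)_{t∈(0,∞)} be a real-valued stochastic process whose finite-dimensional distributions are infinitely divisible, with characteristic exponents ψ_{t_1,…,t_k}, and suppose X is (f,g)-dilatively stable for continuous functions f, g : (0,∞) → (0,∞). If E(X_1²) < ∞, E(X_1) ≠ 0 and Var(X_1) > 0, then there exist unique β, γ ∈ ℝ such that f(T) = T^β and g(T) = T^γ for all T > 0. -/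
open MeasureTheory ProbabilityTheory Filter Topology

section AuxiliaryLemmas
open Complex

-- cubic bound
lemma auxS_bound (z : ℂ) (h : ‖z‖ ≤ 1) :
    ‖Complex.exp z - 1 - z - z ^ 2 / 2‖ ≤ ‖z‖ ^ 3 := by
  have h3 : (0:ℕ) < 3 := by norm_num
  have := Complex.exp_bound (x := z) (by simpa using h) h3
  have hsum : ∑ m ∈ Finset.range 3, z ^ m / m.factorial = 1 + z + z ^ 2 / 2 := by
    simp [Finset.sum_range_succ, Nat.factorial]
    try ring
  rw [hsum] at this
  have hc : ‖z‖ ^ 3 * ((3+1 : ℕ) * ((Nat.factorial 3 * 3 : ℕ) : ℝ)⁻¹) ≤ ‖z‖ ^ 3 := by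
    simp [Nat.factorial]
    nlinarith [pow_nonneg (norm_nonneg z) 3]
  calc ‖Complex.exp z - 1 - z - z ^ 2 / 2‖
      = ‖Complex.exp z - (1 + z + z ^ 2 / 2)‖ := by
        ring_nf
    _ ≤ _ := by
        refine le_trans (le_trans (le_of_eq rfl) ?_) hc
        simpa using this

lemma aux_absItz (t : ℝ) : ‖Complex.I * (t:ℂ)‖ = |t| := by
  simp

lemma aux_exp_sub_one (t : ℝ) : ‖Complex.exp (Complex.I * t) - 1‖ ≤ 2 * |t| := by
  rcases le_or_gt (|t|) 1 with h | h
  · have := Complex.norm_exp_sub_one_le (x := Complex.I * t) (by simpa [aux_absItz] using h)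
    simpa [aux_absItz] using this
  · have h1 : ‖Complex.exp (Complex.I * t)‖ = 1 := by
      simp [Complex.norm_exp]
    calc ‖Complex.exp (Complex.I * t) - 1‖ ≤ ‖Complex.exp (Complex.I * t)‖ + ‖(1:ℂ)‖ := norm_sub_le _ _
      _ = 2 := by rw [h1]; norm_num
      _ ≤ 2 * |t| := by nlinarith

lemma aux_exp_sub_one_sub (t : ℝ) :
    ‖Complex.exp (Complex.I * t) - 1 - Complex.I * t‖ ≤ 3 * t ^ 2 := by
  rcases le_or_gt (|t|) 1 with h | h
  · have := Complex.norm_exp_sub_one_sub_id_le (x := Complex.I * t)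
      (by simpa [aux_absItz] using h)
    have h2 : ‖Complex.I * (t:ℂ)‖ ^ 2 = t ^ 2 := by
      have : ‖Complex.I * (t:ℂ)‖ = |t| := by simpa using aux_absItz t
      rw [this, _root_.sq_abs]
    rw [h2] at this
    calc ‖Complex.exp (Complex.I * t) - 1 - Complex.I * t‖ ≤ t ^ 2 := by
          simpa using this
      _ ≤ 3 * t ^ 2 := by nlinarith
  · have h1 : ‖Complex.exp (Complex.I * t)‖ = 1 := by
      simp [Complex.norm_exp]
    have ht2 : (1:ℝ) ≤ t ^ 2 := by nlinarith [_root_.sq_abs t]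
    calc ‖Complex.exp (Complex.I * t) - 1 - Complex.I * t‖
        ≤ ‖Complex.exp (Complex.I * t) - 1‖ + ‖Complex.I * t‖ := norm_sub_le _ _
      _ ≤ (‖Complex.exp (Complex.I * t)‖ + ‖(1:ℂ)‖) + |t| := by
          gcongr
          · exact norm_sub_le _ _
          · exact le_of_eq (aux_absItz t)
      _ = 2 + |t| := by rw [h1]; norm_num
      _ ≤ 3 * t ^ 2 := by nlinarith [_root_.sq_abs t, abs_nonneg t]

lemma aux_exp_cubic (t : ℝ) (h : |t| ≤ 1) :
    ‖Complex.exp (Complex.I * t) - 1 - Complex.I * t - (Complex.I * t) ^ 2 / 2‖ ≤ |t| ^ 3 := by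
  have := auxS_bound (Complex.I * t) (by rw [aux_absItz]; exact h)
  rwa [aux_absItz] at this

lemma aux_exp_cubic' (t : ℝ) (h : |t| ≤ 1) :
    ‖Complex.exp (Complex.I * t) - 1 - Complex.I * t + (t:ℂ) ^ 2 / 2‖ ≤ |t| ^ 3 := by
  have h2 : (Complex.I * t) ^ 2 / 2 = -((t:ℂ) ^ 2 / 2) := by
    rw [mul_pow, Complex.I_sq]; ring
  have := aux_exp_cubic t h
  rw [h2] at this
  simpa [sub_neg_eq_add] using this

lemma aux_cast (θ x : ℝ) : Complex.I * ((θ:ℂ) * (x:ℂ)) = Complex.I * ((θ * x : ℝ) : ℂ) := by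
  push_cast; ring

lemma char_taylor {Ω : Type*} [MeasurableSpace Ω] (P : Measure Ω) [IsProbabilityMeasure P]
    (Y : Ω → ℝ) (hY : Measurable Y) (hL2 : Integrable (fun ω => Y ω ^ 2) P) :
    Tendsto (fun θ : ℝ => ((∫ ω, Complex.exp (Complex.I * (θ * Y ω)) ∂P) - 1) / (θ:ℂ))
      (𝓝[≠] 0) (𝓝 (Complex.I * ((∫ ω, Y ω ∂P : ℝ) : ℂ))) ∧
    Tendsto (fun θ : ℝ => ((∫ ω, Complex.exp (Complex.I * (θ * Y ω)) ∂P) - 1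
        - Complex.I * ((∫ ω, Y ω ∂P : ℝ) : ℂ) * (θ:ℂ)) / (θ:ℂ) ^ 2)
      (𝓝[≠] 0) (𝓝 (-((∫ ω, Y ω ^ 2 ∂P : ℝ) : ℂ) / 2)) := by
  have hYae : AEStronglyMeasurable Y P := hY.aestronglyMeasurable
  have hYint : Integrable Y P := ((memLp_two_iff_integrable_sq hYae).2 hL2).integrable one_le_two
  have hmeas0 : ∀ θ : ℝ, Measurable (fun ω => Complex.exp (Complex.I * (θ * Y ω))) :=
    fun θ => Complex.measurable_exp.comp
      (measurable_const.mul ((Complex.measurable_ofReal.comp hY).const_mul _))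
  have hmeas : ∀ θ : ℝ, AEStronglyMeasurable (fun ω => Complex.exp (Complex.I * (θ * Y ω))) P :=
    fun θ => (hmeas0 θ).aestronglyMeasurable
  have hexpInt : ∀ θ : ℝ, Integrable (fun ω => Complex.exp (Complex.I * (θ * Y ω))) P := by
    intro θ
    refine Integrable.mono' (integrable_const 1) (hmeas θ) ?_
    filter_upwards with ω
    rw [aux_cast]
    simp [Complex.norm_exp]
  constructor
  · have lim1 : Tendsto (fun θ : ℝ =>
        ∫ ω, (Complex.exp (Complex.I * (θ * Y ω)) - 1) / (θ:ℂ) ∂P)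
        (𝓝[≠] (0:ℝ)) (𝓝 (∫ ω, Complex.I * (Y ω : ℂ) ∂P)) := by
      refine tendsto_integral_filter_of_dominated_convergence (fun ω => 2 * |Y ω|) ?_ ?_ ?_ ?_
      · filter_upwards with θ
        exact (((hmeas0 θ).sub measurable_const).div_const _).aestronglyMeasurable
      · filter_upwards [self_mem_nhdsWithin] with θ hθ
        have hθ0 : θ ≠ 0 := hθ
        filter_upwards with ω
        rw [norm_div, Complex.norm_real, Real.norm_eq_abs, div_le_iff₀ (abs_pos.2 hθ0), aux_cast]
        exact le_trans (aux_exp_sub_one (θ * Y ω)) (le_of_eq (by rw [abs_mul]; ring))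
      · exact hYint.abs.const_mul 2
      · filter_upwards with ω
        rw [← tendsto_sub_nhds_zero_iff]
        refine squeeze_zero_norm' (a := fun θ : ℝ => 3 * Y ω ^ 2 * |θ|) ?_ ?_
        · filter_upwards [self_mem_nhdsWithin] with θ hθ
          have hθ0 : θ ≠ 0 := hθ
          have hθc : (θ:ℂ) ≠ 0 := by exact_mod_cast hθ0
          have key : (Complex.exp (Complex.I * (θ * Y ω)) - 1) / (θ:ℂ) - Complex.I * (Y ω : ℂ)
              = (Complex.exp (Complex.I * (θ * Y ω)) - 1 - Complex.I * ((θ:ℂ) * (Y ω : ℂ)))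
                / (θ:ℂ) := by
            field_simp
          rw [key, norm_div, Complex.norm_real, Real.norm_eq_abs, div_le_iff₀ (abs_pos.2 hθ0),
            aux_cast]
          refine le_trans (aux_exp_sub_one_sub (θ * Y ω)) (le_of_eq ?_)
          rw [mul_pow, ← _root_.sq_abs θ]
          ring
        · have : Tendsto (fun θ : ℝ => 3 * Y ω ^ 2 * |θ|) (𝓝 0) (𝓝 (3 * Y ω ^ 2 * |0|)) :=
            (continuous_const.mul _root_.continuous_abs).tendsto 0
          simpa using this.mono_left nhdsWithin_le_nhds
    have hI1 : (∫ ω, Complex.I * (Y ω : ℂ) ∂P) = Complex.I * ((∫ ω, Y ω ∂P : ℝ) : ℂ) := by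
      rw [integral_const_mul,
        show (∫ a, ((Y a : ℝ) : ℂ) ∂P) = ((∫ ω, Y ω ∂P : ℝ) : ℂ) from integral_ofReal]
    rw [hI1] at lim1
    refine Tendsto.congr' ?_ lim1
    filter_upwards [self_mem_nhdsWithin] with θ hθ
    rw [integral_div, integral_sub (hexpInt θ) (integrable_const 1)]
    simp
  · have lim2 : Tendsto (fun θ : ℝ =>
        ∫ ω, (Complex.exp (Complex.I * (θ * Y ω)) - 1 - Complex.I * ((θ:ℂ) * (Y ω : ℂ)))
          / (θ:ℂ) ^ 2 ∂P)
        (𝓝[≠] (0:ℝ)) (𝓝 (∫ ω, -((Y ω : ℂ)) ^ 2 / 2 ∂P)) := by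
      refine tendsto_integral_filter_of_dominated_convergence (fun ω => 3 * Y ω ^ 2) ?_ ?_ ?_ ?_
      · filter_upwards with θ
        exact ((((hmeas0 θ).sub measurable_const).sub
          (measurable_const.mul ((Complex.measurable_ofReal.comp hY).const_mul
            _))).div_const _).aestronglyMeasurable
      · filter_upwards [self_mem_nhdsWithin] with θ hθ
        have hθ0 : θ ≠ 0 := hθ
        filter_upwards with ω
        rw [norm_div, norm_pow, Complex.norm_real, Real.norm_eq_abs,
          div_le_iff₀ (by positivity : (0:ℝ) < |θ| ^ 2), aux_cast]
        refine le_trans (aux_exp_sub_one_sub (θ * Y ω)) (le_of_eq ?_)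
        rw [mul_pow, ← _root_.sq_abs θ]
        ring
      · exact hL2.const_mul 3
      · filter_upwards with ω
        rw [← tendsto_sub_nhds_zero_iff]
        refine squeeze_zero_norm' (a := fun θ : ℝ => |Y ω| ^ 3 * |θ|) ?_ ?_
        · have hev : ∀ᶠ θ : ℝ in 𝓝[≠] 0, |θ * Y ω| ≤ 1 := by
            have ht : Tendsto (fun θ : ℝ => |θ * Y ω|) (𝓝 0) (𝓝 0) := by
              have hc : Continuous (fun θ : ℝ => |θ * Y ω|) := by fun_prop
              simpa using hc.tendsto 0
            exact (ht.eventually_le_const one_pos).filter_mono nhdsWithin_le_nhds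
          filter_upwards [self_mem_nhdsWithin, hev] with θ hθ hsmall
          have hθ0 : θ ≠ 0 := hθ
          have hθc : (θ:ℂ) ≠ 0 := by exact_mod_cast hθ0
          have key : (Complex.exp (Complex.I * (θ * Y ω)) - 1 - Complex.I * ((θ:ℂ) * (Y ω : ℂ)))
              / (θ:ℂ) ^ 2 - (-((Y ω : ℂ)) ^ 2 / 2)
              = (Complex.exp (Complex.I * (θ * Y ω)) - 1 - Complex.I * ((θ:ℂ) * (Y ω : ℂ))
                + ((θ:ℂ) * (Y ω : ℂ)) ^ 2 / 2) / (θ:ℂ) ^ 2 := by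
            field_simp
            ring
          rw [key, norm_div, norm_pow, Complex.norm_real, Real.norm_eq_abs,
            div_le_iff₀ (by positivity : (0:ℝ) < |θ| ^ 2), aux_cast]
          have hcast2 : ((θ:ℂ) * (Y ω : ℂ)) ^ 2 = (((θ * Y ω : ℝ)) : ℂ) ^ 2 := by push_cast; ring
          rw [hcast2]
          refine le_trans (aux_exp_cubic' (θ * Y ω) hsmall) (le_of_eq ?_)
          rw [abs_mul]
          ring
        · have : Tendsto (fun θ : ℝ => |Y ω| ^ 3 * |θ|) (𝓝 0) (𝓝 (|Y ω| ^ 3 * |0|)) :=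
            (continuous_const.mul _root_.continuous_abs).tendsto 0
          simpa using this.mono_left nhdsWithin_le_nhds
    have hI2 : (∫ ω, -((Y ω : ℂ)) ^ 2 / 2 ∂P) = -((∫ ω, Y ω ^ 2 ∂P : ℝ) : ℂ) / 2 := by
      have : (fun ω => -((Y ω : ℂ)) ^ 2 / 2) = fun ω => (-(1:ℂ)/2) * (((Y ω ^ 2 : ℝ)) : ℂ) := by
        funext ω; push_cast; ring
      rw [this, integral_const_mul,
        show (∫ a, ((Y a ^ 2 : ℝ) : ℂ) ∂P) = ((∫ ω, Y ω ^ 2 ∂P : ℝ) : ℂ) from integral_ofReal]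
      ring
    rw [hI2] at lim2
    refine Tendsto.congr' ?_ lim2
    filter_upwards [self_mem_nhdsWithin] with θ hθ
    have hint2 : Integrable (fun ω => Complex.I * ((θ:ℂ) * (Y ω : ℂ))) P := by
      have : Integrable (fun ω => ((Y ω : ℂ))) P := hYint.ofReal
      simpa [mul_assoc] using (this.const_mul ((Complex.I * θ)))
    have hsub1 : Integrable (fun ω => Complex.exp (Complex.I * (θ * Y ω)) - 1) P :=
      (hexpInt θ).sub (integrable_const 1)
    have h1c : (∫ _ω, (1:ℂ) ∂P) = 1 := by simp
    have hY2 : ∫ ω, Complex.I * ((θ:ℂ) * (Y ω : ℂ)) ∂P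
        = Complex.I * ((θ:ℂ) * ((∫ ω, Y ω ∂P : ℝ) : ℂ)) := by
      rw [integral_const_mul, integral_const_mul,
        show (∫ a, ((Y a : ℝ) : ℂ) ∂P) = ((∫ ω, Y ω ∂P : ℝ) : ℂ) from integral_ofReal]
    rw [integral_div, integral_sub hsub1 hint2,
      integral_sub (hexpInt θ) (integrable_const 1), h1c, hY2]
    ring_nf

lemma psi_limits {u φ : ℝ → ℂ} (hu0 : u 0 = 0) (hucont : Continuous u)
    (hexp : ∀ θ : ℝ, Complex.exp (-u θ) = φ θ) {μC q : ℂ}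
    (h1 : Tendsto (fun θ : ℝ => (φ θ - 1) / (θ:ℂ)) (𝓝[≠] 0) (𝓝 μC))
    (h2 : Tendsto (fun θ : ℝ => (φ θ - 1 - μC * θ) / (θ:ℂ) ^ 2) (𝓝[≠] 0) (𝓝 q)) :
    Tendsto (fun θ : ℝ => u θ / (θ:ℂ)) (𝓝[≠] 0) (𝓝 (-μC)) ∧
    Tendsto (fun θ : ℝ => (u θ + μC * θ) / (θ:ℂ) ^ 2) (𝓝[≠] 0) (𝓝 (-q + μC ^ 2 / 2)) := by
  set K : ℝ := 2 * (‖μC‖ + 1) with hK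
  have hKpos : 0 < K := by positivity
  have hu : ∀ θ : ℝ, u θ = -(φ θ - 1) + (Complex.exp (-u θ) - 1 - (-u θ)) := by
    intro θ
    rw [← hexp θ]
    ring
  have hsmall : ∀ᶠ θ : ℝ in 𝓝[≠] 0, ‖u θ‖ ≤ 1 / 2 := by
    have ht : Tendsto (fun θ : ℝ => ‖u θ‖) (𝓝 0) (𝓝 0) := by
      simpa [hu0] using (hucont.tendsto 0).norm
    exact (ht.eventually_le_const (by norm_num)).filter_mono nhdsWithin_le_nhds
  have hA : ∀ᶠ θ : ℝ in 𝓝[≠] 0, ‖(φ θ - 1) / (θ:ℂ)‖ ≤ ‖μC‖ + 1 :=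
    h1.norm.eventually_le_const (lt_add_one _)
  have hKb : ∀ᶠ θ : ℝ in 𝓝[≠] 0, ‖u θ‖ ≤ K * |θ| := by
    filter_upwards [hsmall, hA, self_mem_nhdsWithin] with θ hhalf hAθ hθ
    have hθ0 : θ ≠ 0 := hθ
    have hR : ‖Complex.exp (-u θ) - 1 - (-u θ)‖ ≤ ‖u θ‖ ^ 2 := by
      have := Complex.norm_exp_sub_one_sub_id_le (x := -u θ)
        (by simpa using le_trans hhalf (by norm_num))
      simpa using this
    have hnum : ‖φ θ - 1‖ ≤ (‖μC‖ + 1) * |θ| := by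
      have hh : ‖φ θ - 1‖ = ‖(φ θ - 1) / (θ:ℂ)‖ * |θ| := by
        rw [norm_div, Complex.norm_real, Real.norm_eq_abs]
        field_simp
      rw [hh]
      exact mul_le_mul_of_nonneg_right hAθ (abs_nonneg θ)
    have hle : ‖u θ‖ ≤ ‖φ θ - 1‖ + ‖u θ‖ ^ 2 := by
      calc ‖u θ‖ = ‖-(φ θ - 1) + (Complex.exp (-u θ) - 1 - (-u θ))‖ := by rw [← hu θ]
        _ ≤ ‖-(φ θ - 1)‖ + ‖Complex.exp (-u θ) - 1 - (-u θ)‖ := norm_add_le _ _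
        _ ≤ ‖φ θ - 1‖ + ‖u θ‖ ^ 2 := by rw [norm_neg]; exact (add_le_add_iff_left _).2 hR
    have hsq : ‖u θ‖ ^ 2 ≤ (1 / 2) * ‖u θ‖ := by nlinarith [norm_nonneg (u θ)]
    rw [hK]
    nlinarith [norm_nonneg (u θ)]
  have hRterm : Tendsto (fun θ : ℝ => (Complex.exp (-u θ) - 1 - (-u θ)) / (θ:ℂ))
      (𝓝[≠] 0) (𝓝 0) := by
    refine squeeze_zero_norm' (a := fun θ : ℝ => K ^ 2 * |θ|) ?_ ?_
    · filter_upwards [hKb, hsmall, self_mem_nhdsWithin] with θ hKθ hhalf hθ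
      have hθ0 : θ ≠ 0 := hθ
      have hR : ‖Complex.exp (-u θ) - 1 - (-u θ)‖ ≤ ‖u θ‖ ^ 2 := by
        have := Complex.norm_exp_sub_one_sub_id_le (x := -u θ)
          (by simpa using le_trans hhalf (by norm_num))
        simpa using this
      rw [norm_div, Complex.norm_real, Real.norm_eq_abs, div_le_iff₀ (abs_pos.2 hθ0)]
      have h2' : ‖u θ‖ ^ 2 ≤ (K * |θ|) ^ 2 := by
        apply pow_le_pow_left₀ (norm_nonneg _) hKθ
      nlinarith [abs_nonneg θ, sq_nonneg (|θ|)]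
    · have hco : Continuous fun θ : ℝ => K ^ 2 * |θ| :=
        continuous_const.mul _root_.continuous_abs
      have := hco.tendsto 0
      simpa using this.mono_left nhdsWithin_le_nhds
  have T1 : Tendsto (fun θ : ℝ => u θ / (θ:ℂ)) (𝓝[≠] 0) (𝓝 (-μC)) := by
    have hcomb := (h1.neg.add hRterm)
    rw [add_zero] at hcomb
    refine hcomb.congr fun θ => ?_
    conv_rhs => rw [hu θ]
    rw [add_div, neg_div]
  have hSb : ∀ᶠ θ : ℝ in 𝓝[≠] 0,
      ‖Complex.exp (-u θ) - 1 - (-u θ) - (-u θ) ^ 2 / 2‖ ≤ ‖u θ‖ ^ 3 := by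
    filter_upwards [hsmall] with θ hhalf
    have := auxS_bound (-u θ) (by simpa using le_trans hhalf (by norm_num))
    simpa using this
  have hSterm : Tendsto (fun θ : ℝ =>
      (Complex.exp (-u θ) - 1 - (-u θ) - (-u θ) ^ 2 / 2) / (θ:ℂ) ^ 2) (𝓝[≠] 0) (𝓝 0) := by
    refine squeeze_zero_norm' (a := fun θ : ℝ => K ^ 3 * |θ|) ?_ ?_
    · filter_upwards [hKb, hSb, self_mem_nhdsWithin] with θ hKθ hSθ hθ
      have hθ0 : θ ≠ 0 := hθ
      rw [norm_div, norm_pow, Complex.norm_real, Real.norm_eq_abs,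
        div_le_iff₀ (by positivity : (0:ℝ) < |θ| ^ 2)]
      have h3 : ‖u θ‖ ^ 3 ≤ (K * |θ|) ^ 3 := pow_le_pow_left₀ (norm_nonneg _) hKθ 3
      calc ‖Complex.exp (-u θ) - 1 - (-u θ) - (-u θ) ^ 2 / 2‖ ≤ ‖u θ‖ ^ 3 := hSθ
        _ ≤ (K * |θ|) ^ 3 := h3
        _ ≤ K ^ 3 * |θ| * |θ| ^ 2 := by
            have : (0:ℝ) ≤ |θ| := abs_nonneg θ
            nlinarith [pow_nonneg this 3]
    · have hco : Continuous fun θ : ℝ => K ^ 3 * |θ| :=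
        continuous_const.mul _root_.continuous_abs
      have := hco.tendsto 0
      simpa using this.mono_left nhdsWithin_le_nhds
  have hsq : Tendsto (fun θ : ℝ => (u θ / (θ:ℂ)) ^ 2 / 2) (𝓝[≠] 0) (𝓝 ((-μC) ^ 2 / 2)) :=
    (T1.pow 2).div_const 2
  have T2 : Tendsto (fun θ : ℝ => (u θ + μC * θ) / (θ:ℂ) ^ 2) (𝓝[≠] 0)
      (𝓝 (-q + μC ^ 2 / 2)) := by
    have hcomb := (h2.neg.add (hsq.add hSterm))
    have hval : -q + ((-μC) ^ 2 / 2 + 0) = -q + μC ^ 2 / 2 := by ring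
    rw [hval] at hcomb
    refine hcomb.congr' ?_
    filter_upwards [self_mem_nhdsWithin] with θ hθ
    have e1 : (u θ / (θ:ℂ)) ^ 2 / 2 = (u θ ^ 2 / 2) / (θ:ℂ) ^ 2 := by
      rw [div_pow]
      ring
    rw [hexp θ, e1, ← add_div, ← neg_div, ← add_div]
    congr 1
    ring
  exact ⟨T1, T2⟩

lemma key_scaling {u : ℝ → ℂ} {μv vv : ℝ} (hμ : μv ≠ 0) (hv : 0 < vv)
    (T1 : Tendsto (fun θ : ℝ => u θ / (θ:ℂ)) (𝓝[≠] 0) (𝓝 (-(Complex.I * μv))))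
    (T2 : Tendsto (fun θ : ℝ => (u θ + Complex.I * μv * θ) / (θ:ℂ) ^ 2) (𝓝[≠] 0)
      (𝓝 ((vv : ℂ) / 2)))
    {a b s r : ℝ} (ha : 0 < a) (hb : 0 < b) (hs : 0 < s) (hr : 0 < r)
    (heq : ∀ θ : ℝ, (a:ℂ) * u (s * θ) = (b:ℂ) * u (r * θ)) : s = r ∧ a = b := by
  have hmap : ∀ {c : ℝ}, c ≠ 0 → Tendsto (fun θ : ℝ => c * θ) (𝓝[≠] 0) (𝓝[≠] 0) := by
    intro c hc
    refine tendsto_nhdsWithin_of_tendsto_nhds_of_eventually_within _ ?_ ?_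
    · have hcont : Continuous fun θ : ℝ => c * θ := continuous_const.mul continuous_id
      have := (hcont.tendsto 0).mono_left (nhdsWithin_le_nhds (s := {(0:ℝ)}ᶜ))
      simpa using this
    · filter_upwards [self_mem_nhdsWithin] with θ hθ
      exact mul_ne_zero hc hθ
  have scale1 : ∀ {c : ℝ}, 0 < c →
      Tendsto (fun θ : ℝ => u (c * θ) / (θ:ℂ)) (𝓝[≠] 0) (𝓝 ((c:ℂ) * -(Complex.I * μv))) := by
    intro c hc
    have hcomp := T1.comp (hmap hc.ne')
    have hmul := (tendsto_const_nhds (x := (c:ℂ))).mul hcomp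
    refine hmul.congr' ?_
    filter_upwards [self_mem_nhdsWithin] with θ hθ
    have hθ0 : θ ≠ 0 := hθ
    have hθc : (θ:ℂ) ≠ 0 := by exact_mod_cast hθ0
    have hcc : (c:ℂ) ≠ 0 := by exact_mod_cast hc.ne'
    show (c:ℂ) * (u (c * θ) / ((c * θ : ℝ) : ℂ)) = u (c * θ) / (θ:ℂ)
    push_cast
    field_simp
  have scale2 : ∀ {c : ℝ}, 0 < c →
      Tendsto (fun θ : ℝ => (u (c * θ) + Complex.I * μv * ((c * θ : ℝ) : ℂ)) / (θ:ℂ) ^ 2)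
        (𝓝[≠] 0) (𝓝 ((c:ℂ) ^ 2 * ((vv : ℂ) / 2))) := by
    intro c hc
    have hcomp := T2.comp (hmap hc.ne')
    have hmul := (tendsto_const_nhds (x := (c:ℂ) ^ 2)).mul hcomp
    refine hmul.congr' ?_
    filter_upwards [self_mem_nhdsWithin] with θ hθ
    have hθ0 : θ ≠ 0 := hθ
    have hθc : (θ:ℂ) ≠ 0 := by exact_mod_cast hθ0
    have hcc : (c:ℂ) ≠ 0 := by exact_mod_cast hc.ne'
    show (c:ℂ) ^ 2 * ((u (c * θ) + Complex.I * μv * ((c * θ : ℝ) : ℂ)) / ((c * θ : ℝ) : ℂ) ^ 2)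
        = (u (c * θ) + Complex.I * μv * ((c * θ : ℝ) : ℂ)) / (θ:ℂ) ^ 2
    push_cast
    field_simp
  have hμI : -(Complex.I * (μv:ℂ)) ≠ 0 :=
    neg_ne_zero.2 (mul_ne_zero Complex.I_ne_zero (Complex.ofReal_ne_zero.2 hμ))
  have eq1 : (a:ℂ) * ((s:ℂ) * -(Complex.I * μv)) = (b:ℂ) * ((r:ℂ) * -(Complex.I * μv)) := by
    have A := (tendsto_const_nhds (x := (a:ℂ))).mul (scale1 hs)
    have B := (tendsto_const_nhds (x := (b:ℂ))).mul (scale1 hr)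
    have hfe : (fun θ : ℝ => (a:ℂ) * (u (s * θ) / (θ:ℂ)))
        = fun θ : ℝ => (b:ℂ) * (u (r * θ) / (θ:ℂ)) := by
      funext θ
      rw [← mul_div_assoc, ← mul_div_assoc, heq θ]
    rw [hfe] at A
    exact tendsto_nhds_unique A B
  have hasbr : a * s = b * r := by
    have e1 : ((a * s : ℝ) : ℂ) * -(Complex.I * μv) = ((b * r : ℝ) : ℂ) * -(Complex.I * μv) := by
      push_cast
      linear_combination eq1
    exact_mod_cast mul_right_cancel₀ hμI e1
  have eq2 : (a:ℂ) * ((s:ℂ) ^ 2 * ((vv:ℂ) / 2)) = (b:ℂ) * ((r:ℂ) ^ 2 * ((vv:ℂ) / 2)) := by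
    have A := (tendsto_const_nhds (x := (a:ℂ))).mul (scale2 hs)
    have B := (tendsto_const_nhds (x := (b:ℂ))).mul (scale2 hr)
    have hcast : ((a * s : ℝ) : ℂ) = ((b * r : ℝ) : ℂ) := by exact_mod_cast hasbr
    have hfe : (fun θ : ℝ => (a:ℂ) * ((u (s * θ) + Complex.I * μv * ((s * θ : ℝ) : ℂ)) / (θ:ℂ) ^ 2))
        = fun θ : ℝ => (b:ℂ) * ((u (r * θ) + Complex.I * μv * ((r * θ : ℝ) : ℂ)) / (θ:ℂ) ^ 2) := by
      funext θ
      rw [← mul_div_assoc, ← mul_div_assoc]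
      congr 1
      push_cast at hcast ⊢
      linear_combination heq θ + Complex.I * (μv:ℂ) * (θ:ℂ) * hcast
    rw [hfe] at A
    exact tendsto_nhds_unique A B
  have hvv : ((vv:ℂ) / 2) ≠ 0 := by
    simp only [ne_eq, div_eq_zero_iff]
    push_neg
    exact ⟨Complex.ofReal_ne_zero.2 hv.ne', by norm_num⟩
  have hasbr2 : a * s ^ 2 = b * r ^ 2 := by
    have e2 : ((a * s ^ 2 : ℝ) : ℂ) * ((vv:ℂ) / 2) = ((b * r ^ 2 : ℝ) : ℂ) * ((vv:ℂ) / 2) := by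
      push_cast
      linear_combination eq2
    exact_mod_cast mul_right_cancel₀ hvv e2
  have hsr : s = r := by
    have h1 : s * (a * s) = r * (a * s) := by
      rw [hasbr]
      nlinarith [hasbr2]
    exact mul_right_cancel₀ (by positivity) h1
  refine ⟨hsr, ?_⟩
  have : a * s = b * s := by rw [hasbr, hsr]
  exact mul_right_cancel₀ hs.ne' this

lemma mult_to_pow {f : ℝ → ℝ} (hpos : ∀ c : ℝ, 0 < c → 0 < f c)
    (hcont : ContinuousOn f (Set.Ioi 0))
    (hmul : ∀ c d : ℝ, 0 < c → 0 < d → f (c * d) = f c * f d) :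
    ∃ β : ℝ, ∀ c : ℝ, 0 < c → f c = c ^ β := by
  have hFadd : ∀ x y : ℝ, Real.log (f (Real.exp (x + y)))
      = Real.log (f (Real.exp x)) + Real.log (f (Real.exp y)) := by
    intro x y
    rw [Real.exp_add, hmul _ _ (Real.exp_pos x) (Real.exp_pos y),
      Real.log_mul (hpos _ (Real.exp_pos x)).ne' (hpos _ (Real.exp_pos y)).ne']
  set F : ℝ →+ ℝ := AddMonoidHom.mk' (fun x => Real.log (f (Real.exp x))) hFadd with hFdef
  have hFcont : Continuous F := by
    rw [continuous_iff_continuousAt]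
    intro x
    have h1 : ContinuousAt Real.exp x := Real.continuous_exp.continuousAt
    have h2 : ContinuousAt f (Real.exp x) :=
      hcont.continuousAt (Ioi_mem_nhds (Real.exp_pos x))
    have h3 : ContinuousAt Real.log (f (Real.exp x)) :=
      Real.continuousAt_log (hpos _ (Real.exp_pos x)).ne'
    exact ContinuousAt.comp (f := f ∘ Real.exp) h3 (h2.comp h1)
  refine ⟨F 1, fun c hc => ?_⟩
  have hFx : ∀ x : ℝ, F x = x * F 1 := by
    intro x
    have := map_real_smul F hFcont x 1
    simpa [smul_eq_mul] using this
  have hlog : Real.log (f c) = Real.log c * F 1 := by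
    have h1 : F (Real.log c) = Real.log c * F 1 := hFx (Real.log c)
    have h2 : F (Real.log c) = Real.log (f (Real.exp (Real.log c))) := rfl
    rw [Real.exp_log hc] at h2
    rw [← h2, h1]
  rw [Real.rpow_def_of_pos hc, ← hlog, Real.exp_log (hpos c hc)]

end AuxiliaryLemmas

/-- If an infinitely divisible process indexed by `(0,∞)` is
`(f,g)`-dilatively stable with `E(X₁²) < ∞`, `E(X₁) ≠ 0` and `Var(X₁) > 0`, then
`f` and `g` are uniquely determined power functions. -/
theorem fg_power_of_nonzero_mean
    {Ω : Type*} [MeasurableSpace Ω] (P : Measure Ω) [IsProbabilityMeasure P]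
    (X : ℝ → Ω → ℝ) (hX : ∀ t : ℝ, 0 < t → Measurable (X t))
    (ψ : ∀ k : ℕ, (Fin k → ℝ) → (Fin k → ℝ) → ℂ)
    (hψ0 : ∀ (k : ℕ) (t : Fin k → ℝ), (∀ i, 0 < t i) → ψ k t 0 = 0)
    (hψcont : ∀ (k : ℕ) (t : Fin k → ℝ), (∀ i, 0 < t i) → Continuous (ψ k t))
    (hψchar : ∀ (k : ℕ) (t : Fin k → ℝ), (∀ i, 0 < t i) → ∀ θ : Fin k → ℝ,
      ∫ ω, Complex.exp (Complex.I * ∑ j, (θ j : ℂ) * (X (t j) ω : ℂ)) ∂P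
        = Complex.exp (-ψ k t θ))
    (hID : ∀ (k : ℕ) (t : Fin k → ℝ), (∀ i, 0 < t i) → ∀ n : ℕ, 0 < n →
      ∃ ρ : Measure (Fin k → ℝ), IsProbabilityMeasure ρ ∧
        convPow ρ n = Measure.map (fun ω i => X (t i) ω) P)
    (f g : ℝ → ℝ)
    (hfpos : ∀ c : ℝ, 0 < c → 0 < f c) (hgpos : ∀ c : ℝ, 0 < c → 0 < g c)
    (hfcont : ContinuousOn f (Set.Ioi 0)) (hgcont : ContinuousOn g (Set.Ioi 0))
    -- (f,g)-dilative stability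
    (hDS : ∀ c : ℝ, 0 < c → ∀ (k : ℕ) (t : Fin k → ℝ), (∀ i, 0 < t i) →
      ∀ θ : Fin k → ℝ,
        ψ k (fun i => c * t i) θ = ((g c : ℝ) : ℂ) * ψ k t (fun i => f c * θ i))
    -- moment conditions on `X₁`
    (hL2 : Integrable (fun ω => (X 1 ω) ^ 2) P)
    (hmean : ∫ ω, X 1 ω ∂P ≠ 0)
    (hvar : 0 < variance (X 1) P) :
    ∃! p : ℝ × ℝ, ∀ c : ℝ, 0 < c → f c = c ^ p.1 ∧ g c = c ^ p.2 := by
  have hYmeas : Measurable (X 1) := hX 1 one_pos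
  set Y : Ω → ℝ := X 1 with hYdef
  set μ1 : ℝ := ∫ ω, Y ω ∂P with hμ1
  set m2 : ℝ := ∫ ω, Y ω ^ 2 ∂P with hm2
  have hTaylor := char_taylor P Y hYmeas hL2
  set u : ℝ → ℂ := fun θ => ψ 1 (fun _ => 1) (fun _ => θ) with hudef
  have hu0 : u 0 = 0 := hψ0 1 (fun _ => 1) (fun _ => one_pos)
  have hucont : Continuous u :=
    (hψcont 1 (fun _ => 1) (fun _ => one_pos)).comp (continuous_pi fun _ => continuous_id)
  have hexpu : ∀ θ : ℝ, Complex.exp (-u θ) = ∫ ω, Complex.exp (Complex.I * (θ * Y ω)) ∂P := by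
    intro θ
    have h := hψchar 1 (fun _ => 1) (fun _ => one_pos) (fun _ => θ)
    simp only [Fin.sum_univ_one] at h
    exact h.symm
  have hYae : AEStronglyMeasurable Y P := hYmeas.aestronglyMeasurable
  have hMem : MemLp Y 2 P := (memLp_two_iff_integrable_sq hYae).2 hL2
  have hvar' : variance Y P = m2 - μ1 ^ 2 := by
    have := variance_eq_sub (μ := P) hMem
    simpa [hm2, hμ1, Pi.pow_apply] using this
  have hμ0 : μ1 ≠ 0 := hmean
  have hv0 : 0 < m2 - μ1 ^ 2 := by
    rw [← hvar']
    exact hvar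
  obtain ⟨T1, T2⟩ := psi_limits hu0 hucont hexpu hTaylor.1 hTaylor.2
  have hT2' : Tendsto (fun θ : ℝ => (u θ + Complex.I * μ1 * θ) / (θ:ℂ) ^ 2) (𝓝[≠] 0)
      (𝓝 (((m2 - μ1 ^ 2 : ℝ) : ℂ) / 2)) := by
    have hIsq : (Complex.I * ((μ1 : ℝ) : ℂ)) ^ 2 = -((μ1 : ℝ) : ℂ) ^ 2 := by
      rw [mul_pow, Complex.I_sq]
      ring
    have hval : -(-((m2 : ℝ) : ℂ) / 2) + (Complex.I * ((μ1 : ℝ) : ℂ)) ^ 2 / 2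
        = ((m2 - μ1 ^ 2 : ℝ) : ℂ) / 2 := by
      rw [hIsq]
      push_cast
      ring
    rw [← hval]
    exact T2
  have hfeq : ∀ c d : ℝ, 0 < c → 0 < d → f (c * d) = f c * f d ∧ g (c * d) = g c * g d := by
    intro c d hc hd
    have hcd : 0 < c * d := mul_pos hc hd
    have heq : ∀ θ : ℝ, ((g (c * d) : ℝ) : ℂ) * u (f (c * d) * θ)
        = ((g c * g d : ℝ) : ℂ) * u (f c * f d * θ) := by
      intro θ
      have E3 := hDS (c * d) hcd 1 (fun _ => 1) (fun _ => one_pos) (fun _ => θ)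
      have E1 := hDS c hc 1 (fun _ => d) (fun _ => hd) (fun _ => θ)
      have E2 := hDS d hd 1 (fun _ => 1) (fun _ => one_pos) (fun _ => f c * θ)
      simp only [mul_one] at E3 E2
      have hfun : (fun _ : Fin 1 => f d * (f c * θ)) = (fun _ : Fin 1 => f c * f d * θ) :=
        funext fun _ => by ring
      calc ((g (c * d) : ℝ) : ℂ) * u (f (c * d) * θ)
          = ψ 1 (fun _ => c * d) (fun _ => θ) := E3.symm
        _ = ((g c : ℝ) : ℂ) * ψ 1 (fun _ => d) (fun _ => f c * θ) := E1
        _ = ((g c : ℝ) : ℂ) * (((g d : ℝ) : ℂ)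
              * ψ 1 (fun _ => 1) (fun _ => f d * (f c * θ))) := by rw [E2]
        _ = ((g c * g d : ℝ) : ℂ) * u (f c * f d * θ) := by
            rw [show (ψ 1 (fun _ => 1) (fun _ => f d * (f c * θ)))
                = u (f c * f d * θ) from congrArg _ hfun]
            push_cast
            ring
    exact key_scaling hμ0 hv0 T1 hT2' (hgpos _ hcd)
      (mul_pos (hgpos c hc) (hgpos d hd)) (hfpos _ hcd)
      (mul_pos (hfpos c hc) (hfpos d hd)) heq
  obtain ⟨β, hβ⟩ := mult_to_pow hfpos hfcont fun c d hc hd => (hfeq c d hc hd).1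
  obtain ⟨γ, hγ⟩ := mult_to_pow hgpos hgcont fun c d hc hd => (hfeq c d hc hd).2
  refine ⟨(β, γ), fun c hc => ⟨hβ c hc, hγ c hc⟩, ?_⟩
  rintro ⟨β', γ'⟩ hp
  have hb : β' = β := by
    have heq : Real.exp 1 ^ β' = Real.exp 1 ^ β :=
      ((hp (Real.exp 1) (Real.exp_pos 1)).1).symm.trans (hβ _ (Real.exp_pos 1))
    rw [Real.exp_one_rpow, Real.exp_one_rpow] at heq
    exact Real.exp_injective heq
  have hg : γ' = γ := by
    have heq : Real.exp 1 ^ γ' = Real.exp 1 ^ γ :=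
      ((hp (Real.exp 1) (Real.exp_pos 1)).2).symm.trans (hγ _ (Real.exp_pos 1))
    rw [Real.exp_one_rpow, Real.exp_one_rpow] at heq
    exact Real.exp_injective heq
  rw [hb, hg]
end

section
/- Let (X_t)_{t∈(0,∞)} be a real-valued stochastic process whose finite-dimensional distributions are infinitely divisible, with characteristic exponents ψ_{t_1,…,t_k}, and suppose X is (f,g)-dilatively stable for continuous functions f, g : (0,∞) → (0,∞). Suppose that E(X_1²) < ∞, Var(X_1) > 0, and the law of X_1 is not a Gaussian distribution; equivalently, ψ_1 admits a Lévy–Khintchine representation ψ_1(θ) = −i a θ + (1/2) σ² θ² + ∫_{ℝ∖{0}} (1 − e^{iθx} + iθx/(1+x²)) μ(dx) with a ∈ ℝ, σ² ≥ 0 and a nonzero Lévy measure μ satisfying ∫_{ℝ∖{0}} x² μ(dx) < ∞. Then there exist unique β, γ ∈ ℝ such that f(T) = T^β and g(T) = T^γ for all T > 0. -/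
open MeasureTheory ProbabilityTheory Filter Topology

set_option linter.unusedVariables false
set_option linter.unnecessarySimpa false

namespace FGAux


/-- `1 - cos u ≤ u^2/2`. -/
lemma one_sub_cos_le (u : ℝ) : 1 - Real.cos u ≤ u ^ 2 / 2 := by
  have := Real.one_sub_sq_div_two_le_cos (x := u)
  linarith

lemma one_sub_cos_nonneg (u : ℝ) : 0 ≤ 1 - Real.cos u := by
  have := Real.cos_le_one u; linarith

/-- `|u - sin u| ≤ 2 u^2`. -/
lemma abs_id_sub_sin_le (u : ℝ) : |u - Real.sin u| ≤ 2 * u ^ 2 := by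
  suffices h : ∀ w : ℝ, 0 ≤ w → |w - Real.sin w| ≤ 2 * w ^ 2 by
    rcases le_or_gt 0 u with hu | hu
    · exact h u hu
    · have := h (-u) (by linarith)
      rw [Real.sin_neg] at this
      rw [show -u - -Real.sin u = -(u - Real.sin u) by ring, abs_neg] at this
      simpa using this
  intro w hw
  have hsle : Real.sin w ≤ w := le_trans (le_abs_self _)
    (by simpa [abs_of_nonneg hw] using Real.abs_sin_le_abs (x := w))
  rw [abs_of_nonneg (by linarith)]
  rcases le_or_gt w 1 with h1 | h1
  · rcases eq_or_lt_of_le hw with rfl | hw'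
    · simp
    · have := Real.sin_gt_sub_cube hw'
      nlinarith
  · have := Real.neg_one_le_sin w
    nlinarith

/-- `sin u / u → 1` at `0`. -/
lemma tendsto_sin_div : Tendsto (fun u : ℝ => Real.sin u / u) (𝓝[≠] 0) (𝓝 1) := by
  have h1 : HasDerivAt Real.sin 1 0 := by simpa using Real.hasDerivAt_sin 0
  rw [hasDerivAt_iff_tendsto_slope] at h1
  refine h1.congr' ?_
  filter_upwards [self_mem_nhdsWithin] with u hu
  simp [slope_fun_def_field]

lemma tendsto_mul_punctured {x : ℝ} (hx : x ≠ 0) :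
    Tendsto (fun θ : ℝ => θ * x / 2) (𝓝[≠] 0) (𝓝[≠] 0) := by
  rw [tendsto_nhdsWithin_iff]
  constructor
  · have : Tendsto (fun θ : ℝ => θ * x / 2) (𝓝 0) (𝓝 (0 * x / 2)) :=
      ((continuous_id.mul continuous_const).div_const 2).tendsto 0
    simpa using this.mono_left nhdsWithin_le_nhds
  · filter_upwards [self_mem_nhdsWithin] with θ hθ
    have hθ' : θ ≠ 0 := hθ
    simp only [Set.mem_compl_iff, Set.mem_singleton_iff]
    exact div_ne_zero (mul_ne_zero hθ' hx) two_ne_zero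

/-- pointwise limit `(1 - cos (θ x))/θ² → x²/2`. -/
lemma tendsto_one_sub_cos_div (x : ℝ) :
    Tendsto (fun θ : ℝ => (1 - Real.cos (θ * x)) / θ ^ 2) (𝓝[≠] 0) (𝓝 (x ^ 2 / 2)) := by
  rcases eq_or_ne x 0 with rfl | hx
  · simpa using tendsto_const_nhds (α := ℝ) (f := 𝓝[≠] (0:ℝ)) (a := (0:ℝ))
  · have h1 : Tendsto (fun θ : ℝ => x ^ 2 / 2 * (Real.sin (θ * x / 2) / (θ * x / 2)) ^ 2)
        (𝓝[≠] 0) (𝓝 (x ^ 2 / 2 * 1 ^ 2)) :=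
      ((tendsto_sin_div.comp (tendsto_mul_punctured hx)).pow 2).const_mul _
    rw [show x ^ 2 / 2 * 1 ^ 2 = x ^ 2 / 2 by ring] at h1
    refine h1.congr' ?_
    filter_upwards [self_mem_nhdsWithin] with θ hθ
    have hθ' : θ ≠ 0 := hθ
    have h := Real.sin_sq_eq_half_sub (θ * x / 2)
    rw [show 2 * (θ * x / 2) = θ * x by ring] at h
    field_simp
    rw [mul_comm x θ]
    nlinarith [h]




variable {μ : Measure ℝ}

lemma integrable_sq (hx2 : ∫⁻ x, ENNReal.ofReal (x ^ 2) ∂μ < ⊤) :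
    Integrable (fun x : ℝ => x ^ 2) μ := by
  refine ⟨(measurable_id.pow_const 2).aestronglyMeasurable, ?_⟩
  rw [hasFiniteIntegral_iff_ofReal (ae_of_all _ fun x => sq_nonneg x)]
  exact hx2

lemma integrable_one_sub_cos (hx2 : ∫⁻ x, ENNReal.ofReal (x ^ 2) ∂μ < ⊤) (θ : ℝ) :
    Integrable (fun x : ℝ => 1 - Real.cos (θ * x)) μ := by
  refine Integrable.mono' (((integrable_sq hx2).const_mul (θ ^ 2 / 2)))
    ((continuous_const.sub (Real.continuous_cos.comp
      (continuous_const.mul continuous_id))).aestronglyMeasurable)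
    (ae_of_all _ fun x => ?_)
  rw [Real.norm_eq_abs, abs_of_nonneg (one_sub_cos_nonneg _)]
  have := one_sub_cos_le (θ * x)
  nlinarith

lemma onesubcos_le_sq (θ x : ℝ) : 1 - Real.cos (θ * x) ≤ θ ^ 2 / 2 * x ^ 2 := by
  have := one_sub_cos_le (θ * x); nlinarith




variable {μ : Measure ℝ}

lemma tendsto_integral_one_sub_cos (hx2 : ∫⁻ x, ENNReal.ofReal (x ^ 2) ∂μ < ⊤) :
    Tendsto (fun θ : ℝ => (∫ x, (1 - Real.cos (θ * x)) ∂μ) / θ ^ 2) (𝓝[≠] 0)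
      (𝓝 ((∫ x, x ^ 2 ∂μ) / 2)) := by
  have key : Tendsto (fun θ : ℝ => ∫ x, (1 - Real.cos (θ * x)) / θ ^ 2 ∂μ) (𝓝[≠] 0)
      (𝓝 (∫ x, x ^ 2 / 2 ∂μ)) := by
    refine tendsto_integral_filter_of_dominated_convergence (fun x => x ^ 2 / 2) ?_ ?_ ?_ ?_
    · refine Eventually.of_forall fun θ => ?_
      exact ((continuous_const.sub (Real.continuous_cos.comp
        (continuous_const.mul continuous_id))).div_const _).aestronglyMeasurable
    · filter_upwards [self_mem_nhdsWithin] with θ hθ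
      have hθ' : (θ:ℝ) ≠ 0 := hθ
      refine ae_of_all _ fun x => ?_
      rw [Real.norm_eq_abs, abs_div, abs_of_nonneg (one_sub_cos_nonneg _),
        abs_of_nonneg (sq_nonneg θ)]
      rw [div_le_iff₀ (by positivity)]
      have := onesubcos_le_sq θ x
      nlinarith
    · exact (integrable_sq hx2).div_const 2
    · exact ae_of_all _ fun x => tendsto_one_sub_cos_div x
  have e1 : (fun θ : ℝ => (∫ x, (1 - Real.cos (θ * x)) ∂μ) / θ ^ 2)
      = fun θ : ℝ => ∫ x, (1 - Real.cos (θ * x)) / θ ^ 2 ∂μ := by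
    funext θ; rw [integral_div]
  rw [e1, show (∫ x, x ^ 2 ∂μ) / 2 = ∫ x, x ^ 2 / 2 ∂μ from (integral_div _ _).symm]
  exact key



variable {μ : Measure ℝ}

lemma measure_eq_zero_of_ae_zero (hμ0 : μ {0} = 0) (h : ∀ᵐ x ∂μ, x = (0:ℝ)) : μ = 0 := by
  have h1 : μ {x : ℝ | ¬ x = 0} = 0 := ae_iff.mp h
  have huniv : μ Set.univ = 0 := by
    have : (Set.univ : Set ℝ) = {0} ∪ {x : ℝ | ¬ x = 0} := by
      ext x; by_cases hx : x = 0 <;> simp [hx]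
    rw [this]
    exact le_antisymm ((measure_union_le _ _).trans (by rw [hμ0, h1]; simp)) (zero_le)
  exact Measure.measure_univ_eq_zero.mp huniv

lemma sq_integral_pos (hμ0 : μ {0} = 0) (hμne : μ ≠ 0)
    (hx2 : ∫⁻ x, ENNReal.ofReal (x ^ 2) ∂μ < ⊤) :
    0 < ∫ x, x ^ 2 ∂μ := by
  rcases lt_or_eq_of_le (integral_nonneg (fun x => sq_nonneg x) : 0 ≤ ∫ x, x ^ 2 ∂μ) with h | h
  · exact h
  · exfalso
    have := (integral_eq_zero_iff_of_nonneg (fun x => sq_nonneg x) (integrable_sq hx2)).mp h.symm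
    refine hμne (measure_eq_zero_of_ae_zero hμ0 ?_)
    filter_upwards [this] with x hx
    exact pow_eq_zero_iff (n := 2) (by norm_num) |>.mp hx

lemma punctured_map (s : ℝ) (hs : s ≠ 0) :
    Tendsto (fun θ : ℝ => s * θ) (𝓝[≠] (0:ℝ)) (𝓝[≠] (0:ℝ)) := by
  rw [tendsto_nhdsWithin_iff]
  constructor
  · have : Tendsto (fun θ : ℝ => s * θ) (𝓝 0) (𝓝 (s * 0)) :=
      (continuous_const.mul continuous_id).tendsto 0
    simpa using this.mono_left nhdsWithin_le_nhds
  · filter_upwards [self_mem_nhdsWithin] with θ hθ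
    exact mul_ne_zero hs hθ

lemma rigidity (v : ℝ) (hv : 0 ≤ v) (hμ0 : μ {0} = 0) (hμne : μ ≠ 0)
    (hx2 : ∫⁻ x, ENNReal.ofReal (x ^ 2) ∂μ < ⊤)
    {s lam : ℝ} (hs : 0 < s) (hlam : 0 < lam)
    (h : ∀ θ : ℝ, lam * (v * (s * θ) ^ 2 / 2 + ∫ x, (1 - Real.cos (s * θ * x)) ∂μ)
      = v * θ ^ 2 / 2 + ∫ x, (1 - Real.cos (θ * x)) ∂μ) :
    s = 1 ∧ lam = 1 := by
  set I : ℝ → ℝ := fun θ => ∫ x, (1 - Real.cos (θ * x)) ∂μ with hI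
  set K : ℝ := ∫ x, x ^ 2 ∂μ with hK
  have hKpos : 0 < K := sq_integral_pos hμ0 hμne hx2
  have hIlim : Tendsto (fun θ : ℝ => I θ / θ ^ 2) (𝓝[≠] 0) (𝓝 (K / 2)) :=
    tendsto_integral_one_sub_cos hx2
  set R : ℝ → ℝ := fun θ => v * θ ^ 2 / 2 + I θ with hR
  have hRlim : Tendsto (fun θ : ℝ => R θ / θ ^ 2) (𝓝[≠] 0) (𝓝 ((v + K) / 2)) := by
    have : Tendsto (fun θ : ℝ => v / 2 + I θ / θ ^ 2) (𝓝[≠] 0) (𝓝 (v / 2 + K / 2)) :=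
      tendsto_const_nhds.add hIlim
    rw [show (v + K) / 2 = v / 2 + K / 2 by ring]
    refine this.congr' ?_
    filter_upwards [self_mem_nhdsWithin] with θ hθ
    have hθ' : (θ:ℝ) ≠ 0 := hθ
    field_simp [hR]
    simp only [hR]; ring
  -- lam * s ^ 2 = 1
  have hmap : Tendsto (fun θ : ℝ => s * θ) (𝓝[≠] (0:ℝ)) (𝓝[≠] (0:ℝ)) :=
    punctured_map s hs.ne'
  have hls : lam * s ^ 2 = 1 := by
    have h2 : Tendsto (fun θ : ℝ => lam * s ^ 2 * (R (s * θ) / (s * θ) ^ 2)) (𝓝[≠] 0)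
        (𝓝 (lam * s ^ 2 * ((v + K) / 2))) := (hRlim.comp hmap).const_mul _
    have h3 : Tendsto (fun θ : ℝ => R θ / θ ^ 2) (𝓝[≠] 0)
        (𝓝 (lam * s ^ 2 * ((v + K) / 2))) := by
      refine h2.congr' ?_
      filter_upwards [self_mem_nhdsWithin] with θ hθ
      have hθ' : (θ:ℝ) ≠ 0 := hθ
      have hrel := h θ
      have hsθ : s * θ ≠ 0 := mul_ne_zero hs.ne' hθ'
      field_simp [hR]
      simp only [hR, hI]; linarith [hrel]
    have := tendsto_nhds_unique h3 hRlim
    have hVpos : 0 < (v + K) / 2 := by linarith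
    nlinarith [this]
  -- I-invariance and G
  have hIs : ∀ θ : ℝ, lam * I (s * θ) = I θ := by
    intro θ
    have hrel := h θ
    linear_combination hrel - (v * θ ^ 2 / 2) * hls
  set G : ℝ → ℝ := fun θ => K * θ ^ 2 / 2 - I θ with hG
  have hGnonneg : ∀ θ, 0 ≤ G θ := by
    intro θ
    have hle : I θ ≤ K * θ ^ 2 / 2 := by
      have := integral_mono (integrable_one_sub_cos hx2 θ)
        ((integrable_sq hx2).const_mul (θ ^ 2 / 2)) (fun x => onesubcos_le_sq θ x)
      calc I θ ≤ ∫ x, θ ^ 2 / 2 * x ^ 2 ∂μ := this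
        _ = K * θ ^ 2 / 2 := by rw [integral_const_mul]; ring
    simp only [hG]; linarith
  have hGrel : ∀ θ : ℝ, lam * G (s * θ) = G θ := by
    intro θ
    simp only [hG]
    linear_combination (K * θ ^ 2 / 2) * hls - hIs θ
  have hGlim : Tendsto (fun θ : ℝ => G θ / θ ^ 2) (𝓝[≠] 0) (𝓝 0) := by
    have : Tendsto (fun θ : ℝ => K / 2 - I θ / θ ^ 2) (𝓝[≠] 0) (𝓝 (K / 2 - K / 2)) :=
      tendsto_const_nhds.sub hIlim
    rw [sub_self] at this
    refine this.congr' ?_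
    filter_upwards [self_mem_nhdsWithin] with θ hθ
    have hθ' : (θ:ℝ) ≠ 0 := hθ
    field_simp [hG]
    simp only [hG]; ring
  have hs1 : s = 1 := by
    by_contra hs1
    -- choose contraction ratio
    set r : ℝ := if s < 1 then s else s⁻¹ with hr
    have hr0 : 0 < r := by
      rw [hr]; split <;> [exact hs; exact inv_pos.mpr hs]
    have hr1 : r < 1 := by
      rw [hr]; split
      · assumption
      · rename_i h'
        have : 1 < s := lt_of_le_of_ne (not_lt.mp h') (Ne.symm hs1)
        exact inv_lt_one_of_one_lt₀ this
    -- H-invariance under multiplication by r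
    have hHs : ∀ θ : ℝ, θ ≠ 0 → G (s * θ) / (s * θ) ^ 2 = G θ / θ ^ 2 := by
      intro θ hθ
      have := hGrel θ
      have h2 : G (s * θ) = s ^ 2 * G θ := by
        linear_combination (-(G (s * θ))) * hls + s ^ 2 * this
      rw [h2, mul_pow, mul_div_mul_left _ _ (pow_ne_zero 2 hs.ne')]
    have hHr : ∀ θ : ℝ, θ ≠ 0 → G (r * θ) / (r * θ) ^ 2 = G θ / θ ^ 2 := by
      intro θ hθ
      rw [hr]; split
      · exact hHs θ hθ
      · have h1 := hHs (s⁻¹ * θ) (mul_ne_zero (inv_ne_zero hs.ne') hθ)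
        rw [show s * (s⁻¹ * θ) = θ by field_simp] at h1
        exact h1.symm
    have hHiter : ∀ (θ : ℝ), θ ≠ 0 → ∀ n : ℕ, G (r ^ n * θ) / (r ^ n * θ) ^ 2 = G θ / θ ^ 2 := by
      intro θ hθ n
      induction n with
      | zero => simp
      | succ n ih =>
        have hne : r ^ n * θ ≠ 0 := mul_ne_zero (pow_ne_zero _ hr0.ne') hθ
        have := hHr (r ^ n * θ) hne
        rw [show r * (r ^ n * θ) = r ^ (n+1) * θ by ring] at this
        rw [this, ih]
    have hGzero : ∀ θ : ℝ, θ ≠ 0 → G θ = 0 := by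
      intro θ hθ
      have hseq : Tendsto (fun n : ℕ => r ^ n * θ) atTop (𝓝[≠] 0) := by
        rw [tendsto_nhdsWithin_iff]
        constructor
        · have := (tendsto_pow_atTop_nhds_zero_of_lt_one hr0.le hr1).mul_const θ
          simpa using this
        · exact Eventually.of_forall fun n => mul_ne_zero (pow_ne_zero _ hr0.ne') hθ
      have h4 : Tendsto (fun n : ℕ => G (r ^ n * θ) / (r ^ n * θ) ^ 2) atTop (𝓝 0) :=
        hGlim.comp hseq
      have h5 : Tendsto (fun _ : ℕ => G θ / θ ^ 2) atTop (𝓝 0) := by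
        refine h4.congr fun n => hHiter θ hθ n
      have h6 : G θ / θ ^ 2 = 0 := tendsto_nhds_unique tendsto_const_nhds h5
      have : θ ^ 2 ≠ 0 := pow_ne_zero _ hθ
      field_simp at h6
      simpa using h6
    -- hence μ = 0, contradiction
    have hG1 : G 1 = 0 := hGzero 1 one_ne_zero
    have hint : ∫ x, (x ^ 2 / 2 - (1 - Real.cos x)) ∂μ = 0 := by
      have heq : ∫ x, (x ^ 2 / 2 - (1 - Real.cos x)) ∂μ
          = (∫ x, x ^ 2 ∂μ) / 2 - ∫ x, (1 - Real.cos x) ∂μ := by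
        rw [integral_sub ((integrable_sq hx2).div_const 2) ?_, integral_div]
        · have h1 := integrable_one_sub_cos hx2 1
          simpa using h1
      rw [heq]
      have hG1' := hG1
      simp only [hG] at hG1'
      have hI1 : I 1 = ∫ x, (1 - Real.cos x) ∂μ := by
        simp only [hI, one_mul]
      rw [hI1] at hG1'
      linarith [hG1']
    have hzero : ∀ᵐ x ∂μ, x ^ 2 / 2 - (1 - Real.cos x) = 0 := by
      refine (integral_eq_zero_iff_of_nonneg (fun x => ?_) ?_).mp hint
      · have := one_sub_cos_le x; simpa using by linarith
      · refine Integrable.sub ((integrable_sq hx2).div_const 2) ?_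
        simpa using integrable_one_sub_cos hx2 1
    have hae : ∀ᵐ x ∂μ, x = (0:ℝ) := by
      filter_upwards [hzero] with x hx
      by_contra hx0
      have := Real.one_sub_sq_div_two_lt_cos (x := x) hx0
      nlinarith
    exact hμne (measure_eq_zero_of_ae_zero hμ0 hae)
  refine ⟨hs1, ?_⟩
  rw [hs1] at hls
  nlinarith [hls]



lemma cint_rw (θ x : ℝ) :
    1 - Complex.exp (Complex.I * (θ : ℂ) * (x : ℂ))
      + Complex.I * (θ : ℂ) * (x : ℂ) / (1 + (x : ℂ) ^ 2)
    = 1 - Complex.exp (((θ * x : ℝ) : ℂ) * Complex.I)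
      + ((θ * x / (1 + x ^ 2) : ℝ) : ℂ) * Complex.I := by
  have hne : (1 : ℂ) + (x : ℂ) ^ 2 ≠ 0 := by
    intro hcon
    have : ((1 + x ^ 2 : ℝ) : ℂ) = 0 := by push_cast; linear_combination hcon
    have h2 := Complex.ofReal_eq_zero.mp this
    nlinarith [sq_nonneg x]
  have h1 : Complex.I * (θ : ℂ) * (x : ℂ) = ((θ * x : ℝ) : ℂ) * Complex.I := by
    push_cast; ring
  rw [h1]
  push_cast
  ring

lemma cint_re (θ x : ℝ) :
    (1 - Complex.exp (Complex.I * (θ : ℂ) * (x : ℂ))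
      + Complex.I * (θ : ℂ) * (x : ℂ) / (1 + (x : ℂ) ^ 2)).re = 1 - Real.cos (θ * x) := by
  rw [cint_rw, Complex.add_re, Complex.sub_re, Complex.one_re, Complex.exp_ofReal_mul_I_re]
  simp [Complex.mul_re]
  have hc : ((θ:ℂ) * (x:ℂ) / (1 + (x:ℂ) ^ 2)) = ((θ * x / (1 + x ^ 2) : ℝ) : ℂ) := by
    push_cast; ring
  rw [hc, Complex.ofReal_im]

lemma cint_im (θ x : ℝ) :
    (1 - Complex.exp (Complex.I * (θ : ℂ) * (x : ℂ))
      + Complex.I * (θ : ℂ) * (x : ℂ) / (1 + (x : ℂ) ^ 2)).im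
    = -Real.sin (θ * x) + θ * x / (1 + x ^ 2) := by
  rw [cint_rw, Complex.add_im, Complex.sub_im, Complex.one_im, Complex.exp_ofReal_mul_I_im]
  simp [Complex.mul_im]
  have hc : ((θ:ℂ) * (x:ℂ) / (1 + (x:ℂ) ^ 2)) = ((θ * x / (1 + x ^ 2) : ℝ) : ℂ) := by
    push_cast; ring
  rw [hc, Complex.ofReal_re]
lemma cint_norm_le (θ x : ℝ) :
    ‖1 - Complex.exp (Complex.I * (θ : ℂ) * (x : ℂ))
      + Complex.I * (θ : ℂ) * (x : ℂ) / (1 + (x : ℂ) ^ 2)‖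
    ≤ (θ ^ 2 / 2 + 2 * θ ^ 2 + |θ|) * x ^ 2 := by
  set z := 1 - Complex.exp (Complex.I * (θ : ℂ) * (x : ℂ))
      + Complex.I * (θ : ℂ) * (x : ℂ) / (1 + (x : ℂ) ^ 2) with hz
  have h0 : ‖z‖ ≤ |z.re| + |z.im| := by
    exact Complex.norm_le_abs_re_add_abs_im z
  have hre : |z.re| ≤ θ ^ 2 / 2 * x ^ 2 := by
    rw [hz, cint_re, abs_of_nonneg (one_sub_cos_nonneg _)]
    have := one_sub_cos_le (θ * x); nlinarith
  have him : |z.im| ≤ 2 * θ ^ 2 * x ^ 2 + |θ| * x ^ 2 := by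
    rw [hz, cint_im]
    have hden : (0:ℝ) < 1 + x ^ 2 := by positivity
    have e1 : -Real.sin (θ * x) + θ * x / (1 + x ^ 2)
        = (θ * x - Real.sin (θ * x)) - θ * x * x ^ 2 / (1 + x ^ 2) := by
      field_simp; ring
    rw [e1]
    have h1 : |θ * x - Real.sin (θ * x)| ≤ 2 * (θ * x) ^ 2 := abs_id_sub_sin_le (θ * x)
    have h2 : |θ * x * x ^ 2 / (1 + x ^ 2)| ≤ |θ| * x ^ 2 := by
      rw [abs_div, abs_of_pos hden, div_le_iff₀ hden, abs_mul, abs_mul]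
      have hxx : |x| ≤ 1 + x ^ 2 := by nlinarith [abs_nonneg x, sq_abs x]
      have h3 : |(x:ℝ) ^ 2| = x ^ 2 := abs_of_nonneg (sq_nonneg x)
      rw [h3]
      have h4 : |θ| * x ^ 2 * |x| ≤ |θ| * x ^ 2 * (1 + x ^ 2) :=
        mul_le_mul_of_nonneg_left hxx (by positivity)
      nlinarith [h4]
    calc |(θ * x - Real.sin (θ * x)) - θ * x * x ^ 2 / (1 + x ^ 2)|
        ≤ |θ * x - Real.sin (θ * x)| + |θ * x * x ^ 2 / (1 + x ^ 2)| := abs_sub _ _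
      _ ≤ 2 * (θ * x) ^ 2 + |θ| * x ^ 2 := add_le_add h1 h2
      _ = 2 * θ ^ 2 * x ^ 2 + |θ| * x ^ 2 := by ring
  calc ‖z‖ ≤ |z.re| + |z.im| := h0
    _ ≤ θ ^ 2 / 2 * x ^ 2 + (2 * θ ^ 2 * x ^ 2 + |θ| * x ^ 2) := add_le_add hre him
    _ = (θ ^ 2 / 2 + 2 * θ ^ 2 + |θ|) * x ^ 2 := by ring



lemma cint_integrable {μ : Measure ℝ} (hx2 : ∫⁻ x, ENNReal.ofReal (x ^ 2) ∂μ < ⊤) (θ : ℝ) :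
    Integrable (fun x : ℝ => 1 - Complex.exp (Complex.I * (θ : ℂ) * (x : ℂ))
      + Complex.I * (θ : ℂ) * (x : ℂ) / (1 + (x : ℂ) ^ 2)) μ := by
  refine Integrable.mono' ((integrable_sq hx2).const_mul (θ ^ 2 / 2 + 2 * θ ^ 2 + |θ|))
    ?_ (ae_of_all _ fun x => cint_norm_le θ x)
  apply Measurable.aestronglyMeasurable
  fun_prop

lemma integral_cint_re {μ : Measure ℝ} (hx2 : ∫⁻ x, ENNReal.ofReal (x ^ 2) ∂μ < ⊤) (θ : ℝ) :
    (∫ x : ℝ, (1 - Complex.exp (Complex.I * (θ : ℂ) * (x : ℂ))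
      + Complex.I * (θ : ℂ) * (x : ℂ) / (1 + (x : ℂ) ^ 2)) ∂μ).re
    = ∫ x : ℝ, (1 - Real.cos (θ * x)) ∂μ := by
  have h := ContinuousLinearMap.integral_comp_comm Complex.reCLM (cint_integrable hx2 θ)
  simp only [Complex.reCLM_apply] at h
  rw [← h]
  exact integral_congr_ae (ae_of_all _ fun x => cint_re θ x)

lemma mult_cont_pow (f : ℝ → ℝ) (hpos : ∀ c : ℝ, 0 < c → 0 < f c)
    (hcont : ContinuousOn f (Set.Ioi 0))
    (hmul : ∀ c d : ℝ, 0 < c → 0 < d → f (c * d) = f c * f d) :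
    ∀ c : ℝ, 0 < c → f c = c ^ Real.log (f (Real.exp 1)) := by
  set F : ℝ → ℝ := fun x => Real.log (f (Real.exp x)) with hF
  have hFadd : ∀ x y, F (x + y) = F x + F y := by
    intro x y
    simp only [hF, Real.exp_add]
    rw [hmul _ _ (Real.exp_pos x) (Real.exp_pos y),
      Real.log_mul (hpos _ (Real.exp_pos x)).ne' (hpos _ (Real.exp_pos y)).ne']
  have hfe : Continuous fun x : ℝ => f (Real.exp x) :=
    hcont.comp_continuous Real.continuous_exp fun x => Set.mem_Ioi.mpr (Real.exp_pos x)
  have hFcont : Continuous F :=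
    Real.continuousOn_log.comp_continuous hfe fun x => by
      simp [Set.mem_compl_iff, (hpos _ (Real.exp_pos x)).ne']
  have hF0 : F 0 = 0 := by have := hFadd 0 0; rw [add_zero] at this; linarith
  let Fhom : ℝ →+ ℝ := { toFun := F, map_zero' := hF0, map_add' := hFadd }
  have hlin : ∀ x : ℝ, F x = x * F 1 := by
    intro x
    have h := (Fhom.toRealLinearMap hFcont).map_smul x (1 : ℝ)
    have hc : ∀ y, (Fhom.toRealLinearMap hFcont) y = F y := fun y => rfl
    rw [smul_eq_mul, smul_eq_mul, hc, hc, mul_one] at h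
    exact h
  intro c hc
  have h1 : f c = Real.exp (F (Real.log c)) := by
    simp only [hF, Real.exp_log hc, Real.exp_log (hpos c hc)]
  rw [h1, hlin, Real.rpow_def_of_pos hc]


end FGAux

/-- If an infinitely divisible process indexed by `(0,∞)` is
`(f,g)`-dilatively stable, `E(X₁²) < ∞`, `Var(X₁) > 0`, and the law of `X₁` is not
Gaussian — equivalently, `ψ₁` has a Lévy–Khintchine representation with `σ² ≥ 0` and a
nonzero Lévy measure `μ` with finite second moment — then `f` and `g` are uniquely
determined power functions. -/
theorem fg_power_of_nonGaussian_finite_variance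
    {Ω : Type*} [MeasurableSpace Ω] (P : Measure Ω) [IsProbabilityMeasure P]
    (X : ℝ → Ω → ℝ) (hX : ∀ t : ℝ, 0 < t → Measurable (X t))
    (ψ : ∀ k : ℕ, (Fin k → ℝ) → (Fin k → ℝ) → ℂ)
    (hψ0 : ∀ (k : ℕ) (t : Fin k → ℝ), (∀ i, 0 < t i) → ψ k t 0 = 0)
    (hψcont : ∀ (k : ℕ) (t : Fin k → ℝ), (∀ i, 0 < t i) → Continuous (ψ k t))
    (hψchar : ∀ (k : ℕ) (t : Fin k → ℝ), (∀ i, 0 < t i) → ∀ θ : Fin k → ℝ,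
      ∫ ω, Complex.exp (Complex.I * ∑ j, (θ j : ℂ) * (X (t j) ω : ℂ)) ∂P
        = Complex.exp (-ψ k t θ))
    (hID : ∀ (k : ℕ) (t : Fin k → ℝ), (∀ i, 0 < t i) → ∀ n : ℕ, 0 < n →
      ∃ ρ : Measure (Fin k → ℝ), IsProbabilityMeasure ρ ∧
        convPow ρ n = Measure.map (fun ω i => X (t i) ω) P)
    (f g : ℝ → ℝ)
    (hfpos : ∀ c : ℝ, 0 < c → 0 < f c) (hgpos : ∀ c : ℝ, 0 < c → 0 < g c)
    (hfcont : ContinuousOn f (Set.Ioi 0)) (hgcont : ContinuousOn g (Set.Ioi 0))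
    -- (f,g)-dilative stability
    (hDS : ∀ c : ℝ, 0 < c → ∀ (k : ℕ) (t : Fin k → ℝ), (∀ i, 0 < t i) →
      ∀ θ : Fin k → ℝ,
        ψ k (fun i => c * t i) θ = ((g c : ℝ) : ℂ) * ψ k t (fun i => f c * θ i))
    -- moment conditions on `X₁`
    (hL2 : Integrable (fun ω => (X 1 ω) ^ 2) P)
    (hvar : 0 < variance (X 1) P)
    -- Lévy–Khintchine representation of `ψ₁` with `v = σ² ≥ 0` and a nonzero Lévy
    -- measure `μ` with finite second moment (so `X₁` is not Gaussian)
    (a v : ℝ) (hv : 0 ≤ v)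
    (μ : Measure ℝ) (hμ0 : μ {0} = 0) (hμne : μ ≠ 0)
    (hx2 : ∫⁻ x, ENNReal.ofReal (x ^ 2) ∂μ < ⊤)
    (hLK : ∀ θ : ℝ,
      ψ 1 (fun _ => 1) (fun _ => θ)
        = -(Complex.I * (a : ℂ) * (θ : ℂ)) + (1 / 2 : ℂ) * (v : ℂ) * (θ : ℂ) ^ 2
          + ∫ x : ℝ,
              (1 - Complex.exp (Complex.I * (θ : ℂ) * (x : ℂ))
                + Complex.I * (θ : ℂ) * (x : ℂ) / (1 + (x : ℂ) ^ 2)) ∂μ) :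
    ∃! p : ℝ × ℝ, ∀ c : ℝ, 0 < c → f c = c ^ p.1 ∧ g c = c ^ p.2 := by
  have hRe : ∀ θ : ℝ, (ψ 1 (fun _ => 1) (fun _ => θ)).re
      = v * θ ^ 2 / 2 + ∫ x, (1 - Real.cos (θ * x)) ∂μ := by
    intro θ
    rw [hLK θ, Complex.add_re, Complex.add_re]
    have h1 : (-(Complex.I * (a : ℂ) * (θ : ℂ))).re = 0 := by
      simp [Complex.mul_re]
    have h2 : ((1 / 2 : ℂ) * (v : ℂ) * (θ : ℂ) ^ 2).re = v * θ ^ 2 / 2 := by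
      have h3 : (1 / 2 : ℂ) * (v : ℂ) * (θ : ℂ) ^ 2 = ((v * θ ^ 2 / 2 : ℝ) : ℂ) := by
        push_cast; ring
      rw [h3, Complex.ofReal_re]
    rw [h1, h2, FGAux.integral_cint_re hx2 θ]
    ring
  have hmulm : ∀ c d : ℝ, 0 < c → 0 < d →
      f (c * d) = f c * f d ∧ g (c * d) = g c * g d := by
    intro c d hc hd
    have hcd : 0 < c * d := mul_pos hc hd
    have h1 : ∀ θ : ℝ, ((g (c * d) : ℝ) : ℂ) * ψ 1 (fun _ => 1) (fun _ => f (c * d) * θ)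
        = ((g c : ℝ) : ℂ) * (((g d : ℝ) : ℂ)
            * ψ 1 (fun _ => 1) (fun _ => f d * (f c * θ))) := by
      intro θ
      have A := hDS (c * d) hcd 1 (fun _ => 1) (fun _ => one_pos) (fun _ => θ)
      have B := hDS c hc 1 (fun _ => d) (fun _ => hd) (fun _ => θ)
      have C := hDS d hd 1 (fun _ => 1) (fun _ => one_pos) (fun _ => f c * θ)
      simp only [mul_one] at A B C
      rw [← A, B, C]
    have h2 : ∀ θ : ℝ,
        g (c * d) * (v * (f (c * d) * θ) ^ 2 / 2
            + ∫ x, (1 - Real.cos (f (c * d) * θ * x)) ∂μ)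
        = g c * (g d * (v * (f d * (f c * θ)) ^ 2 / 2
            + ∫ x, (1 - Real.cos (f d * (f c * θ) * x)) ∂μ)) := by
      intro θ
      have h4 := congrArg Complex.re (h1 θ)
      simp only [Complex.re_ofReal_mul] at h4
      rw [hRe (f (c * d) * θ), hRe (f d * (f c * θ))] at h4
      exact h4
    have hA1 : 0 < f (c * d) := hfpos _ hcd
    have hB1 : 0 < f c * f d := mul_pos (hfpos _ hc) (hfpos _ hd)
    have hG1 : 0 < g (c * d) := hgpos _ hcd
    have hG2 : 0 < g c * g d := mul_pos (hgpos _ hc) (hgpos _ hd)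
    have h3 : ∀ θ : ℝ,
        (g c * g d / g (c * d)) * (v * ((f c * f d / f (c * d)) * θ) ^ 2 / 2
            + ∫ x, (1 - Real.cos ((f c * f d / f (c * d)) * θ * x)) ∂μ)
        = v * θ ^ 2 / 2 + ∫ x, (1 - Real.cos (θ * x)) ∂μ := by
      intro θ
      have h4 := h2 (θ / f (c * d))
      have e1 : f (c * d) * (θ / f (c * d)) = θ := by field_simp
      have e2 : f d * (f c * (θ / f (c * d))) = (f c * f d / f (c * d)) * θ := by
        field_simp
      rw [e1, e2] at h4
      rw [div_mul_eq_mul_div, div_eq_iff hG1.ne']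
      linear_combination -h4
    have hrig := FGAux.rigidity v hv hμ0 hμne hx2
      (s := f c * f d / f (c * d)) (lam := g c * g d / g (c * d))
      (div_pos hB1 hA1) (div_pos hG2 hG1) h3
    constructor
    · exact ((div_eq_one_iff_eq hA1.ne').mp hrig.1).symm
    · exact ((div_eq_one_iff_eq hG1.ne').mp hrig.2).symm
  have hfmul : ∀ c d : ℝ, 0 < c → 0 < d → f (c * d) = f c * f d :=
    fun c d hc hd => (hmulm c d hc hd).1
  have hgmul : ∀ c d : ℝ, 0 < c → 0 < d → g (c * d) = g c * g d :=
    fun c d hc hd => (hmulm c d hc hd).2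
  have hfpow := FGAux.mult_cont_pow f hfpos hfcont hfmul
  have hgpow := FGAux.mult_cont_pow g hgpos hgcont hgmul
  refine ⟨(Real.log (f (Real.exp 1)), Real.log (g (Real.exp 1))),
    fun c hc => ⟨hfpow c hc, hgpow c hc⟩, ?_⟩
  rintro ⟨q1, q2⟩ hq
  have h2 := hq 2 (by norm_num)
  have hf2 := hfpow 2 (by norm_num)
  have hg2 := hgpow 2 (by norm_num)
  have hlog2 : Real.log 2 ≠ 0 := (Real.log_pos one_lt_two).ne'
  have e1 : q1 = Real.log (f (Real.exp 1)) := by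
    have h5 : (2 : ℝ) ^ q1 = (2 : ℝ) ^ Real.log (f (Real.exp 1)) := by
      rw [← h2.1, ← hf2]
    have h6 := congrArg Real.log h5
    rw [Real.log_rpow (by norm_num), Real.log_rpow (by norm_num)] at h6
    exact mul_right_cancel₀ hlog2 h6
  have e2 : q2 = Real.log (g (Real.exp 1)) := by
    have h5 : (2 : ℝ) ^ q2 = (2 : ℝ) ^ Real.log (g (Real.exp 1)) := by
      rw [← h2.2, ← hg2]
    have h6 := congrArg Real.log h5
    rw [Real.log_rpow (by norm_num), Real.log_rpow (by norm_num)] at h6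
    exact mul_right_cancel₀ hlog2 h6
  exact Prod.ext e1 e2
end

section
/- Let φ : ℝ → ℂ be measurable and f : ℝ² → ℝ be measurable, and let α, δ ∈ ℝ. Assume that f satisfies the dilation equation f(t,u) = T^{α−δ/2} f(t/T, u/T^δ) for all t, u ∈ ℝ and T > 0, and that for all k ∈ ℕ, t_1,…,t_k ∈ ℝ and θ_1,…,θ_k ∈ ℝ the function u ↦ φ(Σ_{j=1}^k θ_j f(t_j, u)) is Lebesgue integrable on ℝ. Define ψ_{t_1,…,t_k}(θ_1,…,θ_k) = ∫_ℝ φ(Σ_{j=1}^k θ_j f(t_j, u)) du. Then ψ_{T t_1,…,T t_k}(θ_1,…,θ_k) = T^δ ψ_{t_1,…,t_k}(T^{α−δ/2} θ_1,…, T^{α−δ/2} θ_k) for all T > 0, k ∈ ℕ, θ_1,…,θ_k ∈ ℝ and t_1,…,t_k ∈ ℝ; i.e., the generalized fractional Lévy process with kernel f and Lévy characteristic exponent φ is (α,δ)-dilatively stable. -/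
open MeasureTheory

/-- A generalized fractional Lévy process whose kernel satisfies the
dilation equation `f(t,u) = T^{α−δ/2} f(t/T, u/T^δ)` is `(α,δ)`-dilatively stable. -/
theorem generalized_fractional_levy_dilatively_stable
    (φ : ℝ → ℂ) (hφ : Measurable φ)
    (f : ℝ → ℝ → ℝ) (hf : Measurable (Function.uncurry f))
    (α δ : ℝ)
    (hdil : ∀ t u : ℝ, ∀ T : ℝ, 0 < T → f t u = T ^ (α - δ / 2) * f (t / T) (u / T ^ δ))
    (hint : ∀ (k : ℕ) (t θ : Fin k → ℝ),
      Integrable (fun u : ℝ => φ (∑ j, θ j * f (t j) u)))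
    (ψ : ∀ k : ℕ, (Fin k → ℝ) → (Fin k → ℝ) → ℂ)
    (hψ : ∀ (k : ℕ) (t θ : Fin k → ℝ), ψ k t θ = ∫ u : ℝ, φ (∑ j, θ j * f (t j) u)) :
    ∀ T : ℝ, 0 < T → ∀ (k : ℕ) (t θ : Fin k → ℝ),
      ψ k (fun i => T * t i) θ
        = ((T ^ δ : ℝ) : ℂ) * ψ k t (fun i => T ^ (α - δ / 2) * θ i) := by
  intro T hT k t θ
  have hTδ : (0:ℝ) < T ^ δ := Real.rpow_pos_of_pos hT δ
  rw [hψ, hψ]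
  have h1 : (fun u : ℝ => φ (∑ j, θ j * f (T * t j) u))
      = fun u : ℝ => φ (∑ j, (T ^ (α - δ / 2) * θ j) * f (t j) (u / T ^ δ)) := by
    funext u
    congr 1
    refine Finset.sum_congr rfl fun j _ => ?_
    rw [hdil (T * t j) u T hT, mul_div_cancel_left₀ _ hT.ne']
    ring
  rw [h1]
  rw [MeasureTheory.Measure.integral_comp_div
        (fun u : ℝ => φ (∑ j, (T ^ (α - δ / 2) * θ j) * f (t j) u)) (T ^ δ)]
  rw [abs_of_pos hTδ]
  simp [Complex.real_smul]
end

section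
/- Let β ∈ (−1,1) and C > 0, and define f : ℝ² → ℝ by f(x,t) = (1 − e^{−xt})/x if x > 0 and t > 0, and f(x,t) = 0 otherwise. For k ∈ ℕ, t_1,…,t_k ∈ [0,∞) and θ_1,…,θ_k ∈ ℝ define ψ_{t_1,…,t_k}(θ_1,…,θ_k) = −C ∫_0^∞ ( exp{ −(1/2) ∫_ℝ ( Σ_{j=1}^k θ_j (f(x, t_j − s) − f(x, −s)) )² ds } − 1 ) x^β dx, assuming all these integrals are absolutely convergent. Then for all T > 0, k ∈ ℕ, θ_1,…,θ_k ∈ ℝ and t_1,…,t_k ∈ [0,∞), ψ_{T t_1,…,T t_k}(θ_1,…,θ_k) = T^{−β−1} ψ_{t_1,…,t_k}(T^{3/2} θ_1,…, T^{3/2} θ_k); i.e., the limit process Z_β of joint temporal and contemporaneous aggregation of random-coefficient AR(1) processes is (1 − β/2, −β−1)-dilatively stable. -/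
open MeasureTheory

/-- Scaling identity for the kernel `f`. -/
lemma f_scale (f : ℝ → ℝ → ℝ)
    (hf : ∀ x t : ℝ, f x t = if 0 < x ∧ 0 < t then (1 - Real.exp (-(x * t))) / x else 0)
    {T : ℝ} (hT : 0 < T) (x u : ℝ) :
    f x (T * u) = T * f (T * x) u := by
  have hu' : 0 < T * u ↔ 0 < u := ⟨fun h => by nlinarith, fun h => mul_pos hT h⟩
  have hx' : 0 < T * x ↔ 0 < x := ⟨fun h => by nlinarith, fun h => mul_pos hT h⟩
  rw [hf, hf]
  by_cases h : 0 < x ∧ 0 < u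
  · rw [if_pos ⟨h.1, hu'.mpr h.2⟩, if_pos ⟨hx'.mpr h.1, h.2⟩,
      show x * (T * u) = T * x * u by ring]
    rw [← mul_div_assoc]
    exact (mul_div_mul_left _ x hT.ne').symm
  · rw [if_neg (fun h' => h ⟨h'.1, hu'.mp h'.2⟩), if_neg (fun h' => h ⟨hx'.mp h'.1, h'.2⟩),
      mul_zero]

/-- The limit process `Z_β` of joint temporal and contemporaneous
aggregation of random-coefficient AR(1) processes is `(1 − β/2, −β−1)`-dilatively stable:
its characteristic exponents satisfy
`ψ_{Tt₁,…,Ttₖ}(θ) = T^{−β−1} ψ_{t₁,…,tₖ}(T^{3/2} θ)`. -/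
theorem aggregation_limit_process_dilatively_stable
    (β : ℝ) (hβ : β ∈ Set.Ioo (-1 : ℝ) 1) (C : ℝ) (hC : 0 < C)
    (f : ℝ → ℝ → ℝ)
    (hf : ∀ x t : ℝ, f x t = if 0 < x ∧ 0 < t then (1 - Real.exp (-(x * t))) / x else 0)
    (ψ : ∀ k : ℕ, (Fin k → ℝ) → (Fin k → ℝ) → ℝ)
    -- absolute convergence of the inner integrals
    (hint1 : ∀ (x : ℝ) (k : ℕ) (t θ : Fin k → ℝ),
      Integrable (fun s : ℝ => (∑ j, θ j * (f x (t j - s) - f x (-s))) ^ 2))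
    -- absolute convergence of the outer integrals
    (hint2 : ∀ (k : ℕ) (t θ : Fin k → ℝ),
      IntegrableOn
        (fun x : ℝ =>
          (Real.exp (-(1 / 2) * ∫ s : ℝ, (∑ j, θ j * (f x (t j - s) - f x (-s))) ^ 2) - 1)
            * x ^ β)
        (Set.Ioi 0))
    (hψ : ∀ (k : ℕ) (t : Fin k → ℝ), (∀ i, 0 ≤ t i) → ∀ θ : Fin k → ℝ,
      ψ k t θ = -C * ∫ x in Set.Ioi (0 : ℝ),
        (Real.exp (-(1 / 2) * ∫ s : ℝ, (∑ j, θ j * (f x (t j - s) - f x (-s))) ^ 2) - 1)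
          * x ^ β) :
    ∀ T : ℝ, 0 < T → ∀ (k : ℕ) (t : Fin k → ℝ), (∀ i, 0 ≤ t i) → ∀ θ : Fin k → ℝ,
      ψ k (fun i => T * t i) θ
        = T ^ (-β - 1) * ψ k t (fun i => T ^ ((3 : ℝ) / 2) * θ i) := by
  intro T hT k t ht θ
  have hT' : T ≠ 0 := hT.ne'
  have h3 : (T ^ ((3:ℝ)/2)) ^ (2:ℕ) = T ^ (3:ℕ) := by
    rw [← Real.rpow_natCast (T ^ ((3:ℝ)/2)) 2, ← Real.rpow_mul hT.le,
      ← Real.rpow_natCast T 3]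
    norm_num
  -- key inner-integral identity
  have hinner : ∀ x : ℝ,
      (∫ s : ℝ, (∑ j, θ j * (f x (T * t j - s) - f x (-s))) ^ 2)
        = ∫ s : ℝ, (∑ j, (T ^ ((3:ℝ)/2) * θ j) * (f (T * x) (t j - s) - f (T * x) (-s))) ^ 2 := by
    intro x
    have h1 : ∀ s : ℝ, (∑ j, θ j * (f x (T * t j - s) - f x (-s))) ^ 2
        = T ^ 2 * (∑ j, θ j * (f (T * x) (t j - T⁻¹ * s) - f (T * x) (-(T⁻¹ * s)))) ^ 2 := by
      intro s
      have e1 : ∀ j, f x (T * t j - s) = T * f (T * x) (t j - T⁻¹ * s) := by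
        intro j
        rw [← f_scale f hf hT]
        congr 1
        rw [mul_sub, mul_inv_cancel_left₀ hT' s]
      have e2 : f x (-s) = T * f (T * x) (-(T⁻¹ * s)) := by
        rw [← f_scale f hf hT]
        congr 1
        rw [mul_neg, mul_inv_cancel_left₀ hT' s]
      rw [show (∑ j, θ j * (f x (T * t j - s) - f x (-s)))
          = T * ∑ j, θ j * (f (T * x) (t j - T⁻¹ * s) - f (T * x) (-(T⁻¹ * s))) by
        rw [Finset.mul_sum]
        refine Finset.sum_congr rfl fun j _ => ?_
        rw [e1 j, e2]; ring]
      ring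
    have hpt : ∀ s' : ℝ,
        (∑ j, (T ^ ((3:ℝ)/2) * θ j) * (f (T * x) (t j - s') - f (T * x) (-s'))) ^ 2
          = T ^ 3 * (∑ j, θ j * (f (T * x) (t j - s') - f (T * x) (-s'))) ^ 2 := by
      intro s'
      rw [show (∑ j, (T ^ ((3:ℝ)/2) * θ j) * (f (T * x) (t j - s') - f (T * x) (-s')))
          = T ^ ((3:ℝ)/2) * ∑ j, θ j * (f (T * x) (t j - s') - f (T * x) (-s')) by
        rw [Finset.mul_sum]; exact Finset.sum_congr rfl fun j _ => by ring]
      rw [mul_pow, h3]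
    calc (∫ s : ℝ, (∑ j, θ j * (f x (T * t j - s) - f x (-s))) ^ 2)
        = ∫ s : ℝ, T ^ 2 *
            (∑ j, θ j * (f (T * x) (t j - T⁻¹ * s) - f (T * x) (-(T⁻¹ * s)))) ^ 2 :=
          integral_congr_ae (Filter.Eventually.of_forall h1)
      _ = T ^ 2 * ∫ s : ℝ,
            (fun s' => (∑ j, θ j * (f (T * x) (t j - s') - f (T * x) (-s'))) ^ 2) (T⁻¹ * s) :=
          integral_const_mul _ _
      _ = T ^ 2 * (|T⁻¹⁻¹| • ∫ s' : ℝ,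
            (∑ j, θ j * (f (T * x) (t j - s') - f (T * x) (-s'))) ^ 2) := by
          rw [MeasureTheory.Measure.integral_comp_mul_left
            (fun s' => (∑ j, θ j * (f (T * x) (t j - s') - f (T * x) (-s'))) ^ 2) T⁻¹]
      _ = ∫ s' : ℝ, T ^ 3 * (∑ j, θ j * (f (T * x) (t j - s') - f (T * x) (-s'))) ^ 2 := by
          rw [integral_const_mul, inv_inv, abs_of_pos hT, smul_eq_mul]; ring
      _ = ∫ s' : ℝ, (∑ j, (T ^ ((3:ℝ)/2) * θ j) * (f (T * x) (t j - s') - f (T * x) (-s'))) ^ 2 :=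
          integral_congr_ae (Filter.Eventually.of_forall fun s' => (hpt s').symm)
  have ht' : ∀ i, 0 ≤ T * t i := fun i => mul_nonneg hT.le (ht i)
  rw [hψ k (fun i => T * t i) ht' θ, hψ k t ht (fun i => T ^ ((3:ℝ)/2) * θ i)]
  set G : ℝ → ℝ := fun y =>
    (Real.exp (-(1 / 2) * ∫ s : ℝ,
      (∑ j, (T ^ ((3:ℝ)/2) * θ j) * (f y (t j - s) - f y (-s))) ^ 2) - 1) * y ^ β with hG
  have hout : (∫ x in Set.Ioi (0:ℝ),
      (Real.exp (-(1 / 2) * ∫ s : ℝ, (∑ j, θ j * (f x (T * t j - s) - f x (-s))) ^ 2) - 1)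
        * x ^ β)
      = T ^ (-β - 1) * ∫ y in Set.Ioi (0:ℝ), G y := by
    have hTβ : (T : ℝ) ^ β ≠ 0 := (Real.rpow_pos_of_pos hT β).ne'
    have step1 : (∫ x in Set.Ioi (0:ℝ),
        (Real.exp (-(1 / 2) * ∫ s : ℝ, (∑ j, θ j * (f x (T * t j - s) - f x (-s))) ^ 2) - 1)
          * x ^ β)
        = ∫ x in Set.Ioi (0:ℝ), T ^ (-β) * G (T * x) := by
      refine setIntegral_congr_fun measurableSet_Ioi fun x hx => ?_
      have hx0 : (0:ℝ) < x := hx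
      rw [hinner x, hG]
      simp only
      rw [Real.mul_rpow hT.le hx0.le, Real.rpow_neg hT.le]
      field_simp
    rw [step1, integral_const_mul, MeasureTheory.integral_comp_mul_left_Ioi G 0 hT,
      mul_zero, smul_eq_mul, ← mul_assoc]
    congr 1
    rw [Real.rpow_sub hT, Real.rpow_one, div_eq_mul_inv]
  rw [hout]
  ring
end

section
/- Let α ∈ (0,2], H ∈ (0,1) with H ≠ 1/α, and σ > 0. Define f : ℝ² → ℝ by f(t,u) = |t−u|^{H−1/α} − |u|^{H−1/α} if t ≠ u and u ≠ 0, and f(t,u) = 0 if t = u or u = 0. Assume that for all k ∈ ℕ, t_1,…,t_k ∈ ℝ and θ_1,…,θ_k ∈ ℝ, the function u ↦ |σ Σ_{j=1}^k θ_j f(t_j,u)|^α is Lebesgue integrable on ℝ, and define ψ_{t_1,…,t_k}(θ_1,…,θ_k) = ∫_ℝ |σ Σ_{j=1}^k θ_j f(t_j, u)|^α du. Then for all T > 0, k ∈ ℕ, θ_1,…,θ_k ∈ ℝ and t_1,…,t_k ∈ ℝ, ψ_{T t_1,…,T t_k}(θ_1,…,θ_k) = T · ψ_{t_1,…,t_k}(T^{H−1/α}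 θ_1,…, T^{H−1/α} θ_k). -/
open MeasureTheory

/-- The characteristic exponents of the well-balanced linear fractional
stable process satisfy `ψ_{Tt₁,…,Ttₖ}(θ) = T · ψ_{t₁,…,tₖ}(T^{H−1/α} θ)`, i.e. the process
is `(H − 1/α + 1/2, 1)`-dilatively stable. -/
theorem well_balanced_linear_fractional_stable_scaling
    (α H σ : ℝ) (hα : α ∈ Set.Ioc (0 : ℝ) 2) (hH : H ∈ Set.Ioo (0 : ℝ) 1)
    (hHα : H ≠ 1 / α) (hσ : 0 < σ)
    (f : ℝ → ℝ → ℝ)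
    (hf : ∀ t u : ℝ, f t u =
      if t ≠ u ∧ u ≠ 0 then |t - u| ^ (H - 1 / α) - |u| ^ (H - 1 / α) else 0)
    (hint : ∀ (k : ℕ) (t θ : Fin k → ℝ),
      Integrable (fun u : ℝ => |σ * ∑ j, θ j * f (t j) u| ^ α))
    (ψ : ∀ k : ℕ, (Fin k → ℝ) → (Fin k → ℝ) → ℝ)
    (hψ : ∀ (k : ℕ) (t θ : Fin k → ℝ),
      ψ k t θ = ∫ u : ℝ, |σ * ∑ j, θ j * f (t j) u| ^ α) :
    ∀ T : ℝ, 0 < T → ∀ (k : ℕ) (t θ : Fin k → ℝ),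
      ψ k (fun i => T * t i) θ = T * ψ k t (fun i => T ^ (H - 1 / α) * θ i) := by
  intro T hT k t θ
  have hfT : ∀ a u : ℝ, f (T * a) (T * u) = T ^ (H - 1 / α) * f a u := by
    intro a u
    rw [hf, hf]
    by_cases h : a ≠ u ∧ u ≠ 0
    · have h1 : T * a ≠ T * u := fun he => h.1 (mul_left_cancel₀ hT.ne' he)
      have h2 : T * u ≠ 0 := mul_ne_zero hT.ne' h.2
      rw [if_pos ⟨h1, h2⟩, if_pos h,
        show T * a - T * u = T * (a - u) by ring, abs_mul, abs_mul,
        abs_of_pos hT, Real.mul_rpow hT.le (abs_nonneg _),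
        Real.mul_rpow hT.le (abs_nonneg _)]
      ring
    · have h1 : ¬(T * a ≠ T * u ∧ T * u ≠ 0) := by
        push_neg at h ⊢
        intro he
        rcases eq_or_ne a u with h' | h'
        · exact absurd (by rw [h']) he
        · exact mul_eq_zero_of_right T (h h')
      rw [if_neg h1, if_neg h, mul_zero]
  have key : ∀ u : ℝ, |σ * ∑ j, θ j * f (T * t j) (T * u)| ^ α
      = |σ * ∑ j, (T ^ (H - 1 / α) * θ j) * f (t j) u| ^ α := by
    intro u
    congr 3
    exact Finset.sum_congr rfl fun j _ => by rw [hfT]; ring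
  rw [hψ, hψ]
  have hsub := MeasureTheory.Measure.integral_comp_mul_left
    (fun u : ℝ => |σ * ∑ j, θ j * f (T * t j) u| ^ α) T
  have hTabs : |T⁻¹| = T⁻¹ := abs_of_pos (inv_pos.mpr hT)
  rw [hTabs, smul_eq_mul] at hsub
  have : (∫ u : ℝ, |σ * ∑ j, θ j * f (T * t j) (T * u)| ^ α)
      = ∫ u : ℝ, |σ * ∑ j, (T ^ (H - 1 / α) * θ j) * f (t j) u| ^ α :=
    integral_congr_ae (Filter.Eventually.of_forall key)
  rw [this] at hsub
  rw [hsub]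
  field_simp
end

section
/- Let 𝕋 be ℝ, [0,∞) or (0,∞), and let (X_t)_{t∈𝕋} be a real-valued stochastic process whose finite-dimensional distributions are infinitely divisible, with characteristic exponents ψ_{t_1,…,t_k}, and suppose X is (α,δ)-dilatively stable for some α, δ ∈ ℝ. If E(X_t²) < ∞ for all t ∈ 𝕋, then for all T > 0 and t ∈ 𝕋, E(X_{Tt}) = T^{α+δ/2} E(X_t) and Var(X_{Tt}) = T^{2α} Var(X_t). -/
open MeasureTheory ProbabilityTheory Filter Topology

lemma exp_taylor3 (z : ℂ) (hz : ‖z‖ ≤ 1) :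
    ‖Complex.exp z - 1 - z - z^2/2‖ ≤ ‖z‖ ^ 3 := by
  have h := Complex.exp_bound hz (by norm_num : (0:ℕ) < 3)
  have e : ∑ m ∈ Finset.range 3, z ^ m / m.factorial = 1 + z + z^2/2 := by
    simp [Finset.sum_range_succ]
  rw [e] at h
  have h2 : ‖z‖ ^ 3 * ((Nat.succ 3 : ℝ) * (((3:ℕ).factorial : ℝ) * (3:ℝ))⁻¹)
      ≤ ‖z‖ ^ 3 := by
    have h3 : ((Nat.succ 3 : ℝ) * (((3:ℕ).factorial : ℝ) * (3:ℝ))⁻¹) ≤ 1 := by norm_num [Nat.factorial]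
    nlinarith [pow_nonneg (norm_nonneg z) 3]
  calc ‖Complex.exp z - 1 - z - z^2/2‖
      = ‖Complex.exp z - (1 + z + z^2/2)‖ := by ring_nf
    _ ≤ _ := h
    _ ≤ ‖z‖ ^ 3 := h2

lemma exp_I_taylor2 (u : ℝ) :
    ‖Complex.exp (Complex.I * u) - 1 - Complex.I * u‖ ≤ 3 * u^2 := by
  have habs : ‖Complex.I * u‖ = |u| := by simp
  rcases le_or_gt (|u|) 1 with h | h
  · have := Complex.norm_exp_sub_one_sub_id_le (x := Complex.I * u) (by rw [habs]; exact h)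
    rw [habs] at this
    calc ‖Complex.exp (Complex.I * u) - 1 - Complex.I * u‖ ≤ |u|^2 := this
      _ = u^2 := _root_.sq_abs u
      _ ≤ 3 * u^2 := by nlinarith [sq_nonneg u]
  · have h1 : ‖Complex.exp (Complex.I * u)‖ = 1 := by
      rw [Complex.norm_exp]; simp
    have hu2 : |u|^2 = u^2 := _root_.sq_abs u
    calc ‖Complex.exp (Complex.I * u) - 1 - Complex.I * u‖
        ≤ ‖Complex.exp (Complex.I * u) - 1‖ + ‖Complex.I * u‖ :=
          norm_sub_le _ _
      _ ≤ (‖Complex.exp (Complex.I * u)‖ + ‖(1:ℂ)‖) + |u| := by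
          rw [habs]; gcongr; exact norm_sub_le _ _
      _ = 2 + |u| := by rw [h1]; simp; ring
      _ ≤ 3 * u^2 := by nlinarith [abs_nonneg u]

lemma integral_ofReal'' {Ω : Type*} [MeasurableSpace Ω] (P : Measure Ω) (f : Ω → ℝ) :
    ∫ ω, ((f ω : ℂ)) ∂P = ((∫ ω, f ω ∂P : ℝ) : ℂ) := integral_ofReal

lemma charFun_taylor {Ω : Type*} [MeasurableSpace Ω] (P : Measure Ω) [IsProbabilityMeasure P]
    (Y : Ω → ℝ) (hY : Measurable Y) (hY2 : Integrable (fun ω => Y ω ^ 2) P) :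
    Tendsto (fun θ : ℝ =>
      ((∫ ω, Complex.exp (Complex.I * θ * Y ω) ∂P) - 1 - Complex.I * (∫ ω, Y ω ∂P) * θ) / (θ:ℂ)^2)
      (𝓝[≠] (0:ℝ)) (𝓝 (-((∫ ω, Y ω ^ 2 ∂P : ℝ) : ℂ)/2)) := by
  have hmem : MemLp Y 2 P := (memLp_two_iff_integrable_sq hY.aestronglyMeasurable).2 hY2
  have hY1 : Integrable Y P := hmem.integrable (by norm_num)
  set F : ℝ → Ω → ℂ := fun θ ω =>
    (Complex.exp (Complex.I * θ * Y ω) - 1 - Complex.I * θ * Y ω) / (θ:ℂ)^2 with hF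
  have hmeasθ : ∀ θ : ℝ, Measurable (fun ω => Complex.exp (Complex.I * θ * Y ω)) := by
    intro θ
    exact Complex.measurable_exp.comp ((measurable_const.mul (Complex.measurable_ofReal.comp hY)))
  have hint_exp : ∀ θ : ℝ, Integrable (fun ω => Complex.exp (Complex.I * θ * Y ω)) P := by
    intro θ
    refine Integrable.mono' (integrable_const 1) (hmeasθ θ).aestronglyMeasurable ?_
    refine Filter.Eventually.of_forall fun ω => ?_
    have : Complex.I * θ * (Y ω : ℂ) = Complex.I * ((θ * Y ω : ℝ) : ℂ) := by push_cast; ring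
    rw [this]
    rw [Complex.norm_exp]
    simp
  -- main DCT
  have key : Tendsto (fun θ : ℝ => ∫ ω, F θ ω ∂P) (𝓝[≠] (0:ℝ))
      (𝓝 (∫ ω, ((-(Y ω)^2 / 2 : ℝ) : ℂ) ∂P)) := by
    apply tendsto_integral_filter_of_dominated_convergence (fun ω => 3 * Y ω ^ 2)
    · refine Filter.Eventually.of_forall fun θ => ?_
      exact ((((hmeasθ θ).sub measurable_const).sub
        (measurable_const.mul (Complex.measurable_ofReal.comp hY))).div measurable_const
        |>.aestronglyMeasurable)
    · filter_upwards [self_mem_nhdsWithin] with θ (hθ : θ ≠ 0)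
      refine Filter.Eventually.of_forall fun ω => ?_
      have h1 : Complex.I * θ * (Y ω : ℂ) = Complex.I * ((θ * Y ω : ℝ) : ℂ) := by push_cast; ring
      rw [hF]
      simp only
      rw [h1, norm_div]
      have h2 := exp_I_taylor2 (θ * Y ω)
      have h3 : ‖(θ:ℂ)^2‖ = θ^2 := by
        rw [norm_pow]; simp [Complex.norm_real, _root_.sq_abs]
      rw [h3]
      rw [div_le_iff₀ (by positivity)]
      calc ‖Complex.exp (Complex.I * ((θ * Y ω : ℝ):ℂ)) - 1 - Complex.I * ((θ * Y ω : ℝ):ℂ)‖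
          ≤ 3 * (θ * Y ω)^2 := h2
        _ = 3 * Y ω ^2 * θ^2 := by ring
    · exact hY2.const_mul 3
    · refine Filter.Eventually.of_forall fun ω => ?_
      rw [tendsto_iff_norm_sub_tendsto_zero]
      set x := Y ω with hx
      have hbd : ∀ᶠ θ : ℝ in 𝓝[≠] (0:ℝ), ‖F θ ω - ((-x^2/2 : ℝ) : ℂ)‖ ≤ |x|^3 * |θ| := by
        have hsmall : ∀ᶠ θ : ℝ in 𝓝[≠] (0:ℝ), |θ| * |x| ≤ 1 := by
          have htd : Tendsto (fun θ : ℝ => |θ| * |x|) (𝓝[≠] (0:ℝ)) (𝓝 0) := by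
            have := (continuous_abs.tendsto' (0:ℝ) 0 (abs_zero)).mono_left
              (nhdsWithin_le_nhds : 𝓝[≠] (0:ℝ) ≤ 𝓝 0)
            simpa using this.mul_const |x|
          filter_upwards [htd.eventually_le_const (by norm_num : (0:ℝ) < 1)] with θ h using h
        filter_upwards [self_mem_nhdsWithin, hsmall] with θ (hθ : θ ≠ 0) hsm
        have hθC : (θ:ℂ) ≠ 0 := Complex.ofReal_ne_zero.mpr hθ
        have hz : ‖Complex.I * θ * x‖ ≤ 1 := by
          have : ‖Complex.I * θ * x‖ = |θ| * |x| := by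
            simp [map_mul, Complex.norm_real, abs_mul]
          rw [this]; exact hsm
        have h4 := exp_taylor3 (Complex.I * θ * x) hz
        have hsq : (Complex.I * θ * x)^2 = -((θ:ℂ)^2 * (x:ℂ)^2) := by
          ring_nf
          rw [Complex.I_sq]
          ring
        have heq : F θ ω - ((-x^2/2 : ℝ) : ℂ) =
            (Complex.exp (Complex.I * θ * x) - 1 - Complex.I * θ * x
              - (Complex.I * θ * x)^2/2) / (θ:ℂ)^2 := by
          rw [hF]
          simp only [← hx]
          rw [hsq]
          push_cast
          field_simp
        rw [heq, norm_div]
        have h3 : ‖(θ:ℂ)^2‖ = θ^2 := by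
          rw [norm_pow]; simp [Complex.norm_real, _root_.sq_abs]
        rw [h3, div_le_iff₀ (by positivity)]
        calc ‖Complex.exp (Complex.I * θ * x) - 1 - Complex.I * θ * x
              - (Complex.I * θ * x)^2/2‖
            ≤ ‖Complex.I * θ * x‖ ^ 3 := h4
          _ = (|θ| * |x|)^3 := by
              congr 1
              simp [map_mul, Complex.norm_real]
          _ ≤ |x|^3 * |θ| * θ^2 := by
              have h5 : (|θ| * |x|)^3 = |x|^3 * |θ| * |θ|^2 := by ring
              rw [h5, _root_.sq_abs]
      have hlim : Tendsto (fun θ : ℝ => |x|^3 * |θ|) (𝓝[≠] (0:ℝ)) (𝓝 0) := by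
        have := (continuous_abs.tendsto' (0:ℝ) 0 (abs_zero)).mono_left
          (nhdsWithin_le_nhds : 𝓝[≠] (0:ℝ) ≤ 𝓝 0)
        simpa using this.const_mul (|x|^3)
      exact squeeze_zero' (Filter.Eventually.of_forall fun θ => norm_nonneg _) hbd hlim
  -- rewrite both sides
  have hRHS : (∫ ω, ((-(Y ω)^2 / 2 : ℝ) : ℂ) ∂P) = -((∫ ω, Y ω ^ 2 ∂P : ℝ) : ℂ)/2 := by
    rw [integral_ofReal'']
    rw [integral_div, integral_neg]
    push_cast
    ring
  rw [hRHS] at key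
  refine key.congr' ?_
  filter_upwards [self_mem_nhdsWithin] with θ (hθ : θ ≠ 0)
  rw [hF]
  simp only
  rw [integral_div]
  congr 1
  have hi1 : Integrable (fun ω => Complex.exp (Complex.I * θ * Y ω) - 1) P :=
    (hint_exp θ).sub (integrable_const 1)
  have hi2 : Integrable (fun ω => Complex.I * θ * (Y ω : ℂ)) P := by
    have : Integrable (fun ω => (Y ω : ℂ)) P := hY1.ofReal
    exact this.const_mul (Complex.I * θ)
  rw [integral_sub hi1 hi2, integral_sub (hint_exp θ) (integrable_const 1)]
  rw [integral_const]
  simp only [probReal_univ, one_smul]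
  rw [integral_const_mul, integral_ofReal'']
  ring

lemma psi_limit {Ω : Type*} [MeasurableSpace Ω] (P : Measure Ω) [IsProbabilityMeasure P]
    (Y : Ω → ℝ) (hY : Measurable Y) (hY2 : Integrable (fun ω => Y ω ^ 2) P)
    (g : ℝ → ℂ) (hg0 : g 0 = 0) (hgc : Continuous g)
    (hgchar : ∀ θ : ℝ, (∫ ω, Complex.exp (Complex.I * θ * Y ω) ∂P) = Complex.exp (-g θ)) :
    Tendsto (fun θ : ℝ => g θ / (θ:ℂ)^2 + Complex.I * (∫ ω, Y ω ∂P) / θ) (𝓝[≠] (0:ℝ))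
      (𝓝 ((((∫ ω, Y ω ^ 2 ∂P) - (∫ ω, Y ω ∂P)^2 : ℝ) : ℂ)/2)) := by
  set l := 𝓝[≠] (0:ℝ) with hl
  set m : ℝ := ∫ ω, Y ω ∂P with hm
  set s : ℝ := ∫ ω, Y ω ^ 2 ∂P with hs
  set w : ℝ → ℂ := fun θ => Complex.exp (-g θ) - 1 with hw
  set R : ℝ → ℂ := fun θ => Complex.exp (-g θ) - 1 + g θ - (g θ)^2/2 with hR
  have hgid : ∀ θ, g θ = -(w θ) + (g θ)^2/2 + R θ := by
    intro θ; rw [hw, hR]; ring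
  have habs0 : Tendsto (fun θ : ℝ => |θ|) l (𝓝 0) :=
    (continuous_abs.tendsto' (0:ℝ) 0 abs_zero).mono_left nhdsWithin_le_nhds
  have key0 : ∀ (f : ℝ → ℂ) (C : ℝ), (∀ᶠ θ in l, ‖f θ‖ ≤ C * |θ|) → Tendsto f l (𝓝 0) := by
    intro f C hf
    rw [tendsto_zero_iff_norm_tendsto_zero]
    exact squeeze_zero' (Filter.Eventually.of_forall fun θ => norm_nonneg _) hf
      (by simpa using habs0.const_mul C)
  have hθC : Tendsto (fun θ : ℝ => (θ:ℂ)) l (𝓝 0) :=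
    (Complex.continuous_ofReal.tendsto' 0 0 (by simp)).mono_left nhdsWithin_le_nhds
  have hθne : ∀ᶠ θ : ℝ in l, (θ:ℂ) ≠ 0 := by
    filter_upwards [self_mem_nhdsWithin] with θ (hθ : θ ≠ 0)
    exact Complex.ofReal_ne_zero.mpr hθ
  -- Step A
  have hA : Tendsto (fun θ : ℝ => (w θ - Complex.I * m * θ) / (θ:ℂ)^2) l (𝓝 (-(s:ℂ)/2)) := by
    have := charFun_taylor P Y hY hY2
    refine this.congr fun θ => ?_
    rw [hgchar θ]
  -- g → 0
  have hg_to0 : Tendsto g l (𝓝 0) := (hgc.tendsto' 0 0 hg0).mono_left nhdsWithin_le_nhds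
  have ev1 : ∀ᶠ θ in l, ‖g θ‖ ≤ 1/2 := by
    have := hg_to0.norm
    simp only [norm_zero] at this
    exact this.eventually_le_const (by norm_num)
  -- R bound
  have hRbd : ∀ᶠ θ in l, ‖R θ‖ ≤ ‖g θ‖^3 := by
    filter_upwards [ev1] with θ h1
    have hz : ‖-(g θ)‖ ≤ 1 := by
      rw [norm_neg]
      calc ‖g θ‖ ≤ 1/2 := h1
        _ ≤ 1 := by norm_num
    have h4 := exp_taylor3 (-(g θ)) hz
    have he : Complex.exp (-g θ) - 1 - (-(g θ)) - (-(g θ))^2/2 = R θ := by rw [hR]; ring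
    rw [he] at h4
    simpa [norm_neg] using h4
  -- w/θ → I m
  have hwθ : Tendsto (fun θ : ℝ => w θ / θ) l (𝓝 (Complex.I * m)) := by
    have h1 : Tendsto (fun θ : ℝ => ((w θ - Complex.I * m * θ) / (θ:ℂ)^2) * θ) l (𝓝 0) := by
      have := hA.mul hθC
      simpa using this
    have h2 : Tendsto (fun θ : ℝ => (w θ - Complex.I * m * θ) / θ) l (𝓝 0) := by
      refine h1.congr' ?_
      filter_upwards [hθne] with θ hθ
      field_simp
    have h3 := h2.add_const (Complex.I * m)
    rw [zero_add] at h3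
    refine h3.congr' ?_
    filter_upwards [hθne] with θ hθ
    field_simp
    ring
  -- ‖w‖ ≤ (|m|+1)|θ| eventually
  have ev2 : ∀ᶠ θ in l, ‖w θ‖ ≤ (|m| + 1) * |θ| := by
    have h1 : Tendsto (fun θ : ℝ => ‖w θ / (θ:ℂ)‖) l (𝓝 |m|) := by
      have := hwθ.norm
      simpa [map_mul, Complex.norm_real] using this
    have h2 := h1.eventually_le_const (lt_add_one |m|)
    filter_upwards [h2, hθne] with θ hb hθ
    have : ‖w θ / (θ:ℂ)‖ = ‖w θ‖ / |θ| := by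
      rw [norm_div]
      simp [Complex.norm_real]
    rw [this] at hb
    have hθ0 : (0:ℝ) < |θ| := by
      simp only [abs_pos]
      exact fun h => hθ (by exact_mod_cast congrArg Complex.ofReal h)
    calc ‖w θ‖ = ‖w θ‖ / |θ| * |θ| := by field_simp
      _ ≤ (|m| + 1) * |θ| := by gcongr
  -- ‖g‖ ≤ 2‖w‖ eventually
  have ev3 : ∀ᶠ θ in l, ‖g θ‖ ≤ 2 * ‖w θ‖ := by
    filter_upwards [ev1, hRbd] with θ h1 hRb
    have h2 : ‖g θ‖ ≤ ‖w θ‖ + ‖g θ‖^2/2 + ‖R θ‖ := by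
      calc ‖g θ‖ = ‖-(w θ) + (g θ)^2/2 + R θ‖ := by rw [← hgid θ]
        _ ≤ ‖-(w θ) + (g θ)^2/2‖ + ‖R θ‖ := norm_add_le _ _
        _ ≤ (‖-(w θ)‖ + ‖(g θ)^2/2‖) + ‖R θ‖ := by gcongr; exact norm_add_le _ _
        _ = ‖w θ‖ + ‖g θ‖^2/2 + ‖R θ‖ := by
            rw [norm_neg, norm_div, norm_pow]
            norm_num
    have h3 : ‖g θ‖^3 ≤ ‖g θ‖^2/2 := by nlinarith [norm_nonneg (g θ)]
    have h4 : ‖g θ‖^2 ≤ ‖g θ‖/2 := by nlinarith [norm_nonneg (g θ)]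
    nlinarith [norm_nonneg (w θ), norm_nonneg (g θ), norm_nonneg (R θ)]
  have ev4 : ∀ᶠ θ in l, ‖g θ‖ ≤ 2 * (|m| + 1) * |θ| := by
    filter_upwards [ev2, ev3] with θ h2 h3
    calc ‖g θ‖ ≤ 2 * ‖w θ‖ := h3
      _ ≤ 2 * ((|m| + 1) * |θ|) := by gcongr
      _ = 2 * (|m| + 1) * |θ| := by ring
  set C : ℝ := 2 * (|m| + 1) with hC
  have hC0 : 0 < C := by positivity
  -- g/θ → -I m
  have hgθ : Tendsto (fun θ : ℝ => g θ / θ) l (𝓝 (-(Complex.I * m))) := by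
    have hrest : Tendsto (fun θ : ℝ => ((g θ)^2/2 + R θ) / θ) l (𝓝 0) := by
      apply key0 _ (C^2 * 2)
      filter_upwards [ev1, ev4, hRbd, self_mem_nhdsWithin, habs0.eventually_le_const
        (by norm_num : (0:ℝ) < 1)] with θ h1 h4 hRb (hθ : θ ≠ 0) hθ1
      have hθ0 : (0:ℝ) < |θ| := abs_pos.mpr hθ
      have hb : ‖(g θ)^2/2 + R θ‖ ≤ ‖g θ‖^2 := by
        calc ‖(g θ)^2/2 + R θ‖ ≤ ‖(g θ)^2/2‖ + ‖R θ‖ := norm_add_le _ _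
          _ = ‖g θ‖^2/2 + ‖R θ‖ := by rw [norm_div, norm_pow]; norm_num
          _ ≤ ‖g θ‖^2/2 + ‖g θ‖^3 := by gcongr
          _ ≤ ‖g θ‖^2 := by nlinarith [norm_nonneg (g θ), sq_nonneg (‖g θ‖)]
      rw [norm_div]
      have : ‖(θ:ℂ)‖ = |θ| := by simp [Complex.norm_real]
      rw [this, div_le_iff₀ hθ0]
      calc ‖(g θ)^2/2 + R θ‖ ≤ ‖g θ‖^2 := hb
        _ ≤ (C * |θ|)^2 := by
            apply pow_le_pow_left₀ (norm_nonneg _)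
            calc ‖g θ‖ ≤ 2 * (|m|+1) * |θ| := h4
              _ = C * |θ| := by rw [hC]
        _ = C^2 * |θ| * |θ| := by ring
        _ ≤ C^2 * 2 * |θ| * |θ| := by nlinarith [sq_nonneg |θ|]
    have hsum : Tendsto (fun θ : ℝ => -(w θ / θ) + ((g θ)^2/2 + R θ) / θ) l
        (𝓝 (-(Complex.I * m) + 0)) := (hwθ.neg).add hrest
    rw [add_zero] at hsum
    refine hsum.congr' ?_
    filter_upwards [hθne] with θ hθ
    rw [hgid θ]
    field_simp
    ring
  -- R/θ² → 0
  have hRθ2 : Tendsto (fun θ : ℝ => R θ / (θ:ℂ)^2) l (𝓝 0) := by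
    apply key0 _ (C^3)
    filter_upwards [ev4, hRbd, self_mem_nhdsWithin, habs0.eventually_le_const
      (by norm_num : (0:ℝ) < 1)] with θ h4 hRb (hθ : θ ≠ 0) hθ1
    have hθ0 : (0:ℝ) < |θ| := abs_pos.mpr hθ
    rw [norm_div]
    have h5 : ‖((θ:ℂ))^2‖ = |θ|^2 := by
      rw [norm_pow]; simp [Complex.norm_real]
    rw [h5, div_le_iff₀ (by positivity)]
    calc ‖R θ‖ ≤ ‖g θ‖^3 := hRb
      _ ≤ (C * |θ|)^3 := by
          apply pow_le_pow_left₀ (norm_nonneg _)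
          calc ‖g θ‖ ≤ 2 * (|m|+1) * |θ| := h4
            _ = C * |θ| := by rw [hC]
      _ = C^3 * |θ| * |θ|^2 := by ring
      _ ≤ C^3 * |θ| * |θ|^2 := le_refl _
  -- combine
  have hfinal : Tendsto (fun θ : ℝ =>
      -((w θ - Complex.I * m * θ) / (θ:ℂ)^2) + (g θ / θ)^2/2 + R θ / (θ:ℂ)^2) l
      (𝓝 (-(-(s:ℂ)/2) + (-(Complex.I * m))^2/2 + 0)) :=
    (hA.neg.add ((hgθ.pow 2).div_const 2)).add hRθ2
  have hval : -(-(s:ℂ)/2) + (-(Complex.I * m))^2/2 + 0 = ((s - m^2 : ℝ) : ℂ)/2 := by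
    have h6 : (-(Complex.I * m))^2 = -((m:ℂ)^2) := by
      ring_nf
      rw [Complex.I_sq]
      ring
    rw [h6]
    push_cast
    ring
  rw [hval] at hfinal
  refine hfinal.congr' ?_
  filter_upwards [hθne] with θ hθ
  have hw' : w θ = -(g θ) + (g θ)^2/2 + R θ := by
    have := hgid θ
    linear_combination -this
  rw [hw']
  field_simp
  have ht : ((θ:ℂ))⁻¹ ^ 6 * (θ:ℂ)^6 = 1 := by
    rw [← mul_pow, inv_mul_cancel₀ hθ, one_pow]
  linear_combination

/-- For an `(α,δ)`-dilatively stable infinitely divisible process with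
finite second moments, `E(X_{Tt}) = T^{α+δ/2} E(X_t)` and `Var(X_{Tt}) = T^{2α} Var(X_t)`. -/
theorem dilatively_stable_moment_scaling
    {Ω : Type*} [MeasurableSpace Ω] (P : Measure Ω) [IsProbabilityMeasure P]
    (T : Set ℝ) (hT : T = Set.univ ∨ T = Set.Ici 0 ∨ T = Set.Ioi 0)
    (X : ℝ → Ω → ℝ) (hX : ∀ t ∈ T, Measurable (X t))
    (ψ : ∀ k : ℕ, (Fin k → ℝ) → (Fin k → ℝ) → ℂ)
    (hψ0 : ∀ (k : ℕ) (t : Fin k → ℝ), (∀ i, t i ∈ T) → ψ k t 0 = 0)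
    (hψcont : ∀ (k : ℕ) (t : Fin k → ℝ), (∀ i, t i ∈ T) → Continuous (ψ k t))
    (hψchar : ∀ (k : ℕ) (t : Fin k → ℝ), (∀ i, t i ∈ T) → ∀ θ : Fin k → ℝ,
      ∫ ω, Complex.exp (Complex.I * ∑ j, (θ j : ℂ) * (X (t j) ω : ℂ)) ∂P
        = Complex.exp (-ψ k t θ))
    (hID : ∀ (k : ℕ) (t : Fin k → ℝ), (∀ i, t i ∈ T) → ∀ n : ℕ, 0 < n →
      ∃ ρ : Measure (Fin k → ℝ), IsProbabilityMeasure ρ ∧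
        convPow ρ n = Measure.map (fun ω i => X (t i) ω) P)
    (α δ : ℝ)
    -- (α,δ)-dilative stability
    (hDS : ∀ c : ℝ, 0 < c → ∀ (k : ℕ) (t : Fin k → ℝ), (∀ i, t i ∈ T) →
      ∀ θ : Fin k → ℝ,
        ψ k (fun i => c * t i) θ
          = ((c ^ δ : ℝ) : ℂ) * ψ k t (fun i => c ^ (α - δ / 2) * θ i))
    -- finite second moments
    (hL2 : ∀ t ∈ T, Integrable (fun ω => (X t ω) ^ 2) P) :
    ∀ c : ℝ, 0 < c → ∀ t ∈ T,
      (∫ ω, X (c * t) ω ∂P) = c ^ (α + δ / 2) * ∫ ω, X t ω ∂P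
        ∧ variance (X (c * t)) P = c ^ (2 * α) * variance (X t) P := by
  intro c hc t ht
  have hct : c * t ∈ T := by
    rcases hT with h | h | h
    · rw [h]; trivial
    · rw [h] at ht ⊢
      exact mul_nonneg hc.le ht
    · rw [h] at ht ⊢
      exact mul_pos hc ht
  set l := 𝓝[≠] (0:ℝ) with hl
  set b : ℝ := c ^ (α - δ/2) with hbdef
  have hb : 0 < b := Real.rpow_pos_of_pos hc _
  set g : ℝ → ℝ → ℂ := fun s θ => ψ 1 (fun _ => s) (fun _ => θ) with hg
  -- properties of g for s ∈ T
  have hprop : ∀ s ∈ T, g s 0 = 0 ∧ Continuous (g s) ∧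
      ∀ θ : ℝ, (∫ ω, Complex.exp (Complex.I * θ * X s ω) ∂P) = Complex.exp (-(g s θ)) := by
    intro s hs
    have hmem : ∀ i : Fin 1, (fun _ : Fin 1 => s) i ∈ T := fun _ => hs
    refine ⟨hψ0 1 _ hmem, ?_, ?_⟩
    · exact (hψcont 1 _ hmem).comp (continuous_pi fun _ => continuous_id)
    · intro θ
      have h1 := hψchar 1 (fun _ => s) hmem (fun _ => θ)
      simp only [Fin.sum_univ_one, ← mul_assoc] at h1
      exact h1
  obtain ⟨hg0t, hgct, hgchart⟩ := hprop t ht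
  obtain ⟨hg0ct, hgcct, hgcharct⟩ := hprop (c*t) hct
  set m1 : ℝ := ∫ ω, X t ω ∂P with hm1
  set m2 : ℝ := ∫ ω, X (c*t) ω ∂P with hm2
  set s1 : ℝ := ∫ ω, X t ω ^ 2 ∂P with hs1
  set s2 : ℝ := ∫ ω, X (c*t) ω ^ 2 ∂P with hs2
  have K1 := psi_limit P (X t) (hX t ht) (hL2 t ht) (g t) hg0t hgct hgchart
  have K2 := psi_limit P (X (c*t)) (hX _ hct) (hL2 _ hct) (g (c*t)) hg0ct hgcct hgcharct
  -- scaling identity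
  have hscale : ∀ θ : ℝ, g (c*t) θ = ((c^δ : ℝ):ℂ) * g t (b*θ) := by
    intro θ
    exact hDS c hc 1 (fun _ => t) (fun _ => ht) (fun _ => θ)
  -- rpow identities
  have hb2 : c ^ δ * b^2 = c^(2*α) := by
    rw [hbdef, ← Real.rpow_natCast (c ^ (α - δ/2)) 2, ← Real.rpow_mul hc.le,
      ← Real.rpow_add hc]
    norm_num
    ring_nf
  have hb1 : c ^ δ * b = c^(α + δ/2) := by
    rw [hbdef, ← Real.rpow_add hc]
    ring_nf
  have e1 : ((c^(2*α):ℝ):ℂ) = ((c^δ:ℝ):ℂ) * ((b:ℝ):ℂ)^2 := by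
    rw [← hb2]; push_cast; ring
  have e2 : ((c^(α+δ/2):ℝ):ℂ) = ((c^δ:ℝ):ℂ) * ((b:ℝ):ℂ) := by
    rw [← hb1]; push_cast; ring
  -- compose K1 with θ ↦ b θ
  have hcomp : Tendsto (fun θ : ℝ => b*θ) l l := by
    rw [hl, tendsto_nhdsWithin_iff]
    constructor
    · exact ((continuous_const.mul continuous_id).tendsto' 0 0 (by simp)).mono_left
        nhdsWithin_le_nhds
    · filter_upwards [self_mem_nhdsWithin] with θ (hθ : θ ≠ 0)
      exact mul_ne_zero hb.ne' hθ
  have K1b := (K1.comp hcomp).const_mul ((c^(2*α):ℝ):ℂ)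
  have hD : Tendsto (fun θ : ℝ => g (c*t) θ / (θ:ℂ)^2 + Complex.I * (m2:ℂ)/θ
      - ((c^(2*α):ℝ):ℂ) * (g t (b*θ) / ((b*θ:ℝ):ℂ)^2 + Complex.I * (m1:ℂ)/((b*θ:ℝ):ℂ)))
      l (𝓝 (((s2 - m2^2:ℝ):ℂ)/2 - ((c^(2*α):ℝ):ℂ) * (((s1 - m1^2:ℝ):ℂ)/2))) := by
    exact K2.sub K1b
  set Δ : ℂ := (m2:ℂ) - ((c^(α+δ/2):ℝ):ℂ)*m1 with hΔdef
  have hDeq : ∀ᶠ θ : ℝ in l,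
      g (c*t) θ / (θ:ℂ)^2 + Complex.I * (m2:ℂ)/θ
      - ((c^(2*α):ℝ):ℂ) * (g t (b*θ) / ((b*θ:ℝ):ℂ)^2 + Complex.I * (m1:ℂ)/((b*θ:ℝ):ℂ))
      = Complex.I * Δ / θ := by
    filter_upwards [self_mem_nhdsWithin] with θ (hθ : θ ≠ 0)
    have hθC : (θ:ℂ) ≠ 0 := Complex.ofReal_ne_zero.mpr hθ
    have hbC : ((b:ℝ):ℂ) ≠ 0 := Complex.ofReal_ne_zero.mpr hb.ne'
    rw [hscale θ, e1, hΔdef, e2]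
    push_cast
    field_simp
    ring
  have hθC : Tendsto (fun θ : ℝ => (θ:ℂ)) l (𝓝 0) :=
    (Complex.continuous_ofReal.tendsto' 0 0 (by simp)).mono_left nhdsWithin_le_nhds
  have hmulD := hθC.mul hD
  rw [zero_mul] at hmulD
  have hconst : Tendsto (fun _ : ℝ => Complex.I * Δ) l (𝓝 0) := by
    refine hmulD.congr' ?_
    filter_upwards [hDeq, self_mem_nhdsWithin] with θ heq (hθ : θ ≠ 0)
    have hθC2 : (θ:ℂ) ≠ 0 := Complex.ofReal_ne_zero.mpr hθ
    rw [heq]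
    field_simp
  have hIΔ : Complex.I * Δ = 0 := tendsto_nhds_unique tendsto_const_nhds hconst
  have hΔ0 : Δ = 0 := by
    rcases mul_eq_zero.mp hIΔ with h | h
    · exact absurd h Complex.I_ne_zero
    · exact h
  have hmean : m2 = c^(α+δ/2) * m1 := by
    have h0 : (m2:ℂ) - ((c^(α+δ/2):ℝ):ℂ)*(m1:ℂ) = 0 := by rw [← hΔdef]; exact hΔ0
    have h2 : (m2:ℂ) = ((c^(α+δ/2):ℝ):ℂ) * (m1:ℂ) := sub_eq_zero.mp h0
    exact_mod_cast h2
  have hDzero : Tendsto (fun θ : ℝ => g (c*t) θ / (θ:ℂ)^2 + Complex.I * (m2:ℂ)/θ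
      - ((c^(2*α):ℝ):ℂ) * (g t (b*θ) / ((b*θ:ℝ):ℂ)^2 + Complex.I * (m1:ℂ)/((b*θ:ℝ):ℂ)))
      l (𝓝 0) := by
    refine Tendsto.congr' ?_ (tendsto_const_nhds : Tendsto (fun _ : ℝ => (0:ℂ)) l (𝓝 0))
    filter_upwards [hDeq] with θ heq
    rw [heq, hΔ0]
    simp
  have hvar : ((s2 - m2^2 : ℝ):ℂ)/2 - ((c^(2*α):ℝ):ℂ) * (((s1 - m1^2 : ℝ):ℂ)/2) = 0 :=
    tendsto_nhds_unique hD hDzero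
  have hvarR : s2 - m2^2 = c^(2*α) * (s1 - m1^2) := by
    have h3 : ((s2 - m2^2 : ℝ):ℂ) = ((c^(2*α):ℝ):ℂ) * ((s1 - m1^2 : ℝ):ℂ) := by
      linear_combination 2 * hvar
    exact_mod_cast h3
  -- conclude
  constructor
  · exact hmean
  · have hmemt : MemLp (X t) 2 P :=
      (memLp_two_iff_integrable_sq (hX t ht).aestronglyMeasurable).2 (hL2 t ht)
    have hmemct : MemLp (X (c*t)) 2 P :=
      (memLp_two_iff_integrable_sq (hX _ hct).aestronglyMeasurable).2 (hL2 _ hct)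
    have hv1 : variance (X t) P = s1 - m1^2 := by
      rw [variance_eq_sub hmemt]
      simp only [Pi.pow_apply]
      rfl
    have hv2 : variance (X (c*t)) P = s2 - m2^2 := by
      rw [variance_eq_sub hmemct]
      simp only [Pi.pow_apply]
      rfl
    rw [hv1, hv2, hvarR]
end
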